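/- arXiv:2510.24338 — 3 statements merged into one kernel-verified Lean document; each statement's English description precedes it below -/
import Mathlib

section
/- Linear stability with velocity diffusion (Theorem 1.1). Let n ≥ 2, r > n−1, and let b̃ ∈ ℝⁿ satisfy the Diophantine condition with exponent r. Let m ≥ 0 and let U₀, B₀ ∈ H^m(𝕋ⁿ) be divergence-free with ∫_{𝕋ⁿ} U₀ dx = ∫_{𝕋ⁿ} B₀ dx = 0. Let (U,B) solve the linear system ∂ₜU − ΔU = b̃·∇B, ∂ₜB = b̃·∇U, ∇·U = ∇·B = 0, (U,B)(·,0) = (U₀,B₀) on 𝕋ⁿ. Then there is a constant C > 0 such that for every s ∈ [0,m] and t ≥ 0: ‖U(t)‖_{H^s} ≤ C(1+t)^{−(1/2 + (m−s+1)/(2(1+r)))} ‖(U₀,B₀)‖_{H^m} and ‖B(t)‖_{H^s} ≤ C(1+t)^{−(m−s)/(2(1+r))} ‖(U₀,B₀)‖_{H^m}. -/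
open scoped BigOperators
open MeasureTheory

noncomputable section

namespace MHD

/-- The frequency lattice `ℤⁿ` of the torus `𝕋ⁿ = (ℝ/2πℤ)ⁿ`. -/
abbrev Freq (n : ℕ) := Fin n → ℤ

/-- Fourier coefficients of a (vector) field on `𝕋ⁿ`: a field is identified with the
family of its Fourier coefficients `f̂(k) ∈ ℂⁿ`, `k ∈ ℤⁿ`. -/
abbrev Coef (n : ℕ) := Freq n → Fin n → ℂ

/-- `|k|²`. -/
def k2 {n : ℕ} (k : Freq n) : ℝ := ∑ i, ((k i : ℝ)) ^ 2

/-- `|k|`. -/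
def knorm {n : ℕ} (k : Freq n) : ℝ := Real.sqrt (k2 k)

/-- `b̃·k`. -/
def bdot {n : ℕ} (b : Fin n → ℝ) (k : Freq n) : ℝ := ∑ i, b i * (k i : ℝ)

/-- `|b̃|`, the Euclidean norm of a constant vector. -/
def vnormR {n : ℕ} (b : Fin n → ℝ) : ℝ := Real.sqrt (∑ i, (b i) ^ 2)

/-- Squared length of a coefficient vector: `|f̂(k)|²`. -/
def vnormSq {n : ℕ} (v : Fin n → ℂ) : ℝ := ∑ i, ‖v i‖ ^ 2

/-- The Diophantine condition: `|b̃·k| ≥ c|k|^{-r}` for all `k ∈ ℤⁿ \ {0}`. -/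
def Diophantine {n : ℕ} (b : Fin n → ℝ) (r c : ℝ) : Prop :=
  ∀ k : Freq n, k ≠ 0 → c / (knorm k) ^ r ≤ |bdot b k|

/-- Squared Sobolev norm `‖f‖_{H^s}² = Σ_k (1+|k|²)^s |f̂(k)|²`. -/
def sobSq {n : ℕ} (s : ℝ) (f : Coef n) : ℝ :=
  ∑' k : Freq n, (1 + k2 k) ^ s * vnormSq (f k)

/-- Sobolev norm `‖f‖_{H^s}`. -/
def sobNorm {n : ℕ} (s : ℝ) (f : Coef n) : ℝ := Real.sqrt (sobSq s f)

/-- Squared Sobolev norm of a pair `‖(f,g)‖_{H^s}²`. -/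
def pairSobSq {n : ℕ} (s : ℝ) (f g : Coef n) : ℝ := sobSq s f + sobSq s g

/-- Sobolev norm of a pair `‖(f,g)‖_{H^s}`. -/
def pairNorm {n : ℕ} (s : ℝ) (f g : Coef n) : ℝ := Real.sqrt (pairSobSq s f g)

/-- Membership in `H^s(𝕋ⁿ)`. -/
def MemSob {n : ℕ} (s : ℝ) (f : Coef n) : Prop :=
  Summable fun k : Freq n => (1 + k2 k) ^ s * vnormSq (f k)

/-- Divergence-free: `k·f̂(k) = 0` for every `k`. -/
def DivFree {n : ℕ} (f : Coef n) : Prop :=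
  ∀ k : Freq n, (∑ i, (k i : ℂ) * f k i) = 0

/-- Fourier coefficients of the transport term `u·∇v`:
`(u·∇v)^(k) = Σ_j i (û(j)·(k-j)) v̂(k-j)`. -/
def transport {n : ℕ} (u v : Coef n) (k : Freq n) (i : Fin n) : ℂ :=
  ∑' j : Freq n, (Complex.I * ∑ l, u j l * (((k - j) l : ℤ) : ℂ)) * v (k - j) i

/-- The Helmholtz–Leray projection `P` in Fourier variables. -/
def leray {n : ℕ} (f : Coef n) (k : Freq n) (i : Fin n) : ℂ :=
  if k = 0 then f k i
  else f k i - ((∑ l, (k l : ℂ) * f k l) / (k2 k : ℂ)) * (k i : ℂ)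

/-- Fourier coefficients of `b̃·∇f`. -/
def bgrad {n : ℕ} (b : Fin n → ℝ) (f : Coef n) (k : Freq n) (i : Fin n) : ℂ :=
  Complex.I * (bdot b k : ℂ) * f k i

/-- The Fourier multiplier `Λ^s = (-Δ)^{s/2}` (acting trivially on the zero mode when `s < 0`). -/
def lam {n : ℕ} (s : ℝ) (f : Coef n) (k : Freq n) (i : Fin n) : ℂ :=
  ((knorm k ^ s : ℝ) : ℂ) * f k i

/-- Squared `L²` norm (with normalized measure), `‖f‖_{L²}² = Σ_k |f̂(k)|²`. -/
def l2Sq {n : ℕ} (f : Coef n) : ℝ := ∑' k : Freq n, vnormSq (f k)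

/-- Squared `L²` norm of `Λ^s f`: `‖Λ^s f‖_{L²}² = Σ_k |k|^{2s}|f̂(k)|²`. -/
def lamSq {n : ℕ} (s : ℝ) (f : Coef n) : ℝ := ∑' k : Freq n, (k2 k) ^ s * vnormSq (f k)

/-- The (normalized) `L²` inner product `∫_{𝕋ⁿ} f·g dx` of two real fields, via Plancherel. -/
def l2inner {n : ℕ} (f g : Coef n) : ℝ :=
  (∑' k : Freq n, ∑ i, f k i * starRingEnd ℂ (g k i)).re

/-- `‖∇f‖_{H^s}² = Σ_k (1+|k|²)^s |k|² |f̂(k)|²`. -/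
def gradSobSq {n : ℕ} (s : ℝ) (f : Coef n) : ℝ :=
  ∑' k : Freq n, (1 + k2 k) ^ s * k2 k * vnormSq (f k)

/-- `‖∇f‖_{L^∞}`: the sup over `x ∈ 𝕋ⁿ` of the (Frobenius) norm of the gradient matrix of the
field with Fourier coefficients `f`. -/
def gradLinfty {n : ℕ} (f : Coef n) : ℝ :=
  ⨆ x : Fin n → ℝ,
    Real.sqrt (∑ i, ∑ j,
      ‖∑' k : Freq n,
          Complex.exp (Complex.I * ((∑ l, (k l : ℝ) * x l : ℝ) : ℂ)) *
            (Complex.I * (k j : ℂ) * f k i)‖ ^ 2)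

/-- `‖f‖_{L^∞}`. -/
def linfty {n : ℕ} (f : Coef n) : ℝ :=
  ⨆ x : Fin n → ℝ,
    Real.sqrt (∑ i,
      ‖∑' k : Freq n,
          Complex.exp (Complex.I * ((∑ l, (k l : ℝ) * x l : ℝ) : ℂ)) * f k i‖ ^ 2)

/-- Smoothness in space (rapid decay of the Fourier coefficients at every time). -/
def Smooth {n : ℕ} (u : ℝ → Coef n) : Prop :=
  ∀ t : ℝ, ∀ N : ℕ, Summable fun k : Freq n => (1 + k2 k) ^ (N : ℝ) * vnormSq (u t k)

/-- The perturbed incompressible MHD system on `𝕋ⁿ`,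
`∂ₜu − μΔu + u·∇u + ∇p = b̃·∇b + b·∇b`,
`∂ₜb − νΔb + u·∇b = b̃·∇u + b·∇u`, `∇·u = ∇·b = 0`,
written mode-by-mode in Fourier variables. -/
structure IsMHDSolution {n : ℕ} (btil : Fin n → ℝ) (μ ν : ℝ)
    (u b : ℝ → Coef n) (p : ℝ → Freq n → ℂ) : Prop where
  du : ∀ (t : ℝ) (k : Freq n) (i : Fin n),
      HasDerivAt (fun τ : ℝ => u τ k i)
        (-(μ : ℂ) * (k2 k : ℂ) * u t k i - transport (u t) (u t) k i
          - Complex.I * (k i : ℂ) * p t k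
          + Complex.I * (bdot btil k : ℂ) * b t k i
          + transport (b t) (b t) k i) t
  db : ∀ (t : ℝ) (k : Freq n) (i : Fin n),
      HasDerivAt (fun τ : ℝ => b τ k i)
        (-(ν : ℂ) * (k2 k : ℂ) * b t k i - transport (u t) (b t) k i
          + Complex.I * (bdot btil k : ℂ) * u t k i
          + transport (b t) (u t) k i) t
  divu : ∀ t : ℝ, DivFree (u t)
  divb : ∀ t : ℝ, DivFree (b t)

/-- `|k|⁴ − 4(b̃·k)²`, the discriminant of `λ² − |k|²λ + (b̃·k)² = 0`. -/
def disc {n : ℕ} (b : Fin n → ℝ) (k : Freq n) : ℝ := (k2 k) ^ 2 - 4 * (bdot b k) ^ 2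

/-- The (complex) square root `√(|k|⁴ − 4(b̃·k)²)`. -/
def sqrtDisc {n : ℕ} (b : Fin n → ℝ) (k : Freq n) : ℂ :=
  if 0 ≤ disc b k then ((Real.sqrt (disc b k) : ℝ) : ℂ)
  else Complex.I * ((Real.sqrt (-disc b k) : ℝ) : ℂ)

/-- `λ₊(k)`. -/
def lamP {n : ℕ} (b : Fin n → ℝ) (k : Freq n) : ℂ := ((k2 k : ℂ) + sqrtDisc b k) / 2

/-- `λ₋(k)`. -/
def lamM {n : ℕ} (b : Fin n → ℝ) (k : Freq n) : ℂ := ((k2 k : ℂ) - sqrtDisc b k) / 2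

/-- The multiplier `Ĝ(k,t) = (e^{−λ₋t} − e^{−λ₊t})/(λ₊ − λ₋)`, interpreted as
`t e^{−λ₊t}` when `λ₊ = λ₋`. -/
def Ghat {n : ℕ} (b : Fin n → ℝ) (k : Freq n) (t : ℝ) : ℂ :=
  if lamP b k = lamM b k then (t : ℂ) * Complex.exp (-lamP b k * t)
  else (Complex.exp (-lamM b k * t) - Complex.exp (-lamP b k * t)) / (lamP b k - lamM b k)

/-- `|K̂₁(k,t)| = |Ĝ(k,t)| √(|λ₊|² + (b̃·k)²)`. -/
def K1abs {n : ℕ} (b : Fin n → ℝ) (k : Freq n) (t : ℝ) : ℝ :=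
  ‖Ghat b k t‖ * Real.sqrt (‖lamP b k‖ ^ 2 + (bdot b k) ^ 2)

/-- `|K̂₂(k,t)| = |K̂₁(k,t)| |b̃·k|/|λ₊|`. -/
def K2abs {n : ℕ} (b : Fin n → ℝ) (k : Freq n) (t : ℝ) : ℝ :=
  K1abs b k t * |bdot b k| / ‖lamP b k‖

/-- `|K̂₃(k,t)| = |e^{−λ₊t}|`. -/
def K3abs {n : ℕ} (b : Fin n → ℝ) (k : Freq n) (t : ℝ) : ℝ :=
  ‖Complex.exp (-lamP b k * t)‖

end MHD

namespace MHDProof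
open Real

lemma pow_le_factorial_mul_exp (N : ℕ) {x : ℝ} (hx : 0 ≤ x) :
    x ^ N ≤ N.factorial * Real.exp x := by
  have h := Real.sum_le_exp_of_nonneg hx (N + 1)
  have h2 : x ^ N / N.factorial ≤ Real.exp x :=
    le_trans (Finset.single_le_sum (f := fun i => x ^ i / i.factorial)
      (fun i _ => by positivity) (Finset.self_mem_range_succ N)) h
  have hN : (0:ℝ) < N.factorial := by positivity
  calc x ^ N = (x ^ N / N.factorial) * N.factorial := by field_simp
  _ ≤ Real.exp x * N.factorial := by gcongr
  _ = N.factorial * Real.exp x := mul_comm _ _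

/-- Core weight bound: `e^{-γt/z} ≤ C z^α (1+t)^{-α}` uniformly for `α ∈ [0,A]`, `z ≥ 1`. -/
lemma key_bound (A γ : ℝ) (hγ0 : 0 < γ) (hγ1 : γ ≤ 1) :
    ∃ C : ℝ, 0 < C ∧ ∀ z t α : ℝ, 1 ≤ z → 0 ≤ t → 0 ≤ α → α ≤ A →
      Real.exp (-(γ * t / z)) ≤ C * z ^ α * (1 + t) ^ (-α) := by
  set N := ⌈A⌉₊ with hN
  refine ⟨γ ^ (-A) * (2 ^ (N + 1) * N.factorial), by positivity, ?_⟩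
  intro z t α hz ht hα hαA
  have hz0 : (0:ℝ) < z := lt_of_lt_of_le one_pos hz
  have ht0 : (0:ℝ) < 1 + t := by linarith
  set x := γ * t / z with hxdef
  have hx0 : 0 ≤ x := by positivity
  have hx1 : (1:ℝ) ≤ 1 + x := by linarith
  -- (1+t)^α ≤ C z^α e^x
  have h1 : 1 + t ≤ z / γ * (1 + x) := by
    have hxt : z / γ * x = t := by
      rw [hxdef]; field_simp
    have he : z / γ * (1 + x) = z / γ + t := by rw [mul_add, mul_one, hxt]
    have hzγ : (1:ℝ) ≤ z / γ := (one_le_div hγ0).2 (le_trans hγ1 hz)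
    rw [he]; linarith
  have h2 : (1 + t) ^ α ≤ (z / γ * (1 + x)) ^ α := Real.rpow_le_rpow ht0.le h1 hα
  have h3 : (z / γ * (1 + x)) ^ α = z ^ α * (γ ^ α)⁻¹ * (1 + x) ^ α := by
    rw [Real.mul_rpow (by positivity) (by linarith), Real.div_rpow hz0.le hγ0.le,
      div_eq_mul_inv]
  have h5 : (γ ^ α)⁻¹ ≤ γ ^ (-A) := by
    rw [Real.rpow_neg hγ0.le]
    exact inv_anti₀ (Real.rpow_pos_of_pos hγ0 A)
      (Real.rpow_le_rpow_of_exponent_ge hγ0 hγ1 hαA)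
  have h6 : (1 + x) ^ α ≤ (1 + x) ^ (N:ℝ) :=
    Real.rpow_le_rpow_of_exponent_le hx1 (le_trans hαA (Nat.le_ceil A))
  have h7 : (1 + x) ^ (N:ℝ) = (1 + x) ^ N := Real.rpow_natCast _ N
  have h8 : (1 + x) ^ N ≤ 2 ^ N * (1 + x ^ N) := by
    have h2N0 : (0:ℝ) ≤ 2 ^ N := by positivity
    have hxN : (0:ℝ) ≤ x ^ N := by positivity
    rw [mul_add, mul_one]
    rcases le_total x 1 with hc | hc
    · have hb : (1 + x) ^ N ≤ 2 ^ N := pow_le_pow_left₀ (by linarith) (by linarith) N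
      nlinarith [mul_nonneg h2N0 hxN]
    · have h1x : 1 + x ≤ 2 * x := by linarith
      have hb := pow_le_pow_left₀ (by linarith : (0:ℝ) ≤ 1 + x) h1x N
      rw [mul_pow] at hb
      linarith
  have h9 : 1 + x ^ N ≤ 2 * (N.factorial * Real.exp x) := by
    have hA1 : (1:ℝ) ≤ N.factorial * Real.exp x := by
      have : (1:ℝ) ≤ (N.factorial : ℝ) := by exact_mod_cast N.factorial_pos
      nlinarith [Real.one_le_exp hx0]
    have := pow_le_factorial_mul_exp N hx0
    linarith
  -- assemble
  have hmain : (1 + t) ^ α ≤ γ ^ (-A) * (2 ^ (N + 1) * N.factorial) * z ^ α * Real.exp x := by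
    have hz0' : (0:ℝ) ≤ z ^ α := (Real.rpow_pos_of_pos hz0 α).le
    calc (1 + t) ^ α ≤ z ^ α * (γ ^ α)⁻¹ * (1 + x) ^ α := by rw [← h3]; exact h2
    _ ≤ z ^ α * γ ^ (-A) * (2 ^ N * (2 * (N.factorial * Real.exp x))) := by
        have hx9 : (1 + x) ^ α ≤ 2 ^ N * (2 * (N.factorial * Real.exp x)) := by
          calc (1 + x) ^ α ≤ ((1 + x):ℝ) ^ N := h7 ▸ h6
          _ ≤ 2 ^ N * (1 + x ^ N) := h8
          _ ≤ 2 ^ N * (2 * (N.factorial * Real.exp x)) := by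
              have : (0:ℝ) < 2 ^ N := by positivity
              nlinarith
        have h1x0 : (0:ℝ) ≤ (1 + x) ^ α := (Real.rpow_pos_of_pos (by linarith) α).le
        have hγA : (0:ℝ) < γ ^ (-A) := Real.rpow_pos_of_pos hγ0 _
        have hgg : (0:ℝ) ≤ (γ ^ α)⁻¹ := by positivity
        calc z ^ α * (γ ^ α)⁻¹ * (1 + x) ^ α ≤ z ^ α * γ ^ (-A) * (1 + x) ^ α := by
              apply mul_le_mul_of_nonneg_right _ h1x0
              exact mul_le_mul_of_nonneg_left h5 hz0'
        _ ≤ _ := mul_le_mul_of_nonneg_left hx9 (by positivity)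
    _ = γ ^ (-A) * (2 ^ (N + 1) * N.factorial) * z ^ α * Real.exp x := by ring
  -- rearrange
  have hpow : (0:ℝ) < (1 + t) ^ α := Real.rpow_pos_of_pos ht0 α
  rw [Real.rpow_neg ht0.le, mul_comm (γ ^ (-A) * (2 ^ (N + 1) * ↑N.factorial) * z ^ α)
    ((1 + t) ^ α)⁻¹, ← div_eq_inv_mul, le_div_iff₀ hpow]
  calc Real.exp (-x) * (1 + t) ^ α
      ≤ Real.exp (-x) * (γ ^ (-A) * (2 ^ (N + 1) * N.factorial) * z ^ α * Real.exp x) :=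
        mul_le_mul_of_nonneg_left hmain (Real.exp_pos _).le
  _ = γ ^ (-A) * (2 ^ (N + 1) * N.factorial) * z ^ α * (Real.exp (-x) * Real.exp x) := by ring
  _ = γ ^ (-A) * (2 ^ (N + 1) * ↑N.factorial) * z ^ α := by
      rw [← Real.exp_add, neg_add_cancel, Real.exp_zero, mul_one]

end MHDProof

namespace MHDProof
open Complex

lemma vnormSq_nonneg {n : ℕ} (v : Fin n → ℂ) : 0 ≤ MHD.vnormSq v :=
  Finset.sum_nonneg fun i _ => by positivity

lemma norm_sq_le_vnormSq {n : ℕ} (v : Fin n → ℂ) (i : Fin n) : ‖v i‖ ^ 2 ≤ MHD.vnormSq v :=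
  Finset.single_le_sum (f := fun j => ‖v j‖ ^ 2) (fun j _ => by positivity) (Finset.mem_univ i)

lemma sum_mul_conj {n : ℕ} (v : Fin n → ℂ) :
    ∑ i, v i * (starRingEnd ℂ) (v i) = ((MHD.vnormSq v : ℝ) : ℂ) := by
  unfold MHD.vnormSq
  rw [Complex.ofReal_sum]
  refine Finset.sum_congr rfl fun i _ => ?_
  rw [Complex.mul_conj, Complex.normSq_eq_norm_sq]

lemma sum_conj_mul {n : ℕ} (v : Fin n → ℂ) :
    ∑ i, (starRingEnd ℂ) (v i) * v i = ((MHD.vnormSq v : ℝ) : ℂ) := by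
  rw [← sum_mul_conj v]; exact Finset.sum_congr rfl fun i _ => mul_comm _ _

lemma hasDerivAt_conj {f : ℝ → ℂ} {f' : ℂ} {t : ℝ} (hf : HasDerivAt f f' t) :
    HasDerivAt (fun τ => (starRingEnd ℂ) (f τ)) ((starRingEnd ℂ) f') t := by
  have h := (Complex.conjCLE.hasFDerivAt (x := f t)).comp_hasDerivAt t hf
  exact h

lemma hasDerivAt_re {f : ℝ → ℂ} {f' : ℂ} {t : ℝ} (hf : HasDerivAt f f' t) :
    HasDerivAt (fun τ => (f τ).re) f'.re t := by
  have h := (Complex.reCLM.hasFDerivAt (x := f t)).comp_hasDerivAt t hf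
  exact h

lemma hasDerivAt_im {f : ℝ → ℂ} {f' : ℂ} {t : ℝ} (hf : HasDerivAt f f' t) :
    HasDerivAt (fun τ => (f τ).im) f'.im t := by
  have h := (Complex.imCLM.hasFDerivAt (x := f t)).comp_hasDerivAt t hf
  exact h

set_option maxHeartbeats 1000000 in
lemma mode_energy_decay {n : ℕ} (κ a ε : ℝ) (hκ : 1 ≤ κ)
    (hε0 : 0 < ε) (hε1 : ε ≤ 1 / 2)
    (hεa2 : ε * a ^ 2 ≤ κ ^ 2 / 2) (hεa1 : ε * |a| ≤ κ / 2)
    (u b : ℝ → Fin n → ℂ)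
    (hu : ∀ (t : ℝ) (i : Fin n), HasDerivAt (fun τ => u τ i)
        (-(κ : ℂ) * u t i + Complex.I * (a : ℂ) * b t i) t)
    (hb : ∀ (t : ℝ) (i : Fin n), HasDerivAt (fun τ => b τ i)
        (Complex.I * (a : ℂ) * u t i) t) :
    ∀ t : ℝ, 0 ≤ t →
      MHD.vnormSq (u t) + MHD.vnormSq (b t) ≤
        2 * Real.exp (-(2 * ε * a ^ 2 / (5 * κ)) * t) *
          (MHD.vnormSq (u 0) + MHD.vnormSq (b 0)) := by
  have hκ0 : (0:ℝ) < κ := lt_of_lt_of_le one_pos hκ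
  set β : ℝ := 2 * ε * a ^ 2 / (5 * κ) with hβdef
  have hβ0 : 0 ≤ β := by positivity
  set X : ℝ → ℝ := fun τ => MHD.vnormSq (u τ) with hXdef
  set Y : ℝ → ℝ := fun τ => MHD.vnormSq (b τ) with hYdef
  set H : ℝ → ℝ := fun τ => ((a:ℂ) * ∑ i, (starRingEnd ℂ) (u τ i) * b τ i).im with hHdef
  have hX0 : ∀ τ, 0 ≤ X τ := fun τ => vnormSq_nonneg _
  have hY0 : ∀ τ, 0 ≤ Y τ := fun τ => vnormSq_nonneg _
  -- derivative of the energy X+Y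
  have hE' : ∀ t : ℝ, HasDerivAt (fun τ => X τ + Y τ) (-(2*κ) * X t) t := by
    intro t
    have hsum := HasDerivAt.sum (u := (Finset.univ : Finset (Fin n)))
      (fun i _ => (((hu t i).mul (hasDerivAt_conj (hu t i))).add
        ((hb t i).mul (hasDerivAt_conj (hb t i)))))
    have hterm : ∀ i : Fin n,
        (-(κ : ℂ) * u t i + Complex.I * (a : ℂ) * b t i) * (starRingEnd ℂ) (u t i)
          + u t i * (starRingEnd ℂ) (-(κ : ℂ) * u t i + Complex.I * (a : ℂ) * b t i)
          + ((Complex.I * (a : ℂ) * u t i) * (starRingEnd ℂ) (b t i)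
            + b t i * (starRingEnd ℂ) (Complex.I * (a : ℂ) * u t i)) =
        ((-(2*κ):ℝ):ℂ) * (u t i * (starRingEnd ℂ) (u t i)) := by
      intro i
      simp only [map_add, map_mul, map_neg, Complex.conj_ofReal, Complex.conj_I]
      push_cast
      ring
    simp only [hterm] at hsum
    rw [← Finset.mul_sum, sum_mul_conj, ← Complex.ofReal_mul] at hsum
    have h2 := hasDerivAt_re hsum
    rw [Complex.ofReal_re] at h2
    refine HasDerivAt.congr_of_eventuallyEq h2 (Filter.Eventually.of_forall fun τ => ?_)
    simp only [Finset.sum_apply, Pi.add_apply, Pi.mul_apply]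
    show X τ + Y τ = (∑ i, (u τ i * (starRingEnd ℂ) (u τ i)
      + b τ i * (starRingEnd ℂ) (b τ i))).re
    rw [Finset.sum_add_distrib, Complex.add_re, sum_mul_conj, sum_mul_conj,
      Complex.ofReal_re, Complex.ofReal_re]
  -- derivative of H
  have hH' : ∀ t : ℝ, HasDerivAt H (-κ * H t + a^2 * (X t - Y t)) t := by
    intro t
    have hsum := HasDerivAt.sum (u := (Finset.univ : Finset (Fin n)))
      (fun (i : Fin n) _ => ((hasDerivAt_conj (hu t i)).mul (hb t i)))
    have hterm : ∀ i : Fin n,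
        (starRingEnd ℂ) (-(κ : ℂ) * u t i + Complex.I * (a : ℂ) * b t i) * b t i
          + (starRingEnd ℂ) (u t i) * (Complex.I * (a : ℂ) * u t i) =
        -(κ:ℂ) * ((starRingEnd ℂ) (u t i) * b t i)
          + Complex.I * (a:ℂ) * ((starRingEnd ℂ) (u t i) * u t i)
          - Complex.I * (a:ℂ) * ((starRingEnd ℂ) (b t i) * b t i) := by
      intro i
      simp only [map_add, map_mul, map_neg, Complex.conj_ofReal, Complex.conj_I]
      ring
    simp only [hterm] at hsum
    rw [Finset.sum_sub_distrib, Finset.sum_add_distrib, ← Finset.mul_sum, ← Finset.mul_sum,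
      ← Finset.mul_sum, sum_conj_mul, sum_conj_mul] at hsum
    have hQ := hsum.const_mul ((a:ℂ))
    have him := hasDerivAt_im hQ
    have hval : ((a:ℂ) * (-(κ:ℂ) * ∑ i, (starRingEnd ℂ) (u t i) * b t i
        + Complex.I * (a:ℂ) * ((MHD.vnormSq (u t) : ℝ) : ℂ)
        - Complex.I * (a:ℂ) * ((MHD.vnormSq (b t) : ℝ) : ℂ))).im
        = -κ * H t + a^2 * (X t - Y t) := by
      simp only [hHdef, hXdef, hYdef]
      simp only [Complex.mul_im, Complex.mul_re, Complex.add_im, Complex.add_re,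
        Complex.sub_im, Complex.sub_re, Complex.neg_im, Complex.neg_re,
        Complex.I_re, Complex.I_im, Complex.ofReal_re, Complex.ofReal_im]
      ring
    rw [hval] at him
    exact HasDerivAt.congr_of_eventuallyEq him (Filter.Eventually.of_forall fun τ => by simp only [Finset.sum_apply, Pi.mul_apply]; rfl)
  -- pointwise bound for |H|
  have hHb : ∀ τ, |H τ| ≤ |a| * ∑ i, ‖u τ i‖ * ‖b τ i‖ := by
    intro τ
    calc |H τ| ≤ ‖(a:ℂ) * ∑ i, (starRingEnd ℂ) (u τ i) * b τ i‖ :=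
          Complex.abs_im_le_norm _
    _ = |a| * ‖∑ i, (starRingEnd ℂ) (u τ i) * b τ i‖ := by
          rw [norm_mul, Complex.norm_real, Real.norm_eq_abs]
    _ ≤ |a| * ∑ i, ‖u τ i‖ * ‖b τ i‖ := by
          apply mul_le_mul_of_nonneg_left _ (abs_nonneg a)
          refine le_trans (norm_sum_le _ _) (Finset.sum_le_sum fun i _ => ?_)
          rw [norm_mul, RCLike.norm_conj]
  have hb2 : ∀ τ, ε * |H τ| ≤ κ/4 * (X τ + Y τ) := by
    intro τ
    calc ε * |H τ| ≤ ε * (|a| * ∑ i, ‖u τ i‖ * ‖b τ i‖) :=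
          mul_le_mul_of_nonneg_left (hHb τ) hε0.le
    _ = ∑ i, ε * |a| * (‖u τ i‖ * ‖b τ i‖) := by
          rw [Finset.mul_sum, Finset.mul_sum]
          exact Finset.sum_congr rfl fun i _ => by ring
    _ ≤ ∑ i, κ/4 * (‖u τ i‖^2 + ‖b τ i‖^2) := by
          refine Finset.sum_le_sum fun i _ => ?_
          have hpq := mul_nonneg (norm_nonneg (u τ i)) (norm_nonneg (b τ i))
          have hf1 := mul_nonneg (sub_nonneg.2 hεa1) hpq
          nlinarith [sq_nonneg (‖u τ i‖ - ‖b τ i‖), hκ0.le]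
    _ = κ/4 * (X τ + Y τ) := by
          simp only [hXdef, hYdef, MHD.vnormSq]
          rw [← Finset.mul_sum, Finset.sum_add_distrib]
  have hb1 : ∀ τ, κ * (ε * |H τ|) ≤ κ^2/4 * X τ + ε^2 * a^2 * Y τ := by
    intro τ
    calc κ * (ε * |H τ|) ≤ κ * (ε * (|a| * ∑ i, ‖u τ i‖ * ‖b τ i‖)) :=
          mul_le_mul_of_nonneg_left (mul_le_mul_of_nonneg_left (hHb τ) hε0.le) hκ0.le
    _ = ∑ i, κ * ε * |a| * (‖u τ i‖ * ‖b τ i‖) := by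
          rw [Finset.mul_sum, Finset.mul_sum, Finset.mul_sum]
          exact Finset.sum_congr rfl fun i _ => by ring
    _ ≤ ∑ i, (κ^2/4 * ‖u τ i‖^2 + ε^2 * a^2 * ‖b τ i‖^2) := by
          refine Finset.sum_le_sum fun i _ => ?_
          have h8 : ε^2*|a|^2*‖b τ i‖^2 = ε^2*a^2*‖b τ i‖^2 := by rw [_root_.sq_abs]
          nlinarith [sq_nonneg (κ/2 * ‖u τ i‖ - ε * |a| * ‖b τ i‖), h8]
    _ = κ^2/4 * X τ + ε^2 * a^2 * Y τ := by
          simp only [hXdef, hYdef, MHD.vnormSq]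
          rw [Finset.sum_add_distrib, ← Finset.mul_sum, ← Finset.mul_sum]
  -- the Lyapunov inequality
  have hS : ∀ t : ℝ, β * (κ * (X t + Y t) + ε * H t)
      + (κ * (-(2*κ) * X t) + ε * (-κ * H t + a^2 * (X t - Y t))) ≤ 0 := by
    intro t
    have h5κ : (0:ℝ) < 5 * κ := by positivity
    have hB : (0:ℝ) ≤ κ/4 * (X t + Y t) :=
      mul_nonneg (by positivity) (add_nonneg (hX0 t) (hY0 t))
    have h6 : ε * H t ≤ κ/4 * (X t + Y t) :=
      le_trans (mul_le_mul_of_nonneg_left (le_abs_self _) hε0.le) (hb2 t)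
    have key0 : 2*ε*a^2 * (κ * (X t + Y t) + ε * H t)
        + 5*κ * (κ * (-(2*κ) * X t) + ε * (-κ * H t + a^2 * (X t - Y t))) ≤ 0 := by
      have e1 : 2*ε*a^2 * (ε * H t) ≤ 2*ε*a^2 * (κ/4 * (X t + Y t)) :=
        mul_le_mul_of_nonneg_left h6 (by positivity)
      have h7 : κ * (ε * (-H t)) ≤ κ^2/4 * X t + ε^2 * a^2 * Y t :=
        le_trans (mul_le_mul_of_nonneg_left
          (mul_le_mul_of_nonneg_left (neg_le_abs _) hε0.le) hκ0.le) (hb1 t)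
      have e2 := mul_le_mul_of_nonneg_left h7 (by positivity : (0:ℝ) ≤ 5*κ)
      have q1 : ε*a^2*κ ≤ κ^3/2 := by nlinarith [mul_le_mul_of_nonneg_right hεa2 hκ0.le]
      have p1 : ε*a^2*κ*(X t) ≤ κ^3/2*(X t) := mul_le_mul_of_nonneg_right q1 (hX0 t)
      have q3 : ε*(ε*a^2*Y t) ≤ (1/2)*(ε*a^2*Y t) :=
        mul_le_mul_of_nonneg_right hε1
          (mul_nonneg (mul_nonneg hε0.le (sq_nonneg a)) (hY0 t))
      have p3 := mul_le_mul_of_nonneg_left q3 (by positivity : (0:ℝ) ≤ 5*κ)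
      nlinarith [e1, e2, p1, p3, mul_nonneg (pow_nonneg hκ0.le 3) (hX0 t),
        mul_nonneg (mul_nonneg hε0.le (sq_nonneg a)) (hY0 t), hκ0]
    have hβS : 5*κ*(β * (κ * (X t + Y t) + ε * H t)
        + (κ * (-(2*κ) * X t) + ε * (-κ * H t + a^2 * (X t - Y t))))
        = 2*ε*a^2 * (κ * (X t + Y t) + ε * H t)
        + 5*κ * (κ * (-(2*κ) * X t) + ε * (-κ * H t + a^2 * (X t - Y t))) := by
      rw [hβdef]; field_simp
    have h0 : 5*κ*(β * (κ * (X t + Y t) + ε * H t)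
        + (κ * (-(2*κ) * X t) + ε * (-κ * H t + a^2 * (X t - Y t)))) ≤ 5*κ*0 := by
      rw [mul_zero, hβS]; exact key0
    exact le_of_mul_le_mul_left h0 h5κ
  -- derivative of g = exp(βτ) M τ and monotonicity
  have hM' : ∀ t : ℝ, HasDerivAt (fun τ => κ * (X τ + Y τ) + ε * H τ)
      (κ * (-(2*κ) * X t) + ε * (-κ * H t + a^2 * (X t - Y t))) t :=
    fun t => ((hE' t).const_mul κ).add ((hH' t).const_mul ε)
  have hg' : ∀ t : ℝ, HasDerivAt (fun τ => Real.exp (β*τ) * (κ * (X τ + Y τ) + ε * H τ))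
      (Real.exp (β*t) * (β * (κ * (X t + Y t) + ε * H t)
        + (κ * (-(2*κ) * X t) + ε * (-κ * H t + a^2 * (X t - Y t))))) t := by
    intro t
    have hexp : HasDerivAt (fun τ : ℝ => Real.exp (β*τ)) (Real.exp (β*t) * β) t := by
      simpa using ((hasDerivAt_id t).const_mul β).exp
    have h := hexp.mul (hM' t)
    refine h.congr_deriv ?_
    ring
  have hanti : Antitone (fun τ => Real.exp (β*τ) * (κ * (X τ + Y τ) + ε * H τ)) := by
    apply antitone_of_deriv_nonpos
    · exact fun τ => (hg' τ).differentiableAt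
    · intro τ
      rw [(hg' τ).deriv]
      exact mul_nonpos_of_nonneg_of_nonpos (Real.exp_pos _).le (hS τ)
  -- conclude
  intro t ht
  have hg0 : Real.exp (β*t) * (κ * (X t + Y t) + ε * H t)
      ≤ Real.exp (β*0) * (κ * (X 0 + Y 0) + ε * H 0) := hanti ht
  rw [mul_zero, Real.exp_zero, one_mul] at hg0
  have hMt : κ * (X t + Y t) + ε * H t ≥ 3*κ/4 * (X t + Y t) := by
    have h1 := hb2 t
    have h2 : -(ε * H t) ≤ ε * |H t| := by
      rw [← mul_neg]
      exact mul_le_mul_of_nonneg_left (neg_le_abs _) hε0.le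
    linarith
  have hM0 : κ * (X 0 + Y 0) + ε * H 0 ≤ 5*κ/4 * (X 0 + Y 0) := by
    have h1 := hb2 0
    have h2 : ε * H 0 ≤ ε * |H 0| := mul_le_mul_of_nonneg_left (le_abs_self _) hε0.le
    linarith
  have hexppos := Real.exp_pos (β*t)
  have hfin : Real.exp (β*t) * (3*κ/4 * (X t + Y t)) ≤ 5*κ/4 * (X 0 + Y 0) :=
    le_trans (mul_le_mul_of_nonneg_left hMt hexppos.le) (le_trans hg0 hM0)
  have hE0 : 0 ≤ X 0 + Y 0 := add_nonneg (hX0 0) (hY0 0)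
  have hexpneg : Real.exp (-β*t) = (Real.exp (β*t))⁻¹ := by
    rw [neg_mul, Real.exp_neg]
  have hXYt : 3*κ/4 * (X t + Y t) ≤ Real.exp (-β*t) * (5*κ/4 * (X 0 + Y 0)) := by
    rw [hexpneg, ← div_eq_inv_mul, le_div_iff₀ hexppos]
    calc 3*κ/4 * (X t + Y t) * Real.exp (β*t)
        = Real.exp (β*t) * (3*κ/4 * (X t + Y t)) := by ring
    _ ≤ 5*κ/4 * (X 0 + Y 0) := hfin
  have hexpn : (0:ℝ) ≤ Real.exp (-β*t) := (Real.exp_pos _).le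
  show X t + Y t ≤ 2 * Real.exp (-β * t) * (X 0 + Y 0)
  nlinarith [hXYt, hκ0, mul_nonneg hexpn hE0]

lemma integral_exp_mul (c : ℝ) (hc : c ≠ 0) (t : ℝ) :
    ∫ s in (0:ℝ)..t, Real.exp (c*s) = (Real.exp (c*t) - 1)/c := by
  have hd : ∀ s : ℝ, HasDerivAt (fun τ => Real.exp (c*τ)/c) (Real.exp (c*s)) s := by
    intro s
    have h := (((hasDerivAt_id s).const_mul c).exp).div_const c
    refine h.congr_deriv ?_
    simp only [id, mul_one]
    field_simp
  rw [intervalIntegral.integral_eq_sub_of_hasDerivAt (fun s _ => hd s)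
    ((Real.continuous_exp.comp (continuous_const.mul continuous_id)).intervalIntegrable 0 t)]
  rw [mul_zero, Real.exp_zero]
  ring

set_option maxHeartbeats 1000000 in
lemma mode_u_bound {n : ℕ} (κ a β E0 : ℝ) (hκ : 1 ≤ κ) (hβ0 : 0 ≤ β) (hβκ : β ≤ κ/5)
    (hE0 : 0 ≤ E0)
    (u b : ℝ → Fin n → ℂ)
    (hu : ∀ (t : ℝ) (i : Fin n), HasDerivAt (fun τ => u τ i)
        (-(κ : ℂ) * u t i + Complex.I * (a : ℂ) * b t i) t)
    (hb : ∀ (t : ℝ) (i : Fin n), HasDerivAt (fun τ => b τ i)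
        (Complex.I * (a : ℂ) * u t i) t)
    (hu0 : MHD.vnormSq (u 0) ≤ E0)
    (hbdec : ∀ s : ℝ, 0 ≤ s → MHD.vnormSq (b s) ≤ 2 * Real.exp (-β * s) * E0) :
    ∀ t : ℝ, 0 ≤ t →
      MHD.vnormSq (u t) ≤ 2 * Real.exp (-(2*κ) * t) * E0
        + 16 * n * (a^2/κ^2) * Real.exp (-β * t) * E0 := by
  have hκ0 : (0:ℝ) < κ := lt_of_lt_of_le one_pos hκ
  intro t ht
  -- pointwise bound on b
  have hbpt : ∀ s : ℝ, 0 ≤ s → ∀ i : Fin n,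
      ‖b s i‖ ≤ Real.sqrt (2*E0) * Real.exp (-(β/2) * s) := by
    intro s hs i
    have h2 : ‖b s i‖^2 ≤ 2 * Real.exp (-β * s) * E0 :=
      le_trans (norm_sq_le_vnormSq (b s) i) (hbdec s hs)
    have hR : (0:ℝ) ≤ Real.sqrt (2*E0) * Real.exp (-(β/2) * s) := by positivity
    have hsq : (Real.sqrt (2*E0) * Real.exp (-(β/2)*s))^2 = 2 * Real.exp (-β * s) * E0 := by
      rw [mul_pow, Real.sq_sqrt (by positivity : (0:ℝ) ≤ 2*E0), pow_two, ← Real.exp_add]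
      have hh : -(β/2)*s + -(β/2)*s = -β*s := by ring
      rw [hh]; ring
    nlinarith [norm_nonneg (b s i), hR, h2, hsq]
  have hbcont : ∀ i : Fin n, Continuous fun s => b s i := by
    intro i
    have hd : Differentiable ℝ fun s => b s i := fun s => (hb s i).differentiableAt
    exact hd.continuous
  -- per-component Duhamel bound
  have hypt : ∀ i : Fin n, ‖u t i‖ ≤ Real.exp (-(κ*t)) * ‖u 0 i‖
      + 2*|a|/κ * Real.sqrt (2*E0) * Real.exp (-(β/2)*t) := by
    intro i
    have hexp : ∀ s : ℝ, HasDerivAt (fun τ : ℝ => Complex.exp ((κ:ℂ)*(τ:ℂ)))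
        (Complex.exp ((κ:ℂ)*(s:ℂ)) * (κ:ℂ)) s := by
      intro s
      have h1 := ((Complex.hasDerivAt_exp ((κ:ℂ)*(s:ℂ))).comp ((s:ℝ):ℂ)
        ((hasDerivAt_id ((s:ℝ):ℂ)).const_mul (κ:ℂ)))
      have h2 := h1.comp_ofReal
      simpa [Function.comp] using h2
    have hF : ∀ s : ℝ, HasDerivAt (fun τ : ℝ => Complex.exp ((κ:ℂ)*(τ:ℂ)) * u τ i)
        (Complex.exp ((κ:ℂ)*(s:ℂ)) * (Complex.I*(a:ℂ) * b s i)) s := by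
      intro s
      have h := (hexp s).mul (hu s i)
      refine h.congr_deriv ?_
      ring
    have hcont : Continuous fun s : ℝ =>
        Complex.exp ((κ:ℂ)*(s:ℂ)) * (Complex.I*(a:ℂ) * b s i) := by
      apply Continuous.mul
      · exact Complex.continuous_exp.comp (continuous_const.mul Complex.continuous_ofReal)
      · exact continuous_const.mul (hbcont i)
    have hFTC := intervalIntegral.integral_eq_sub_of_hasDerivAt
      (f := fun τ : ℝ => Complex.exp ((κ:ℂ)*(τ:ℂ)) * u τ i)
      (f' := fun s => Complex.exp ((κ:ℂ)*(s:ℂ)) * (Complex.I*(a:ℂ) * b s i))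
      (fun s _ => hF s) (hcont.intervalIntegrable 0 t)
    have habs : ∀ s : ℝ, ‖Complex.exp ((κ:ℂ)*(s:ℂ))‖ = Real.exp (κ*s) := by
      intro s
      rw [Complex.norm_exp]
      norm_num
    have hFt : Complex.exp ((κ:ℂ)*(t:ℂ)) * u t i
        = u 0 i + ∫ s in (0:ℝ)..t, Complex.exp ((κ:ℂ)*(s:ℂ)) * (Complex.I*(a:ℂ) * b s i) := by
      rw [hFTC]
      simp
    have hc0 : (0:ℝ) < κ - β/2 := by linarith
    have hnormint : ‖∫ s in (0:ℝ)..t, Complex.exp ((κ:ℂ)*(s:ℂ)) * (Complex.I*(a:ℂ) * b s i)‖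
        ≤ ∫ s in (0:ℝ)..t, |a| * Real.sqrt (2*E0) * Real.exp ((κ - β/2)*s) := by
      refine le_trans (intervalIntegral.norm_integral_le_integral_norm ht) ?_
      apply intervalIntegral.integral_mono_on ht (hcont.norm.intervalIntegrable 0 t)
        ((continuous_const.mul (Real.continuous_exp.comp
          (continuous_const.mul continuous_id))).intervalIntegrable 0 t)
      intro s hs
      have hbb := hbpt s hs.1 i
      have hnn : ‖Complex.exp ((κ:ℂ)*(s:ℂ)) * (Complex.I*(a:ℂ) * b s i)‖
          = Real.exp (κ*s) * (|a| * ‖b s i‖) := by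
        simp [norm_mul, habs s, Complex.norm_I, Complex.norm_real]
      rw [hnn]
      calc Real.exp (κ*s) * (|a| * ‖b s i‖)
          ≤ Real.exp (κ*s) * (|a| * (Real.sqrt (2*E0) * Real.exp (-(β/2)*s))) := by
            apply mul_le_mul_of_nonneg_left _ (Real.exp_pos _).le
            exact mul_le_mul_of_nonneg_left hbb (abs_nonneg a)
      _ = |a| * Real.sqrt (2*E0) * Real.exp ((κ - β/2)*s) := by
            rw [show (κ - β/2)*s = κ*s + -(β/2)*s by ring, Real.exp_add]
            ring
    have hci : ∫ s in (0:ℝ)..t, |a| * Real.sqrt (2*E0) * Real.exp ((κ - β/2)*s)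
        = |a| * Real.sqrt (2*E0) * ((Real.exp ((κ - β/2)*t) - 1)/(κ - β/2)) := by
      rw [intervalIntegral.integral_const_mul, integral_exp_mul _ hc0.ne']
    have hfrac : (Real.exp ((κ - β/2)*t) - 1)/(κ - β/2) ≤ 2/κ * Real.exp ((κ - β/2)*t) := by
      have hE1 := Real.exp_pos ((κ - β/2)*t)
      rw [div_le_iff₀ hc0]
      have hcc : κ ≤ 2*(κ - β/2) := by linarith
      have h6 : 2/κ * Real.exp ((κ - β/2)*t) * (κ - β/2)
          = Real.exp ((κ - β/2)*t) * (2*(κ - β/2))/κ := by ring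
      rw [h6, le_div_iff₀ hκ0]
      nlinarith [mul_le_mul_of_nonneg_left hcc hE1.le, hE1]
    have hJ : ‖∫ s in (0:ℝ)..t, Complex.exp ((κ:ℂ)*(s:ℂ)) * (Complex.I*(a:ℂ) * b s i)‖
        ≤ |a| * Real.sqrt (2*E0) * (2/κ * Real.exp ((κ - β/2)*t)) := by
      refine le_trans hnormint ?_
      rw [hci]
      exact mul_le_mul_of_nonneg_left hfrac (by positivity)
    have h1 : ‖u t i‖ = Real.exp (-(κ*t)) * ‖Complex.exp ((κ:ℂ)*(t:ℂ)) * u t i‖ := by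
      rw [norm_mul]
      rw [show ‖Complex.exp ((κ:ℂ)*(t:ℂ))‖ = Real.exp (κ*t) from by
        rw [habs t]]
      rw [← mul_assoc, ← Real.exp_add]
      simp
    rw [h1, hFt]
    calc Real.exp (-(κ*t)) * ‖u 0 i + ∫ s in (0:ℝ)..t,
          Complex.exp ((κ:ℂ)*(s:ℂ)) * (Complex.I*(a:ℂ) * b s i)‖
        ≤ Real.exp (-(κ*t)) * (‖u 0 i‖ + |a| * Real.sqrt (2*E0) * (2/κ * Real.exp ((κ - β/2)*t))) := by
          apply mul_le_mul_of_nonneg_left _ (Real.exp_pos _).le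
          exact le_trans (norm_add_le _ _) (by linarith [hJ])
    _ = Real.exp (-(κ*t)) * ‖u 0 i‖
          + 2*|a|/κ * Real.sqrt (2*E0) * (Real.exp (-(κ*t)) * Real.exp ((κ - β/2)*t)) := by ring
    _ = Real.exp (-(κ*t)) * ‖u 0 i‖ + 2*|a|/κ * Real.sqrt (2*E0) * Real.exp (-(β/2)*t) := by
          rw [← Real.exp_add]
          congr 2
          ring
  -- square and sum
  have hsq : ∀ i : Fin n, ‖u t i‖^2 ≤ 2 * Real.exp (-(2*κ)*t) * ‖u 0 i‖^2
      + 16 * (a^2/κ^2) * Real.exp (-β*t) * E0 := by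
    intro i
    have hA : (0:ℝ) ≤ Real.exp (-(κ*t)) * ‖u 0 i‖ := by positivity
    have hB : (0:ℝ) ≤ 2*|a|/κ * Real.sqrt (2*E0) * Real.exp (-(β/2)*t) := by positivity
    have h2 := pow_le_pow_left₀ (norm_nonneg _) (hypt i) 2
    have hexpsq : (Real.exp (-(κ*t)))^2 = Real.exp (-(2*κ)*t) := by
      rw [pow_two, ← Real.exp_add]; congr 1; ring
    have hexpsq2 : (Real.exp (-(β/2)*t))^2 = Real.exp (-β*t) := by
      rw [pow_two, ← Real.exp_add]; congr 1; ring
    have hsqrt : (Real.sqrt (2*E0))^2 = 2*E0 := Real.sq_sqrt (by positivity)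
    have habs2 : |a|^2 = a^2 := _root_.sq_abs a
    have hAB : (Real.exp (-(κ*t)) * ‖u 0 i‖ + 2*|a|/κ * Real.sqrt (2*E0) * Real.exp (-(β/2)*t))^2
        ≤ 2*(Real.exp (-(κ*t)) * ‖u 0 i‖)^2
          + 2*(2*|a|/κ * Real.sqrt (2*E0) * Real.exp (-(β/2)*t))^2 := by
      nlinarith [sq_nonneg (Real.exp (-(κ*t)) * ‖u 0 i‖
        - 2*|a|/κ * Real.sqrt (2*E0) * Real.exp (-(β/2)*t))]
    have hA2 : (Real.exp (-(κ*t)) * ‖u 0 i‖)^2 = Real.exp (-(2*κ)*t) * ‖u 0 i‖^2 := by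
      rw [mul_pow, hexpsq]
    have hB2 : (2*|a|/κ * Real.sqrt (2*E0) * Real.exp (-(β/2)*t))^2
        = 8 * (a^2/κ^2) * Real.exp (-β*t) * E0 := by
      rw [mul_pow, mul_pow, hsqrt, hexpsq2, div_pow, mul_pow, habs2]
      ring
    rw [hA2, hB2] at hAB
    linarith [h2, hAB]
  have hsum : MHD.vnormSq (u t) ≤ ∑ i : Fin n, (2 * Real.exp (-(2*κ)*t) * ‖u 0 i‖^2
      + 16 * (a^2/κ^2) * Real.exp (-β*t) * E0) :=
    Finset.sum_le_sum fun i _ => hsq i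
  rw [Finset.sum_add_distrib, ← Finset.mul_sum, Finset.sum_const, Finset.card_univ,
    Fintype.card_fin, nsmul_eq_mul] at hsum
  have hlast : 2 * Real.exp (-(2*κ)*t) * ∑ i : Fin n, ‖u 0 i‖^2
      ≤ 2 * Real.exp (-(2*κ)*t) * E0 := by
    apply mul_le_mul_of_nonneg_left _ (by positivity)
    exact hu0
  calc MHD.vnormSq (u t) ≤ _ := hsum
  _ ≤ 2 * Real.exp (-(2*κ)*t) * E0 + 16 * n * (a^2/κ^2) * Real.exp (-β*t) * E0 := by
      have hn0 : (0:ℝ) ≤ (n:ℝ) := Nat.cast_nonneg n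
      nlinarith [hlast]

lemma beta_decay (β Bm t : ℝ) (hβ0 : 0 ≤ β) (hβB : β ≤ Bm) (ht : 0 ≤ t) :
    β * Real.exp (-β*t) ≤ (2*Bm + 2) * ((1+t)⁻¹ * Real.exp (-(β/2)*t)) := by
  have h1 : Real.exp (-β*t) = Real.exp (-(β/2)*t) * Real.exp (-(β/2)*t) := by
    rw [← Real.exp_add]; congr 1; ring
  have hpos : (0:ℝ) < 1 + β/2*t := by positivity
  have h2 : Real.exp (-(β/2)*t) ≤ (1 + β/2*t)⁻¹ := by
    rw [show -(β/2)*t = -(β/2*t) by ring, Real.exp_neg]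
    apply inv_anti₀ hpos
    linarith [Real.add_one_le_exp (β/2*t)]
  have h3 : β * (1 + β/2*t)⁻¹ ≤ (2*Bm+2) * (1+t)⁻¹ := by
    rw [← div_eq_mul_inv, ← div_eq_mul_inv, div_le_div_iff₀ hpos (by linarith)]
    nlinarith [mul_nonneg hβ0 ht, hβB, ht, hβ0]
  have h4 : β * Real.exp (-(β/2)*t) ≤ (2*Bm+2) * (1+t)⁻¹ :=
    le_trans (mul_le_mul_of_nonneg_left h2 hβ0) h3
  calc β * Real.exp (-β*t) = β * Real.exp (-(β/2)*t) * Real.exp (-(β/2)*t) := by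
        rw [h1]; ring
  _ ≤ (2*Bm+2) * (1+t)⁻¹ * Real.exp (-(β/2)*t) :=
        mul_le_mul_of_nonneg_right h4 (Real.exp_pos _).le
  _ = (2*Bm + 2) * ((1+t)⁻¹ * Real.exp (-(β/2)*t)) := by ring

lemma expz (r A γ C₀ : ℝ) (hr : 0 < 1 + r) (hγ0 : 0 < γ)
    (hC : ∀ z t α : ℝ, 1 ≤ z → 0 ≤ t → 0 ≤ α → α ≤ A →
      Real.exp (-(γ * t / z)) ≤ C₀ * z ^ α * (1 + t) ^ (-α))
    (κ q t β : ℝ) (hκ : 1 ≤ κ) (hq0 : 0 ≤ q) (hqA : q / (1 + r) ≤ A) (ht : 0 ≤ t)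
    (hβ : γ / (1 + κ) ^ (1 + r) ≤ β) :
    Real.exp (-β * t) ≤ C₀ * (1 + κ) ^ q * (1 + t) ^ (-(q / (1 + r))) := by
  have hbase : (1:ℝ) ≤ 1 + κ := by linarith
  have hz1 : (1:ℝ) ≤ (1 + κ) ^ (1 + r) := by
    calc (1:ℝ) = (1 + κ) ^ (0:ℝ) := (Real.rpow_zero _).symm
    _ ≤ (1 + κ) ^ (1 + r) := Real.rpow_le_rpow_of_exponent_le hbase hr.le
  have hmono : Real.exp (-β * t) ≤ Real.exp (-(γ * t / (1 + κ) ^ (1 + r))) := by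
    apply Real.exp_le_exp.2
    have h5 : γ * t / (1 + κ) ^ (1 + r) = (γ / (1 + κ) ^ (1 + r)) * t := by ring
    rw [h5]
    nlinarith [mul_le_mul_of_nonneg_right hβ ht]
  refine le_trans hmono (le_trans (hC _ t (q / (1+r)) hz1 ht (by positivity) hqA) ?_)
  have hzq : ((1 + κ) ^ (1 + r)) ^ (q / (1 + r)) = (1 + κ) ^ q := by
    rw [← Real.rpow_mul (by linarith : (0:ℝ) ≤ 1 + κ)]
    congr 1
    field_simp
  rw [hzq]

lemma const_of_deriv_zero {f : ℝ → ℂ} (hf : ∀ t : ℝ, HasDerivAt f 0 t) (t : ℝ) : f t = f 0 :=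
  is_const_of_deriv_eq_zero (fun s => (hf s).differentiableAt) (fun s => (hf s).deriv) t 0

end MHDProof

namespace MHDProof

lemma k2_nonneg {n : ℕ} (k : MHD.Freq n) : 0 ≤ MHD.k2 k :=
  Finset.sum_nonneg fun i _ => sq_nonneg _

lemma one_le_k2 {n : ℕ} {k : MHD.Freq n} (hk : k ≠ 0) : 1 ≤ MHD.k2 k := by
  obtain ⟨i, hi⟩ : ∃ i, k i ≠ 0 := by
    by_contra h
    push_neg at h
    exact hk (funext h)
  have h2 : (1:ℤ) ≤ |k i| := Int.one_le_abs hi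
  have h4 : (1:ℝ) ≤ ((|k i| : ℤ) : ℝ) := by exact_mod_cast h2
  rw [Int.cast_abs] at h4
  have h3 : (1:ℝ) ≤ ((k i : ℝ))^2 := by nlinarith [_root_.sq_abs ((k i : ℝ))]
  refine le_trans h3 ?_
  exact Finset.single_le_sum (f := fun j => ((k j : ℝ))^2) (fun j _ => sq_nonneg _)
    (Finset.mem_univ i)

lemma bdot_sq_le {n : ℕ} (b : Fin n → ℝ) (k : MHD.Freq n) :
    (MHD.bdot b k)^2 ≤ (MHD.vnormR b)^2 * MHD.k2 k := by
  have h := Finset.sum_mul_sq_le_sq_mul_sq Finset.univ b (fun i => ((k i : ℝ)))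
  unfold MHD.bdot MHD.vnormR MHD.k2
  rw [Real.sq_sqrt (Finset.sum_nonneg fun i _ => sq_nonneg _)]
  exact h

end MHDProof

namespace MHDProof

lemma fact_a2 {ε a κ vb : ℝ} (hε0 : 0 < ε) (hεvb2 : ε*vb^2 ≤ 1/2) (hκ : 1 ≤ κ)
    (hCS : a^2 ≤ vb^2*κ) : ε*a^2 ≤ κ^2/2 := by
  nlinarith [mul_le_mul_of_nonneg_left hCS hε0.le,
    mul_le_mul_of_nonneg_right hεvb2 (by linarith : (0:ℝ) ≤ κ),
    mul_nonneg (by linarith : (0:ℝ) ≤ κ) (by linarith : (0:ℝ) ≤ κ - 1)]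

lemma fact_a1 {ε a κ vb : ℝ} (hε0 : 0 < ε) (hvb0 : 0 ≤ vb) (hεvb1 : ε*vb ≤ 1/2)
    (hκ : 1 ≤ κ) (hCS : a^2 ≤ vb^2*κ) : ε*|a| ≤ κ/2 := by
  have he2 : (ε*vb)^2 ≤ (1/2:ℝ)^2 := pow_le_pow_left₀ (mul_nonneg hε0.le hvb0) hεvb1 2
  have h1 : (ε*|a|)^2 ≤ κ^2/4 := by
    rw [mul_pow, _root_.sq_abs]
    have c1 : ε^2*a^2 ≤ ε^2*(vb^2*κ) := mul_le_mul_of_nonneg_left hCS (sq_nonneg ε)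
    nlinarith [mul_le_mul_of_nonneg_right he2 (by linarith : (0:ℝ) ≤ κ),
      mul_nonneg (by linarith : (0:ℝ) ≤ κ) (by linarith : (0:ℝ) ≤ κ - 1)]
  nlinarith [h1, mul_nonneg hε0.le (abs_nonneg a), hκ, sq_nonneg (ε*|a| - κ/2)]

lemma fact_bvb {ε a κ vb : ℝ} (hε0 : 0 < ε) (hε1 : ε ≤ 1/2) (hκ : 1 ≤ κ) (hvb0 : 0 ≤ vb)
    (hCS : a^2 ≤ vb^2*κ) : 2*ε*a^2/(5*κ) ≤ vb^2 := by
  rw [div_le_iff₀ (by linarith : (0:ℝ) < 5*κ)]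
  nlinarith [mul_le_mul_of_nonneg_left hCS (by linarith : (0:ℝ) ≤ 2*ε),
    mul_nonneg (mul_nonneg (by linarith : (0:ℝ) ≤ 1 - 2*ε) (sq_nonneg vb))
      (by linarith : (0:ℝ) ≤ κ),
    mul_nonneg (sq_nonneg vb) (by linarith : (0:ℝ) ≤ κ)]

lemma fact_bκ {ε a κ : ℝ} (hκ : 1 ≤ κ) (hεa2 : ε*a^2 ≤ κ^2/2) :
    2*ε*a^2/(5*κ) ≤ κ/5 := by
  rw [div_le_div_iff₀ (by linarith : (0:ℝ) < 5*κ) (by norm_num : (0:ℝ) < 5)]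
  nlinarith

lemma fact_invκ {κ : ℝ} (hκ : 1 ≤ κ) : 1/κ ≤ 2*(1+κ)⁻¹ := by
  rw [← div_eq_mul_inv, div_le_div_iff₀ (by linarith) (by linarith)]
  nlinarith

end MHDProof

set_option maxHeartbeats 1000000 in
open MHD in
/-- **Linear stability I** (velocity diffusion, `μ = 1`, `ν = 0`): decay of solutions of the
linearized system `∂ₜU − ΔU = b̃·∇B`, `∂ₜB = b̃·∇U`, `∇·U = ∇·B = 0` on `𝕋ⁿ`. -/
theorem linear_stability_velocity_diffusion
    (n : ℕ) (hn : 2 ≤ n) (r c : ℝ) (hr : (n : ℝ) - 1 < r) (hc : 0 < c)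
    (btil : Fin n → ℝ) (hdio : Diophantine btil r c)
    (m : ℝ) (hm : 0 ≤ m)
    (U₀ B₀ : Coef n) (hU₀ : MemSob m U₀) (hB₀ : MemSob m B₀)
    (hdivU₀ : DivFree U₀) (hdivB₀ : DivFree B₀)
    (hmeanU₀ : U₀ 0 = 0) (hmeanB₀ : B₀ 0 = 0)
    (U B : ℝ → Coef n)
    (hU : ∀ (t : ℝ) (k : Freq n) (i : Fin n),
      HasDerivAt (fun τ : ℝ => U τ k i)
        (-(k2 k : ℂ) * U t k i + Complex.I * (bdot btil k : ℂ) * B t k i) t)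
    (hB : ∀ (t : ℝ) (k : Freq n) (i : Fin n),
      HasDerivAt (fun τ : ℝ => B τ k i)
        (Complex.I * (bdot btil k : ℂ) * U t k i) t)
    (hdivU : ∀ t : ℝ, DivFree (U t)) (hdivB : ∀ t : ℝ, DivFree (B t))
    (hIU : U 0 = U₀) (hIB : B 0 = B₀) :
    ∃ C > 0, ∀ s : ℝ, 0 ≤ s → s ≤ m → ∀ t : ℝ, 0 ≤ t →
      sobNorm s (U t) ≤
        C * (1 + t) ^ (-(1 / 2 + (m - s + 1) / (2 * (1 + r)))) * pairNorm m U₀ B₀ ∧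
      sobNorm s (B t) ≤
        C * (1 + t) ^ (-((m - s) / (2 * (1 + r)))) * pairNorm m U₀ B₀ := by
  classical
  have hn1 : (2:ℝ) ≤ (n:ℝ) := by exact_mod_cast hn
  have hr1 : (0:ℝ) < 1 + r := by linarith
  set vb : ℝ := vnormR btil with hvbdef
  have hvb0 : 0 ≤ vb := Real.sqrt_nonneg _
  set ε : ℝ := 1 / (2 * (1 + vb)^2) with hεdef
  have hε0 : 0 < ε := by positivity
  have hε1 : ε ≤ 1/2 := by
    rw [hεdef, div_le_iff₀ (by positivity)]
    nlinarith
  have hεvb2 : ε * vb^2 ≤ 1/2 := by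
    rw [hεdef, div_mul_eq_mul_div, div_le_iff₀ (by positivity)]
    nlinarith
  have hεvb1 : ε * vb ≤ 1/2 := by
    rw [hεdef, div_mul_eq_mul_div, div_le_iff₀ (by positivity)]
    nlinarith
  set A : ℝ := 1 + (m + 1) / (1 + r) with hAdef
  set γ : ℝ := min 1 (2*ε/5 * c^2) with hγdef
  have hγ0 : 0 < γ := lt_min one_pos (by positivity)
  have hγ1 : γ ≤ 1 := min_le_left _ _
  have hγc : γ ≤ 2*ε/5 * c^2 := min_le_right _ _
  obtain ⟨C₀, hC₀pos, hC₀⟩ := MHDProof.key_bound A (γ/2) (by positivity) (by linarith)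
  set E₀ : Freq n → ℝ := fun k => vnormSq (U₀ k) + vnormSq (B₀ k) with hE₀def
  have hE₀0 : ∀ k, 0 ≤ E₀ k := fun k =>
    add_nonneg (MHDProof.vnormSq_nonneg _) (MHDProof.vnormSq_nonneg _)
  -- zero modes vanish
  have hk20 : k2 (0 : Freq n) = 0 := by simp [k2]
  have hbd0 : bdot btil (0 : Freq n) = 0 := by simp [bdot]
  have hUz : ∀ (t : ℝ) (i : Fin n), U t 0 i = 0 := by
    intro t i
    have hf : ∀ τ : ℝ, HasDerivAt (fun τ => U τ 0 i) 0 τ := by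
      intro τ
      have h := hU τ 0 i
      rw [hk20, hbd0] at h
      simpa using h
    have h0 := MHDProof.const_of_deriv_zero hf t
    rw [h0, show U 0 0 i = U₀ 0 i from by rw [hIU], hmeanU₀]
    rfl
  have hBz : ∀ (t : ℝ) (i : Fin n), B t 0 i = 0 := by
    intro t i
    have hf : ∀ τ : ℝ, HasDerivAt (fun τ => B τ 0 i) 0 τ := by
      intro τ
      have h := hB τ 0 i
      rw [hbd0] at h
      simpa using h
    have h0 := MHDProof.const_of_deriv_zero hf t
    rw [h0, show B 0 0 i = B₀ 0 i from by rw [hIB], hmeanB₀]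
    rfl
  have hvnU0 : ∀ t : ℝ, vnormSq (U t 0) = 0 := by
    intro t; simp [MHD.vnormSq, hUz t]
  have hvnB0 : ∀ t : ℝ, vnormSq (B t 0) = 0 := by
    intro t; simp [MHD.vnormSq, hBz t]
  -- Cauchy–Schwarz and smallness facts
  have hCS : ∀ k : Freq n, (bdot btil k)^2 ≤ vb^2 * k2 k := by
    intro k
    have h := MHDProof.bdot_sq_le btil k
    rw [hvbdef]
    exact h
  have hεa2 : ∀ k : Freq n, k ≠ 0 → ε * (bdot btil k)^2 ≤ (k2 k)^2/2 := fun k hk =>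
    MHDProof.fact_a2 hε0 hεvb2 (MHDProof.one_le_k2 hk) (hCS k)
  have hεa1 : ∀ k : Freq n, k ≠ 0 → ε * |bdot btil k| ≤ k2 k/2 := fun k hk =>
    MHDProof.fact_a1 hε0 hvb0 hεvb1 (MHDProof.one_le_k2 hk) (hCS k)
  -- energy decay per mode
  have hdecay : ∀ k : Freq n, k ≠ 0 → ∀ t : ℝ, 0 ≤ t →
      vnormSq (U t k) + vnormSq (B t k)
        ≤ 2 * Real.exp (-(2 * ε * (bdot btil k)^2 / (5 * k2 k)) * t) * E₀ k := by
    intro k hk t ht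
    have hκ1 := MHDProof.one_le_k2 (k := k) hk
    have h := MHDProof.mode_energy_decay (k2 k) (bdot btil k) ε hκ1 hε0 hε1
      (hεa2 k hk) (hεa1 k hk) (fun τ => U τ k) (fun τ => B τ k)
      (fun t i => hU t k i) (fun t i => hB t k i) t ht
    rw [show U 0 k = U₀ k from congrFun hIU k,
      show B 0 k = B₀ k from congrFun hIB k] at h
    exact h
  -- velocity refined decay per mode
  have hUdecay : ∀ k : Freq n, k ≠ 0 → ∀ t : ℝ, 0 ≤ t →
      vnormSq (U t k) ≤ 2 * Real.exp (-(2 * k2 k) * t) * E₀ k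
        + 16 * n * ((bdot btil k)^2/(k2 k)^2)
          * Real.exp (-(2 * ε * (bdot btil k)^2 / (5 * k2 k)) * t) * E₀ k := by
    intro k hk t ht
    have hκ1 := MHDProof.one_le_k2 (k := k) hk
    have hκ0 : (0:ℝ) < k2 k := by linarith
    have hβκ : 2 * ε * (bdot btil k)^2 / (5 * k2 k) ≤ k2 k/5 :=
      MHDProof.fact_bκ hκ1 (hεa2 k hk)
    refine MHDProof.mode_u_bound (k2 k) (bdot btil k)
      (2 * ε * (bdot btil k)^2 / (5 * k2 k)) (E₀ k) hκ1 (by positivity) hβκ (hE₀0 k)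
      (fun τ => U τ k) (fun τ => B τ k)
      (fun t i => hU t k i) (fun t i => hB t k i) ?_ ?_ t ht
    · rw [show U 0 k = U₀ k from congrFun hIU k]
      exact le_add_of_nonneg_right (MHDProof.vnormSq_nonneg _)
    · intro s hs
      exact le_trans (le_add_of_nonneg_left (MHDProof.vnormSq_nonneg _)) (hdecay k hk s hs)
  -- lower bound on the decay rate
  have hβlow : ∀ k : Freq n, k ≠ 0 →
      γ / (1 + k2 k) ^ (1 + r) ≤ 2 * ε * (bdot btil k)^2 / (5 * k2 k) := by
    intro k hk
    have hκ1 := MHDProof.one_le_k2 (k := k) hk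
    have hκ0 : (0:ℝ) < k2 k := by linarith
    have ha2 : c^2 / (k2 k) ^ r ≤ (bdot btil k)^2 := by
      have hdio' := hdio k hk
      have h1 : (c / knorm k ^ r)^2 ≤ |bdot btil k|^2 := by
        apply pow_le_pow_left₀ _ hdio' 2
        exact div_nonneg hc.le (Real.rpow_nonneg (Real.sqrt_nonneg _) r)
      rw [_root_.sq_abs] at h1
      have h2 : (c / knorm k ^ r)^2 = c^2 / (k2 k)^r := by
        rw [div_pow]
        congr 1
        rw [show knorm k = (k2 k) ^ ((1:ℝ)/2) from by
          rw [show knorm k = Real.sqrt (k2 k) from rfl, Real.sqrt_eq_rpow]]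
        rw [← Real.rpow_natCast ((k2 k ^ ((1:ℝ)/2)) ^ r) 2,
          ← Real.rpow_mul (Real.rpow_nonneg hκ0.le _), ← Real.rpow_mul hκ0.le]
        congr 1
        push_cast
        ring
      rwa [h2] at h1
    have hzc : (k2 k) ^ r * k2 k ≤ (1 + k2 k) ^ (1 + r) := by
      have e1 : (k2 k) ^ r * k2 k = (k2 k) ^ (r + 1) := by
        rw [Real.rpow_add hκ0, Real.rpow_one]
      rw [e1, show (1:ℝ) + r = r + 1 by ring]
      exact Real.rpow_le_rpow hκ0.le (by linarith) (by linarith)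
    have hz0 : (0:ℝ) < (k2 k) ^ r * k2 k := by
      have := Real.rpow_pos_of_pos hκ0 r
      positivity
    have hZpos : (0:ℝ) < (1 + k2 k) ^ (1 + r) := Real.rpow_pos_of_pos (by linarith) _
    calc γ / (1 + k2 k) ^ (1 + r) ≤ (2*ε/5 * c^2) / (1 + k2 k) ^ (1 + r) :=
          (div_le_div_iff_of_pos_right hZpos).2 hγc
    _ ≤ (2*ε/5 * c^2) / ((k2 k) ^ r * k2 k) :=
          div_le_div_of_nonneg_left (by positivity) hz0 hzc
    _ = 2 * ε * (c^2/(k2 k)^r) / (5 * k2 k) := by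
          field_simp
    _ ≤ 2 * ε * (bdot btil k)^2 / (5 * k2 k) := by
          apply (div_le_div_iff_of_pos_right (by positivity)).2
          exact mul_le_mul_of_nonneg_left ha2 (by linarith [hε0])
  -- weighted per-mode bound for B
  have hPB : ∀ s : ℝ, 0 ≤ s → s ≤ m → ∀ t : ℝ, 0 ≤ t → ∀ k : Freq n,
      (1 + k2 k) ^ s * vnormSq (B t k)
        ≤ 2*C₀ * (1+t) ^ (-((m-s)/(1+r))) * ((1 + k2 k) ^ m * E₀ k) := by
    intro s hs0 hsm t ht k
    have ht0 : (0:ℝ) < 1 + t := by linarith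
    by_cases hk : k = 0
    · subst hk
      rw [hvnB0 t, mul_zero]
      have hb0 : (0:ℝ) ≤ 1 + k2 (0 : Freq n) := by rw [hk20]; norm_num
      exact mul_nonneg (mul_nonneg (by linarith [hC₀pos]) (Real.rpow_nonneg ht0.le _))
        (mul_nonneg (Real.rpow_nonneg hb0 _) (hE₀0 0))
    · have hκ1 := MHDProof.one_le_k2 (k := k) hk
      have hbase : (0:ℝ) < 1 + k2 k := by linarith
      have hBb : vnormSq (B t k)
          ≤ 2 * Real.exp (-(2 * ε * (bdot btil k)^2 / (5 * k2 k)) * t) * E₀ k :=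
        le_trans (le_add_of_nonneg_left (MHDProof.vnormSq_nonneg _)) (hdecay k hk t ht)
      have hβ2 : γ/2 / (1 + k2 k) ^ (1 + r) ≤ 2 * ε * (bdot btil k)^2 / (5 * k2 k) := by
        rw [show γ/2 / (1 + k2 k) ^ (1 + r) = (γ / (1 + k2 k) ^ (1 + r))/2 from by ring]
        have hnn : 0 ≤ γ / (1 + k2 k) ^ (1 + r) := by positivity
        linarith [hβlow k hk]
      have hqA : (m-s)/(1+r) ≤ A := by
        rw [hAdef]
        have h2 : (m-s)/(1+r) ≤ (m+1)/(1+r) := (div_le_div_iff_of_pos_right hr1).2 (by linarith)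
        have h3 : (0:ℝ) ≤ (m+1)/(1+r) := by positivity
        linarith
      have hE := MHDProof.expz r A (γ/2) C₀ hr1 (by positivity) hC₀ (k2 k) (m-s) t
        (2 * ε * (bdot btil k)^2 / (5 * k2 k)) hκ1 (by linarith) hqA ht hβ2
      calc (1 + k2 k) ^ s * vnormSq (B t k)
          ≤ (1 + k2 k) ^ s
              * (2 * (C₀ * (1 + k2 k) ^ (m-s) * (1+t) ^ (-((m-s)/(1+r)))) * E₀ k) := by
            apply mul_le_mul_of_nonneg_left _ (Real.rpow_nonneg hbase.le s)
            refine le_trans hBb ?_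
            apply mul_le_mul_of_nonneg_right _ (hE₀0 k)
            exact mul_le_mul_of_nonneg_left hE (by norm_num)
      _ = 2*C₀ * (1+t) ^ (-((m-s)/(1+r))) * (((1 + k2 k) ^ s * (1 + k2 k) ^ (m-s)) * E₀ k) := by
            ring
      _ = 2*C₀ * (1+t) ^ (-((m-s)/(1+r))) * ((1 + k2 k) ^ m * E₀ k) := by
            rw [← Real.rpow_add hbase, show s + (m-s) = m from by ring]
  -- constants for U
  set twoPowv : ℝ := (2:ℝ) ^ ((1+r) + (m+1)) with htpdef
  have htp0 : (0:ℝ) < twoPowv := Real.rpow_pos_of_pos two_pos _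
  set KU2 : ℝ := 16*(n:ℝ)*(5/(2*ε))*2*(2*vb^2+2)*C₀ with hKU2def
  have hKU20 : 0 ≤ KU2 := by
    rw [hKU2def]
    have h5 : (0:ℝ) ≤ 5/(2*ε) := div_nonneg (by norm_num) (by linarith)
    have hvt : (0:ℝ) ≤ 2*vb^2+2 := by positivity
    have h16 : (0:ℝ) ≤ 16*(n:ℝ) := by positivity
    exact mul_nonneg (mul_nonneg (mul_nonneg (mul_nonneg h16 h5) (by norm_num)) hvt) hC₀pos.le
  set CU : ℝ := 2*C₀*twoPowv + KU2 with hCUdef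
  have hCU0 : 0 < CU := by
    rw [hCUdef]
    have h1 : 0 < 2*C₀*twoPowv := mul_pos (mul_pos two_pos hC₀pos) htp0
    linarith
  -- weighted per-mode bound for U
  have hPU : ∀ s : ℝ, 0 ≤ s → s ≤ m → ∀ t : ℝ, 0 ≤ t → ∀ k : Freq n,
      (1 + k2 k) ^ s * vnormSq (U t k)
        ≤ CU * (1+t) ^ (-(1 + (m-s+1)/(1+r))) * ((1 + k2 k) ^ m * E₀ k) := by
    intro s hs0 hsm t ht k
    have ht0 : (0:ℝ) < 1 + t := by linarith
    by_cases hk : k = 0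
    · subst hk
      rw [hvnU0 t, mul_zero]
      have hb0 : (0:ℝ) ≤ 1 + k2 (0 : Freq n) := by rw [hk20]; norm_num
      exact mul_nonneg (mul_nonneg hCU0.le (Real.rpow_nonneg ht0.le _))
        (mul_nonneg (Real.rpow_nonneg hb0 _) (hE₀0 0))
    · have hκ1 := MHDProof.one_le_k2 (k := k) hk
      have hκ0 : (0:ℝ) < k2 k := by linarith
      have hbase : (0:ℝ) < 1 + k2 k := by linarith
      have hwnn : (0:ℝ) ≤ (1 + k2 k) ^ s := Real.rpow_nonneg hbase.le s
      -- T1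
      have hq1A : ((1+r) + (m-s+1))/(1+r) ≤ A := by
        rw [hAdef, show ((1+r) + (m-s+1))/(1+r) = 1 + (m-s+1)/(1+r) from by field_simp]
        have h2 : (m-s+1)/(1+r) ≤ (m+1)/(1+r) := (div_le_div_iff_of_pos_right hr1).2 (by linarith)
        linarith
      have hβ1 : γ/2 / ((1:ℝ)+1) ^ ((1:ℝ) + r) ≤ 1 := by
        have h1 : (1:ℝ) ≤ ((1:ℝ)+1) ^ ((1:ℝ) + r) := by
          calc (1:ℝ) = ((1:ℝ)+1) ^ (0:ℝ) := (Real.rpow_zero _).symm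
          _ ≤ _ := Real.rpow_le_rpow_of_exponent_le (by norm_num) (by linarith)
        calc γ/2 / ((1:ℝ)+1) ^ ((1:ℝ)+r) ≤ γ/2 := div_le_self (by positivity) h1
        _ ≤ 1 := by linarith
      have hT1exp : Real.exp (-(1:ℝ) * t)
          ≤ C₀ * ((1:ℝ)+1) ^ ((1+r) + (m-s+1)) * (1+t) ^ (-(((1+r) + (m-s+1))/(1+r))) :=
        MHDProof.expz r A (γ/2) C₀ hr1 (by positivity) hC₀ 1 ((1+r) + (m-s+1)) t 1
          le_rfl (by linarith) hq1A ht hβ1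
      have hT1exp2 : Real.exp (-(2 * k2 k) * t) ≤ Real.exp (-(1:ℝ) * t) := by
        apply Real.exp_le_exp.2
        have h := mul_le_mul_of_nonneg_right (by linarith : (1:ℝ) ≤ 2 * k2 k) ht
        linarith
      have htpb : ((1:ℝ)+1) ^ ((1+r) + (m-s+1)) ≤ twoPowv := by
        rw [htpdef, show ((1:ℝ)+1) = 2 from by norm_num]
        exact Real.rpow_le_rpow_of_exponent_le (by norm_num) (by linarith)
      have heq1 : ((1+r) + (m-s+1))/(1+r) = 1 + (m-s+1)/(1+r) := by field_simp
      have hT1 : (1 + k2 k) ^ s * (2 * Real.exp (-(2 * k2 k) * t) * E₀ k)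
          ≤ (2*C₀*twoPowv)
            * ((1+t) ^ (-(1 + (m-s+1)/(1+r))) * ((1 + k2 k) ^ m * E₀ k)) := by
        have e6 : Real.exp (-(2 * k2 k) * t)
            ≤ C₀ * twoPowv * (1+t) ^ (-(1 + (m-s+1)/(1+r))) := by
          rw [← heq1]
          refine le_trans hT1exp2 (le_trans hT1exp ?_)
          apply mul_le_mul_of_nonneg_right _ (Real.rpow_nonneg ht0.le _)
          exact mul_le_mul_of_nonneg_left htpb hC₀pos.le
        have e4 : (1 + k2 k) ^ s ≤ (1 + k2 k) ^ m :=
          Real.rpow_le_rpow_of_exponent_le (by linarith) hsm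
        calc (1 + k2 k) ^ s * (2 * Real.exp (-(2 * k2 k) * t) * E₀ k)
            ≤ (1 + k2 k) ^ m
                * (2 * (C₀ * twoPowv * (1+t) ^ (-(1 + (m-s+1)/(1+r)))) * E₀ k) := by
              apply mul_le_mul e4 ?_ ?_ (Real.rpow_nonneg hbase.le m)
              · exact mul_le_mul_of_nonneg_right (by linarith [e6]) (hE₀0 k)
              · exact mul_nonneg (mul_nonneg (by norm_num) (Real.exp_pos _).le) (hE₀0 k)
        _ = (2*C₀*twoPowv)
              * ((1+t) ^ (-(1 + (m-s+1)/(1+r))) * ((1 + k2 k) ^ m * E₀ k)) := by ring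
      -- T2
      have hβ0k : (0:ℝ) ≤ 2 * ε * (bdot btil k)^2 / (5 * k2 k) := by positivity
      have hβvb : 2 * ε * (bdot btil k)^2 / (5 * k2 k) ≤ vb^2 :=
        MHDProof.fact_bvb hε0 hε1 hκ1 hvb0 (hCS k)
      have hbd := MHDProof.beta_decay (2 * ε * (bdot btil k)^2 / (5 * k2 k)) (vb^2) t
        hβ0k hβvb ht
      have hq2A : (m-s+1)/(1+r) ≤ A := by
        rw [hAdef]
        have h2 : (m-s+1)/(1+r) ≤ (m+1)/(1+r) := (div_le_div_iff_of_pos_right hr1).2 (by linarith)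
        linarith
      have hβ2 : γ/2 / (1 + k2 k) ^ (1 + r)
          ≤ 2 * ε * (bdot btil k)^2 / (5 * k2 k) / 2 := by
        rw [show γ/2 / (1 + k2 k) ^ (1 + r) = (γ / (1 + k2 k) ^ (1 + r))/2 from by ring]
        linarith [hβlow k hk]
      have hT2exp : Real.exp (-(2 * ε * (bdot btil k)^2 / (5 * k2 k) / 2) * t)
          ≤ C₀ * (1 + k2 k) ^ (m-s+1) * (1+t) ^ (-((m-s+1)/(1+r))) :=
        MHDProof.expz r A (γ/2) C₀ hr1 (by positivity) hC₀ (k2 k) (m-s+1) t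
          (2 * ε * (bdot btil k)^2 / (5 * k2 k) / 2) hκ1 (by linarith) hq2A ht hβ2
      have hZ0 : (0:ℝ) ≤ C₀ * (1 + k2 k) ^ (m-s+1) * (1+t) ^ (-((m-s+1)/(1+r))) :=
        mul_nonneg (mul_nonneg hC₀pos.le (Real.rpow_nonneg hbase.le _))
          (Real.rpow_nonneg ht0.le _)
      have hinvκ : 1/(k2 k) ≤ 2 * (1 + k2 k)⁻¹ := MHDProof.fact_invκ hκ1
      have hidT2 : (bdot btil k)^2/(k2 k)^2
            * Real.exp (-(2 * ε * (bdot btil k)^2 / (5 * k2 k)) * t)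
          = 5/(2*ε) * (1/(k2 k) * ((2 * ε * (bdot btil k)^2 / (5 * k2 k))
            * Real.exp (-(2 * ε * (bdot btil k)^2 / (5 * k2 k)) * t))) := by
        field_simp
      have hT2core : (bdot btil k)^2/(k2 k)^2
            * Real.exp (-(2 * ε * (bdot btil k)^2 / (5 * k2 k)) * t)
          ≤ 5/(2*ε) * (2 * (1 + k2 k)⁻¹ * ((2*vb^2+2) * ((1+t)⁻¹ *
            (C₀ * (1 + k2 k) ^ (m-s+1) * (1+t) ^ (-((m-s+1)/(1+r))))))) := by
        rw [hidT2]
        have hc52 : (0:ℝ) ≤ 5/(2*ε) := div_nonneg (by norm_num) (by linarith)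
        apply mul_le_mul_of_nonneg_left _ hc52
        have s1 : 1/(k2 k) * ((2 * ε * (bdot btil k)^2 / (5 * k2 k))
              * Real.exp (-(2 * ε * (bdot btil k)^2 / (5 * k2 k)) * t))
            ≤ 1/(k2 k) * ((2*vb^2+2) * ((1+t)⁻¹
              * Real.exp (-(2 * ε * (bdot btil k)^2 / (5 * k2 k) / 2) * t))) := by
          apply mul_le_mul_of_nonneg_left _ (by positivity)
          exact hbd
        refine le_trans s1 ?_
        have s2 : (2*vb^2+2) * ((1+t)⁻¹
              * Real.exp (-(2 * ε * (bdot btil k)^2 / (5 * k2 k) / 2) * t))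
            ≤ (2*vb^2+2) * ((1+t)⁻¹
              * (C₀ * (1 + k2 k) ^ (m-s+1) * (1+t) ^ (-((m-s+1)/(1+r))))) := by
          apply mul_le_mul_of_nonneg_left _ (by positivity)
          exact mul_le_mul_of_nonneg_left hT2exp (by positivity)
        calc 1/(k2 k) * ((2*vb^2+2) * ((1+t)⁻¹
              * Real.exp (-(2 * ε * (bdot btil k)^2 / (5 * k2 k) / 2) * t)))
            ≤ 1/(k2 k) * ((2*vb^2+2) * ((1+t)⁻¹
              * (C₀ * (1 + k2 k) ^ (m-s+1) * (1+t) ^ (-((m-s+1)/(1+r)))))) :=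
              mul_le_mul_of_nonneg_left s2 (by positivity)
        _ ≤ 2 * (1 + k2 k)⁻¹ * ((2*vb^2+2) * ((1+t)⁻¹
              * (C₀ * (1 + k2 k) ^ (m-s+1) * (1+t) ^ (-((m-s+1)/(1+r)))))) := by
              apply mul_le_mul_of_nonneg_right hinvκ
              exact mul_nonneg (by positivity) (mul_nonneg (by positivity) hZ0)
      have hcomb1 : (1+t)⁻¹ * (1+t) ^ (-((m-s+1)/(1+r)))
          = (1+t) ^ (-(1 + (m-s+1)/(1+r))) := by
        rw [← Real.rpow_neg_one (1+t), ← Real.rpow_add ht0]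
        congr 1
        ring
      have hcomb2 : (1 + k2 k) ^ s * ((1 + k2 k)⁻¹ * (1 + k2 k) ^ (m-s+1))
          = (1 + k2 k) ^ m := by
        rw [← Real.rpow_neg_one (1 + k2 k), ← Real.rpow_add hbase, ← Real.rpow_add hbase]
        congr 1
        ring
      have hT2 : (1 + k2 k) ^ s * (16 * n * ((bdot btil k)^2/(k2 k)^2)
            * Real.exp (-(2 * ε * (bdot btil k)^2 / (5 * k2 k)) * t) * E₀ k)
          ≤ KU2 * ((1+t) ^ (-(1 + (m-s+1)/(1+r))) * ((1 + k2 k) ^ m * E₀ k)) := by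
        have h16 : (0:ℝ) ≤ 16*(n:ℝ) := by positivity
        have step : (1 + k2 k) ^ s * (16 * n * ((bdot btil k)^2/(k2 k)^2)
              * Real.exp (-(2 * ε * (bdot btil k)^2 / (5 * k2 k)) * t) * E₀ k)
            ≤ (1 + k2 k) ^ s * (16 * (n:ℝ) * (5/(2*ε) * (2 * (1 + k2 k)⁻¹
              * ((2*vb^2+2) * ((1+t)⁻¹ * (C₀ * (1 + k2 k) ^ (m-s+1)
                * (1+t) ^ (-((m-s+1)/(1+r)))))))) * E₀ k) := by
          apply mul_le_mul_of_nonneg_left _ hwnn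
          apply mul_le_mul_of_nonneg_right _ (hE₀0 k)
          calc 16 * (n:ℝ) * ((bdot btil k)^2/(k2 k)^2)
                * Real.exp (-(2 * ε * (bdot btil k)^2 / (5 * k2 k)) * t)
              = 16 * (n:ℝ) * (((bdot btil k)^2/(k2 k)^2)
                * Real.exp (-(2 * ε * (bdot btil k)^2 / (5 * k2 k)) * t)) := by ring
          _ ≤ 16 * (n:ℝ) * (5/(2*ε) * (2 * (1 + k2 k)⁻¹ * ((2*vb^2+2) * ((1+t)⁻¹ *
                (C₀ * (1 + k2 k) ^ (m-s+1) * (1+t) ^ (-((m-s+1)/(1+r)))))))) :=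
                mul_le_mul_of_nonneg_left hT2core h16
        refine le_trans step ?_
        have hring : (1 + k2 k) ^ s * (16 * (n:ℝ) * (5/(2*ε) * (2 * (1 + k2 k)⁻¹
              * ((2*vb^2+2) * ((1+t)⁻¹ * (C₀ * (1 + k2 k) ^ (m-s+1)
                * (1+t) ^ (-((m-s+1)/(1+r)))))))) * E₀ k)
            = KU2 * (((1+t)⁻¹ * (1+t) ^ (-((m-s+1)/(1+r))))
              * (((1 + k2 k) ^ s * ((1 + k2 k)⁻¹ * (1 + k2 k) ^ (m-s+1))) * E₀ k)) := by
          rw [hKU2def]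
          ring
        rw [hring, hcomb1, hcomb2]
      calc (1 + k2 k) ^ s * vnormSq (U t k)
          ≤ (1 + k2 k) ^ s * (2 * Real.exp (-(2 * k2 k) * t) * E₀ k
              + 16 * n * ((bdot btil k)^2/(k2 k)^2)
                * Real.exp (-(2 * ε * (bdot btil k)^2 / (5 * k2 k)) * t) * E₀ k) :=
            mul_le_mul_of_nonneg_left (hUdecay k hk t ht) hwnn
      _ = (1 + k2 k) ^ s * (2 * Real.exp (-(2 * k2 k) * t) * E₀ k)
            + (1 + k2 k) ^ s * (16 * n * ((bdot btil k)^2/(k2 k)^2)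
              * Real.exp (-(2 * ε * (bdot btil k)^2 / (5 * k2 k)) * t) * E₀ k) := by ring
      _ ≤ (2*C₀*twoPowv) * ((1+t) ^ (-(1 + (m-s+1)/(1+r))) * ((1 + k2 k) ^ m * E₀ k))
            + KU2 * ((1+t) ^ (-(1 + (m-s+1)/(1+r))) * ((1 + k2 k) ^ m * E₀ k)) :=
            add_le_add hT1 hT2
      _ = CU * (1+t) ^ (-(1 + (m-s+1)/(1+r))) * ((1 + k2 k) ^ m * E₀ k) := by
            rw [hCUdef]
            ring
  -- summability of the majorant
  have hgsum : Summable (fun k : Freq n => (1 + k2 k) ^ m * E₀ k) := by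
    refine Summable.congr (Summable.add hU₀ hB₀) fun k => ?_
    exact (mul_add _ _ _).symm
  have htsum : (∑' k : Freq n, (1 + k2 k) ^ m * E₀ k) = pairSobSq m U₀ B₀ := by
    rw [show pairSobSq m U₀ B₀ = sobSq m U₀ + sobSq m B₀ from rfl]
    rw [show sobSq m U₀ = ∑' k : Freq n, (1+k2 k)^m * vnormSq (U₀ k) from rfl,
      show sobSq m B₀ = ∑' k : Freq n, (1+k2 k)^m * vnormSq (B₀ k) from rfl]
    rw [← Summable.tsum_add hU₀ hB₀]
    exact tsum_congr fun k => mul_add _ _ _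
  have hk2nn : ∀ k : Freq n, (0:ℝ) ≤ 1 + k2 k := fun k => by
    linarith [MHDProof.k2_nonneg k]
  -- final constant
  refine ⟨Real.sqrt CU + Real.sqrt (2*C₀) + 1, by positivity, ?_⟩
  intro s hs0 hsm t ht
  have ht0 : (0:ℝ) < 1 + t := by linarith
  have hpnn : 0 ≤ pairNorm m U₀ B₀ := Real.sqrt_nonneg _
  constructor
  · -- U bound
    have hmaj : Summable (fun k : Freq n =>
        CU * (1+t) ^ (-(1 + (m-s+1)/(1+r))) * ((1 + k2 k) ^ m * E₀ k)) :=
      hgsum.mul_left _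
    have hsumU : Summable (fun k : Freq n => (1 + k2 k) ^ s * vnormSq (U t k)) :=
      Summable.of_nonneg_of_le
        (fun k => mul_nonneg (Real.rpow_nonneg (hk2nn k) _) (MHDProof.vnormSq_nonneg _))
        (fun k => hPU s hs0 hsm t ht k) hmaj
    have hsob : sobSq s (U t)
        ≤ CU * (1+t) ^ (-(1 + (m-s+1)/(1+r))) * pairSobSq m U₀ B₀ := by
      rw [show sobSq s (U t) = ∑' k : Freq n, (1+k2 k)^s * vnormSq (U t k) from rfl]
      calc (∑' k : Freq n, (1+k2 k)^s * vnormSq (U t k))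
          ≤ ∑' k : Freq n, CU * (1+t) ^ (-(1 + (m-s+1)/(1+r))) * ((1 + k2 k) ^ m * E₀ k) :=
            Summable.tsum_le_tsum (fun k => hPU s hs0 hsm t ht k) hsumU hmaj
      _ = CU * (1+t) ^ (-(1 + (m-s+1)/(1+r))) * (∑' k : Freq n, (1 + k2 k) ^ m * E₀ k) :=
            tsum_mul_left
      _ = _ := by rw [htsum]
    have hs1 : sobNorm s (U t)
        ≤ Real.sqrt (CU * (1+t) ^ (-(1 + (m-s+1)/(1+r))) * pairSobSq m U₀ B₀) :=
      Real.sqrt_le_sqrt hsob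
    have hsplit : Real.sqrt (CU * (1+t) ^ (-(1 + (m-s+1)/(1+r))) * pairSobSq m U₀ B₀)
        = Real.sqrt CU * Real.sqrt ((1+t) ^ (-(1 + (m-s+1)/(1+r)))) * pairNorm m U₀ B₀ := by
      rw [Real.sqrt_mul (mul_nonneg hCU0.le (Real.rpow_nonneg ht0.le _)),
        Real.sqrt_mul hCU0.le]
      rfl
    have hrp : Real.sqrt ((1+t) ^ (-(1 + (m-s+1)/(1+r))))
        = (1+t) ^ (-(1/2 + (m-s+1)/(2*(1+r)))) := by
      rw [Real.sqrt_eq_rpow, ← Real.rpow_mul ht0.le]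
      congr 1
      rw [neg_mul]
      congr 1
      rw [add_mul, one_mul, div_mul_div_comm, mul_one, mul_comm (1+r) 2]
    rw [hsplit, hrp] at hs1
    refine le_trans hs1 ?_
    apply mul_le_mul_of_nonneg_right _ hpnn
    apply mul_le_mul_of_nonneg_right _ (Real.rpow_nonneg ht0.le _)
    have h2 := Real.sqrt_nonneg (2*C₀)
    linarith
  · -- B bound
    have hmaj : Summable (fun k : Freq n =>
        2*C₀ * (1+t) ^ (-((m-s)/(1+r))) * ((1 + k2 k) ^ m * E₀ k)) :=
      hgsum.mul_left _
    have hsumB : Summable (fun k : Freq n => (1 + k2 k) ^ s * vnormSq (B t k)) :=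
      Summable.of_nonneg_of_le
        (fun k => mul_nonneg (Real.rpow_nonneg (hk2nn k) _) (MHDProof.vnormSq_nonneg _))
        (fun k => hPB s hs0 hsm t ht k) hmaj
    have hsob : sobSq s (B t)
        ≤ 2*C₀ * (1+t) ^ (-((m-s)/(1+r))) * pairSobSq m U₀ B₀ := by
      rw [show sobSq s (B t) = ∑' k : Freq n, (1+k2 k)^s * vnormSq (B t k) from rfl]
      calc (∑' k : Freq n, (1+k2 k)^s * vnormSq (B t k))
          ≤ ∑' k : Freq n, 2*C₀ * (1+t) ^ (-((m-s)/(1+r))) * ((1 + k2 k) ^ m * E₀ k) :=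
            Summable.tsum_le_tsum (fun k => hPB s hs0 hsm t ht k) hsumB hmaj
      _ = 2*C₀ * (1+t) ^ (-((m-s)/(1+r))) * (∑' k : Freq n, (1 + k2 k) ^ m * E₀ k) :=
            tsum_mul_left
      _ = _ := by rw [htsum]
    have hs1 : sobNorm s (B t)
        ≤ Real.sqrt (2*C₀ * (1+t) ^ (-((m-s)/(1+r))) * pairSobSq m U₀ B₀) :=
      Real.sqrt_le_sqrt hsob
    have h2C₀ : (0:ℝ) ≤ 2*C₀ := by linarith
    have hsplit : Real.sqrt (2*C₀ * (1+t) ^ (-((m-s)/(1+r))) * pairSobSq m U₀ B₀)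
        = Real.sqrt (2*C₀) * Real.sqrt ((1+t) ^ (-((m-s)/(1+r)))) * pairNorm m U₀ B₀ := by
      rw [Real.sqrt_mul (mul_nonneg h2C₀ (Real.rpow_nonneg ht0.le _)),
        Real.sqrt_mul h2C₀]
      rfl
    have hrp : Real.sqrt ((1+t) ^ (-((m-s)/(1+r))))
        = (1+t) ^ (-((m-s)/(2*(1+r)))) := by
      rw [Real.sqrt_eq_rpow, ← Real.rpow_mul ht0.le]
      congr 1
      rw [neg_mul]
      congr 1
      rw [div_mul_div_comm, mul_one, mul_comm (1+r) 2]
    rw [hsplit, hrp] at hs1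
    refine le_trans hs1 ?_
    apply mul_le_mul_of_nonneg_right _ hpnn
    apply mul_le_mul_of_nonneg_right _ (Real.rpow_nonneg ht0.le _)
    have h2 := Real.sqrt_nonneg CU
    linarith
end
end

section
/- Linear stability with magnetic diffusion (Theorem 1.2). Let n ≥ 2, r > n−1, and let b̃ ∈ ℝⁿ satisfy the Diophantine condition with exponent r. Let m ≥ 0 and let U₀, B₀ ∈ H^m(𝕋ⁿ) be divergence-free with ∫_{𝕋ⁿ} U₀ dx = ∫_{𝕋ⁿ} B₀ dx = 0. Let (U,B) solve the linear system ∂ₜU = b̃·∇B, ∂ₜB − ΔB = b̃·∇U, ∇·U = ∇·B = 0, (U,B)(·,0) = (U₀,B₀) on 𝕋ⁿ. Then there is a constant C > 0 such that for every s ∈ [0,m] and t ≥ 0: ‖U(t)‖_{H^s} ≤ C(1+t)^{−(m−s)/(2(1+r))} ‖(U₀,B₀)‖_{H^m} and ‖B(t)‖_{H^s} ≤ C(1+t)^{−(1/2 + (m−s+1)/(2(1+r)))} ‖(U₀,B₀)‖_{H^m}. -/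
open scoped BigOperators
open MeasureTheory

noncomputable section

namespace MHD

set_option maxHeartbeats 1000000


lemma hasDerivAt_normSq {z : ℝ → ℂ} {z' : ℂ} {t : ℝ} (h : HasDerivAt z z' t) :
    HasDerivAt (fun τ => ‖z τ‖ ^ 2) (2 * (z' * (starRingEnd ℂ) (z t)).re) t := by
  have hre : HasDerivAt (fun τ => (z τ).re) (Complex.reCLM z') t :=
    Complex.reCLM.hasFDerivAt.comp_hasDerivAt t h
  have him : HasDerivAt (fun τ => (z τ).im) (Complex.imCLM z') t :=
    Complex.imCLM.hasFDerivAt.comp_hasDerivAt t h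
  have h2 := (hre.mul hre).add (him.mul him)
  have hfun : (fun τ => (z τ).re * (z τ).re + (z τ).im * (z τ).im) = fun τ => ‖z τ‖ ^ 2 := by
    funext τ
    rw [← Complex.normSq_apply, ← Complex.sq_norm]
  change HasDerivAt (fun τ => (z τ).re * (z τ).re + (z τ).im * (z τ).im) _ t at h2
  rw [hfun] at h2
  convert h2 using 1
  simp [Complex.mul_re, Complex.conj_re, Complex.conj_im]
  ring

lemma hasDerivAt_mulConj {z w : ℝ → ℂ} {z' w' : ℂ} {t : ℝ}
    (hz : HasDerivAt z z' t) (hw : HasDerivAt w w' t) :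
    HasDerivAt (fun τ => (z τ * (starRingEnd ℂ) (w τ)).im)
      ((z' * (starRingEnd ℂ) (w t) + z t * (starRingEnd ℂ) w').im) t := by
  have hcw : HasDerivAt (fun τ => (starRingEnd ℂ) (w τ)) ((starRingEnd ℂ) w') t := by
    have := Complex.conjCLE.toContinuousLinearMap.hasFDerivAt (x := w t) |>.comp_hasDerivAt t hw
    exact this
  have := (hz.mul hcw)
  have h3 : HasDerivAt (fun τ => (z τ * (starRingEnd ℂ) (w τ)).im)
      (Complex.imCLM (z' * (starRingEnd ℂ) (w t) + z t * (starRingEnd ℂ) w')) t :=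
    Complex.imCLM.hasFDerivAt.comp_hasDerivAt t this
  simpa using h3

lemma absorb {P Q X A B α : ℝ} (hP : 0 ≤ P) (hQ : 0 ≤ Q) (hA : 0 ≤ A) (hB : 0 ≤ B)
    (hX : X ^ 2 ≤ P * Q) (hα : α ^ 2 ≤ 4 * A * B) : α * X ≤ A * P + B * Q := by
  nlinarith [sq_nonneg (A * P - B * Q), sq_nonneg (A * P + B * Q), sq_nonneg (α * X),
    mul_nonneg (mul_nonneg hA hP) (mul_nonneg hB hQ), sq_nonneg (A * P + B * Q - α * X),
    sq_nonneg (A * P + B * Q + α * X), mul_nonneg hA hP, mul_nonneg hB hQ]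

lemma keypoly {κ a β₀ P Q X : ℝ} (hκ : 1 ≤ κ) (hβ₀ : 1 ≤ β₀) (ha : a ^ 2 ≤ β₀ ^ 2 * κ)
    (hP : 0 ≤ P) (hQ : 0 ≤ Q) (hX : X ^ 2 ≤ P * Q) :
    a ^ 2 * (4 * β₀ ^ 2 * κ * (P + Q) + a * X)
      + 32 * β₀ ^ 4 * κ * (4 * β₀ ^ 2 * κ * ((2 * a * X) + (-2 * κ * Q - 2 * a * X))
        + a * (a * Q - κ * X - a * P)) ≤ 0 := by
  have hκ0 : (0:ℝ) < κ := lt_of_lt_of_le one_pos hκ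
  have hβ₀0 : (0:ℝ) < β₀ := lt_of_lt_of_le one_pos hβ₀
  have hb2 : (1:ℝ) ≤ β₀ ^ 2 := by nlinarith
  have hb24 : β₀ ^ 2 ≤ β₀ ^ 4 := by nlinarith [sq_nonneg β₀, mul_nonneg (sq_nonneg β₀) (show (0:ℝ) ≤ β₀^2 - 1 by linarith)]
  have haκ2 : a ^ 2 ≤ β₀ ^ 2 * κ ^ 2 := by nlinarith [sq_nonneg β₀]
  set A : ℝ := (32 * β₀ ^ 4 - 4 * β₀ ^ 2) * κ * a ^ 2 with hAdef
  set B : ℝ := 256 * β₀ ^ 6 * κ ^ 3 - 32 * β₀ ^ 4 * κ * a ^ 2 - 4 * β₀ ^ 2 * κ * a ^ 2 with hBdef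
  have hA : 0 ≤ A := by
    have h1 : (0:ℝ) ≤ 32 * β₀ ^ 4 - 4 * β₀ ^ 2 := by nlinarith
    exact mul_nonneg (mul_nonneg h1 hκ0.le) (sq_nonneg a)
  have e1 : 32 * β₀ ^ 4 * κ * a ^ 2 ≤ 32 * β₀ ^ 6 * κ ^ 2 := by
    nlinarith [mul_le_mul_of_nonneg_left ha (show (0:ℝ) ≤ 32 * β₀ ^ 4 * κ by positivity)]
  have e2 : 4 * β₀ ^ 2 * κ * a ^ 2 ≤ 4 * β₀ ^ 4 * κ ^ 2 := by
    nlinarith [mul_le_mul_of_nonneg_left ha (show (0:ℝ) ≤ 4 * β₀ ^ 2 * κ by positivity)]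
  have e3 : 4 * β₀ ^ 4 * κ ^ 2 ≤ 4 * β₀ ^ 6 * κ ^ 2 := by
    nlinarith [mul_nonneg (mul_nonneg (sq_nonneg (β₀ ^ 2)) (sq_nonneg κ)) (show (0:ℝ) ≤ β₀ ^ 2 - 1 by linarith)]
  have e4 : 36 * β₀ ^ 6 * κ ^ 2 ≤ 36 * β₀ ^ 6 * κ ^ 3 := by
    nlinarith [mul_nonneg (mul_nonneg (show (0:ℝ) ≤ β₀ ^ 6 by positivity) (sq_nonneg κ)) (show (0:ℝ) ≤ κ - 1 by linarith)]
  have hBlow : 220 * β₀ ^ 6 * κ ^ 3 ≤ B := by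
    rw [hBdef]; nlinarith [e1, e2, e3, e4]
  have hB : 0 ≤ B := le_trans (by positivity) hBlow
  have hAlow : 28 * β₀ ^ 4 * κ * a ^ 2 ≤ A := by
    rw [hAdef]
    nlinarith [mul_nonneg hκ0.le (sq_nonneg a), mul_nonneg (mul_nonneg hκ0.le (sq_nonneg a)) (show (0:ℝ) ≤ β₀^4 - β₀^2 by linarith)]
  have hD : a ^ 2 ≤ 32 * β₀ ^ 4 * κ ^ 2 := by nlinarith [haκ2, sq_nonneg κ]
  have hL : (a ^ 3 - 32 * β₀ ^ 4 * κ ^ 2 * a) ^ 2 ≤ a ^ 2 * (32 * β₀ ^ 4 * κ ^ 2) ^ 2 := by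
    have hrw : (a ^ 3 - 32 * β₀ ^ 4 * κ ^ 2 * a) ^ 2
        = a ^ 2 * (a ^ 2 - 32 * β₀ ^ 4 * κ ^ 2) ^ 2 := by ring
    rw [hrw]
    have h2 : (a ^ 2 - 32 * β₀ ^ 4 * κ ^ 2) ^ 2 ≤ (32 * β₀ ^ 4 * κ ^ 2) ^ 2 := by
      nlinarith [sq_nonneg a, hD]
    exact mul_le_mul_of_nonneg_left h2 (sq_nonneg a)
  have hRlow : 4 * (28 * β₀ ^ 4 * κ * a ^ 2) * (220 * β₀ ^ 6 * κ ^ 3) ≤ 4 * A * B := by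
    have h1 : (0:ℝ) ≤ 28 * β₀ ^ 4 * κ * a ^ 2 := by positivity
    have h2 : (0:ℝ) ≤ 220 * β₀ ^ 6 * κ ^ 3 := by positivity
    have := mul_le_mul hAlow hBlow h2 hA
    nlinarith [this]
  have hαsq : (a ^ 3 - 32 * β₀ ^ 4 * κ ^ 2 * a) ^ 2 ≤ 4 * A * B := by
    refine hL.trans (le_trans ?_ hRlow)
    have : a ^ 2 * (32 * β₀ ^ 4 * κ ^ 2) ^ 2 = 1024 * (β₀ ^ 4)^2 * (κ^2)^2 * a ^ 2 := by ring
    rw [this]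
    have hb48 : (β₀ ^ 4)^2 ≤ β₀ ^ 4 * β₀ ^ 6 := by nlinarith [mul_nonneg (show (0:ℝ) ≤ β₀^4 * β₀^4 by positivity) (show (0:ℝ) ≤ β₀^2 - 1 by linarith)]
    nlinarith [mul_nonneg (mul_nonneg (show (0:ℝ) ≤ (κ^2)^2 by positivity) (sq_nonneg a)) (show (0:ℝ) ≤ β₀^4*β₀^6 - (β₀^4)^2 by linarith),
      mul_nonneg (show (0:ℝ) ≤ β₀^4*β₀^6 by positivity) (mul_nonneg (mul_nonneg (sq_nonneg κ) (sq_nonneg κ)) (sq_nonneg a))]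
  have habs := absorb hP hQ hA hB hX hαsq
  have hrw2 : a ^ 2 * (4 * β₀ ^ 2 * κ * (P + Q) + a * X)
      + 32 * β₀ ^ 4 * κ * (4 * β₀ ^ 2 * κ * ((2 * a * X) + (-2 * κ * Q - 2 * a * X))
        + a * (a * Q - κ * X - a * P))
      = (a ^ 3 - 32 * β₀ ^ 4 * κ ^ 2 * a) * X - (A * P + B * Q) := by
    rw [hAdef, hBdef]; ring
  rw [hrw2]
  linarith [habs]


lemma pow_le_factorial_mul_exp (N : ℕ) {x : ℝ} (hx : 0 ≤ x) :
    x ^ N ≤ N.factorial * Real.exp x := by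
  have h := Real.sum_le_exp_of_nonneg hx (N + 1)
  have h1 : x ^ N / N.factorial ≤ Real.exp x := by
    refine le_trans ?_ h
    exact Finset.single_le_sum (f := fun i => x ^ i / (i.factorial : ℝ))
      (fun i _ => by positivity) (Finset.self_mem_range_succ N)
  have hfac : (0:ℝ) < N.factorial := by positivity
  rw [div_le_iff₀ hfac] at h1
  linarith [h1]

lemma exp_decay_poly (N : ℕ) {γ t : ℝ} (hγ0 : 0 ≤ γ) (hγ : γ ≤ N) (ht : 0 ≤ t) :
    Real.exp (-t) ≤ (N.factorial * Real.exp 1) * (1 + t) ^ (-γ) := by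
  have h1t : (0:ℝ) < 1 + t := by linarith
  have h1t1 : (1:ℝ) ≤ 1 + t := by linarith
  have hkey : (1 + t) ^ γ ≤ N.factorial * Real.exp 1 * Real.exp t := by
    calc (1 + t) ^ γ ≤ (1 + t) ^ (N:ℝ) :=
          Real.rpow_le_rpow_of_exponent_le h1t1 hγ
      _ = (1 + t) ^ N := by rw [Real.rpow_natCast]
      _ ≤ N.factorial * Real.exp (1 + t) := pow_le_factorial_mul_exp N (by linarith)
      _ = N.factorial * Real.exp 1 * Real.exp t := by rw [Real.exp_add]; ring
  rw [Real.rpow_neg h1t.le, Real.exp_neg, inv_eq_one_div, inv_eq_one_div, mul_one_div,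
    div_le_div_iff₀ (Real.exp_pos _) (Real.rpow_pos_of_pos h1t _), one_mul]
  exact hkey

lemma supS (N : ℕ) {β d : ℝ} (hβ : 1 ≤ β) (hd : 0 < d) {κ α t : ℝ}
    (hκ : 1 ≤ κ) (hα0 : 0 ≤ α) (hαN : α / β ≤ N) (ht : 0 ≤ t) :
    (1 + κ) ^ (-α) * Real.exp (-(d * κ ^ (-β) * t)) ≤
      (2 ^ N * (1 + (N.factorial:ℝ)) * max 1 (d ^ (-(N:ℝ)))) * (1 + t) ^ (-(α / β)) := by
  have hκ0 : (0:ℝ) < κ := lt_of_lt_of_le one_pos hκ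
  have h1κ : (0:ℝ) < 1 + κ := by linarith
  have hβ0 : (0:ℝ) < β := lt_of_lt_of_le one_pos hβ
  have hγ0 : 0 ≤ α / β := div_nonneg hα0 hβ0.le
  have h1t : (0:ℝ) < 1 + t := by linarith
  have hfacpos : (0:ℝ) < 1 + (N.factorial:ℝ) := by positivity
  have hmax1 : (1:ℝ) ≤ max 1 (d ^ (-(N:ℝ))) := le_max_left _ _
  have hmax0 : (0:ℝ) ≤ max 1 (d ^ (-(N:ℝ))) := le_trans zero_le_one hmax1
  by_cases hcase : t ≤ 1
  · have hLHS : (1 + κ) ^ (-α) * Real.exp (-(d * κ ^ (-β) * t)) ≤ 1 := by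
      have l1 : (1 + κ) ^ (-α) ≤ 1 :=
        Real.rpow_le_one_of_one_le_of_nonpos (by linarith) (neg_nonpos.mpr hα0)
      have l2 : Real.exp (-(d * κ ^ (-β) * t)) ≤ 1 := by
        rw [Real.exp_le_one_iff]
        have : (0:ℝ) ≤ d * κ ^ (-β) * t :=
          mul_nonneg (mul_nonneg hd.le (Real.rpow_nonneg hκ0.le _)) ht
        linarith
      exact mul_le_one₀ l1 (Real.exp_pos _).le l2
    refine hLHS.trans ?_
    have r1 : (1 + t) ^ (α/β) ≤ 2 ^ (α/β) := Real.rpow_le_rpow h1t.le (by linarith) hγ0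
    have r2 : (2:ℝ) ^ (α/β) ≤ 2 ^ (N:ℝ) :=
      Real.rpow_le_rpow_of_exponent_le one_le_two hαN
    have r2' : (2:ℝ) ^ (N:ℝ) = 2 ^ N := Real.rpow_natCast 2 N
    have r3 : ((2:ℝ) ^ N)⁻¹ ≤ (1 + t) ^ (-(α/β)) := by
      rw [Real.rpow_neg h1t.le]
      exact inv_anti₀ (Real.rpow_pos_of_pos h1t _) (r1.trans (r2.trans_eq r2'))
    calc (1:ℝ) = 2 ^ N * ((2:ℝ) ^ N)⁻¹ := by
          rw [mul_inv_cancel₀ (by positivity)]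
      _ ≤ 2 ^ N * (1 + t) ^ (-(α/β)) := by
          exact mul_le_mul_of_nonneg_left r3 (by positivity)
      _ ≤ (2 ^ N * (1 + (N.factorial:ℝ)) * max 1 (d ^ (-(N:ℝ)))) * (1 + t) ^ (-(α/β)) := by
          have h2N : (0:ℝ) ≤ 2^N := by positivity
          have hp : (0:ℝ) ≤ (1 + t) ^ (-(α/β)) := Real.rpow_nonneg h1t.le _
          have : (2:ℝ)^N * 1 * 1 ≤ 2 ^ N * (1 + (N.factorial:ℝ)) * max 1 (d ^ (-(N:ℝ))) := by
            refine mul_le_mul (mul_le_mul le_rfl (by linarith [hfacpos]) zero_le_one h2N) hmax1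
              zero_le_one (by positivity)
          exact mul_le_mul_of_nonneg_right (by linarith [this]) hp
  · push_neg at hcase
    have ht0 : (0:ℝ) < t := lt_trans one_pos hcase
    set x := d * κ ^ (-β) * t with hxdef
    have hx0 : 0 < x := by
      have := Real.rpow_pos_of_pos hκ0 (-β)
      positivity
    have hstep1 : Real.exp (-x) ≤ (1 + (N.factorial:ℝ)) * x ^ (-(α/β)) := by
      have hxγ : x ^ (α/β) ≤ 1 + x ^ N := by
        rcases le_total x 1 with hx1 | hx1
        · have h := Real.rpow_le_one hx0.le hx1 hγ0
          have h2 : (0:ℝ) ≤ x ^ N := by positivity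
          linarith
        · have h : x ^ (α/β) ≤ x ^ (N:ℝ) := Real.rpow_le_rpow_of_exponent_le hx1 hαN
          rw [Real.rpow_natCast] at h
          linarith
      have hxN : x ^ N * Real.exp (-x) ≤ (N.factorial:ℝ) := by
        have h := pow_le_factorial_mul_exp N hx0.le
        rw [Real.exp_neg, mul_inv_le_iff₀ (Real.exp_pos _)]
        linarith [h]
      have hγe : x ^ (α/β) * Real.exp (-x) ≤ 1 + (N.factorial:ℝ) := by
        have e1 : x ^ (α/β) * Real.exp (-x) ≤ (1 + x ^ N) * Real.exp (-x) :=
          mul_le_mul_of_nonneg_right hxγ (Real.exp_pos _).le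
        have e3 : Real.exp (-x) ≤ 1 := by
          rw [Real.exp_le_one_iff]; linarith
        nlinarith [hxN]
      have hxp : 0 < x ^ (α/β) := Real.rpow_pos_of_pos hx0 _
      rw [Real.rpow_neg hx0.le, ← div_eq_mul_inv, le_div_iff₀ hxp]
      linarith [hγe, mul_comm (Real.exp (-x)) (x ^ (α/β))]
    have hxsplit : x ^ (-(α/β)) = d ^ (-(α/β)) * (κ ^ (-β)) ^ (-(α/β)) * t ^ (-(α/β)) := by
      rw [hxdef, Real.mul_rpow (mul_nonneg hd.le (Real.rpow_nonneg hκ0.le _)) ht0.le,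
        Real.mul_rpow hd.le (Real.rpow_nonneg hκ0.le _)]
    have hκpow : (κ ^ (-β)) ^ (-(α/β)) = κ ^ α := by
      rw [← Real.rpow_mul hκ0.le]
      congr 1
      field_simp
    have hd1 : d ^ (-(α/β)) ≤ max 1 (d ^ (-(N:ℝ))) := by
      rcases le_total 1 d with hd2 | hd2
      · exact le_trans (Real.rpow_le_one_of_one_le_of_nonpos hd2 (neg_nonpos.mpr hγ0))
          (le_max_left _ _)
      · exact le_trans (Real.rpow_le_rpow_of_exponent_ge hd hd2 (neg_le_neg hαN))
          (le_max_right _ _)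
    have hκα : (1 + κ) ^ (-α) * κ ^ α ≤ 1 := by
      rw [Real.rpow_neg h1κ.le, inv_mul_le_iff₀ (Real.rpow_pos_of_pos h1κ _), mul_one]
      exact Real.rpow_le_rpow hκ0.le (by linarith) hα0
    have ht2 : t ^ (-(α/β)) ≤ 2 ^ N * (1 + t) ^ (-(α/β)) := by
      have k1 : (1 + t) ^ (α/β) ≤ 2 ^ (α/β) * t ^ (α/β) := by
        rw [← Real.mul_rpow (by norm_num : (0:ℝ) ≤ 2) ht0.le]
        exact Real.rpow_le_rpow h1t.le (by linarith) hγ0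
      have k2 : (2:ℝ) ^ (α/β) ≤ 2 ^ N := by
        rw [← Real.rpow_natCast 2 N]
        exact Real.rpow_le_rpow_of_exponent_le one_le_two hαN
      have htp : 0 < t ^ (α/β) := Real.rpow_pos_of_pos ht0 _
      have h1tp : 0 < (1 + t) ^ (α/β) := Real.rpow_pos_of_pos h1t _
      have k3 : (1 + t) ^ (α/β) ≤ 2 ^ N * t ^ (α/β) :=
        k1.trans (mul_le_mul_of_nonneg_right k2 htp.le)
      rw [Real.rpow_neg ht0.le, Real.rpow_neg h1t.le]
      calc (t ^ (α/β))⁻¹ = (1 + t) ^ (α/β) * ((1 + t) ^ (α/β))⁻¹ * (t ^ (α/β))⁻¹ := by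
            rw [mul_inv_cancel₀ h1tp.ne', one_mul]
        _ ≤ (2 ^ N * t ^ (α/β)) * ((1 + t) ^ (α/β))⁻¹ * (t ^ (α/β))⁻¹ := by
            exact mul_le_mul_of_nonneg_right (mul_le_mul_of_nonneg_right k3 (by positivity))
              (by positivity)
        _ = 2 ^ N * ((1 + t) ^ (α/β))⁻¹ * (t ^ (α/β) * (t ^ (α/β))⁻¹) := by ring
        _ = 2 ^ N * ((1 + t) ^ (α/β))⁻¹ := by rw [mul_inv_cancel₀ htp.ne', mul_one]
    calc (1 + κ) ^ (-α) * Real.exp (-x)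
        ≤ (1 + κ) ^ (-α) * ((1 + (N.factorial:ℝ)) * x ^ (-(α/β))) :=
          mul_le_mul_of_nonneg_left hstep1 (Real.rpow_nonneg h1κ.le _)
      _ = (1 + (N.factorial:ℝ)) * ((1 + κ) ^ (-α) * κ ^ α) * (d ^ (-(α/β)) * t ^ (-(α/β))) := by
          rw [hxsplit, hκpow]; ring
      _ ≤ (1 + (N.factorial:ℝ)) * 1 * (max 1 (d ^ (-(N:ℝ))) * (2 ^ N * (1 + t) ^ (-(α/β)))) := by
          have n1 : (0:ℝ) ≤ d ^ (-(α/β)) := Real.rpow_nonneg hd.le _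
          have n2 : (0:ℝ) ≤ t ^ (-(α/β)) := Real.rpow_nonneg ht0.le _
          have n3 : (0:ℝ) ≤ (1 + t) ^ (-(α/β)) := Real.rpow_nonneg h1t.le _
          have m1 : d ^ (-(α/β)) * t ^ (-(α/β))
              ≤ max 1 (d ^ (-(N:ℝ))) * (2 ^ N * (1 + t) ^ (-(α/β))) :=
            mul_le_mul hd1 ht2 n2 hmax0
          have m2 : (1 + (N.factorial:ℝ)) * ((1 + κ) ^ (-α) * κ ^ α)
              ≤ (1 + (N.factorial:ℝ)) * 1 := mul_le_mul_of_nonneg_left hκα hfacpos.le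
          exact mul_le_mul m2 m1 (mul_nonneg n1 n2)
            (by positivity)
      _ = (2 ^ N * (1 + (N.factorial:ℝ)) * max 1 (d ^ (-(N:ℝ)))) * (1 + t) ^ (-(α/β)) := by
          ring

lemma exp_neg_le_inv {z : ℝ} (hz : 0 < z) : Real.exp (-z) ≤ z⁻¹ := by
  rw [Real.exp_neg]
  exact inv_anti₀ hz (by linarith [Real.add_one_le_exp z])


lemma bracketB (N : ℕ) {β β₀ d₄ κ aa lam m s t : ℝ}
    (hβ : 1 ≤ β) (hβ₀ : 1 ≤ β₀) (hd₄ : 0 < d₄) (hκ : 1 ≤ κ)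
    (hs0 : 0 ≤ s) (hsm : s ≤ m) (hmN : m + 2 ≤ N) (ht : 0 ≤ t)
    (hlam : d₄ * κ ^ (-β) ≤ lam) (hlam2 : 0 < lam)
    (haa : aa ≤ β₀ ^ 2 * κ) (haalam : aa = lam * (32 * β₀ ^ 4 * κ)) (haa0 : 0 ≤ aa) :
    (1 + κ) ^ (-(m - s)) * Real.exp (-(κ * t))
      + 8 * (aa / κ ^ 2) * ((1 + κ) ^ (-(m - s)) * Real.exp (-(lam * t)))
    ≤ (N.factorial * Real.exp 1 + 8 * β₀ ^ 2 * 2 ^ N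
        + 2048 * β₀ ^ 4 * (2 ^ N * (1 + (N.factorial:ℝ)) * max 1 ((d₄/2) ^ (-(N:ℝ)))))
        * (1 + t) ^ (-(1 + (m - s + 1) / β)) := by
  have hκ0 : (0:ℝ) < κ := lt_of_lt_of_le one_pos hκ
  have h1κ : (0:ℝ) < 1 + κ := by linarith
  have hβ0 : (0:ℝ) < β := lt_of_lt_of_le one_pos hβ
  have h1t : (0:ℝ) < 1 + t := by linarith
  have hms : 0 ≤ m - s := by linarith
  set g2 : ℝ := 1 + (m - s + 1) / β with hg2def
  have hg20 : 0 ≤ g2 := by positivity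
  have hg2N : g2 ≤ N := by
    have h1 : (m - s + 1) / β ≤ m - s + 1 := div_le_self (by linarith) hβ
    have : (m:ℝ) + 2 ≤ N := hmN
    simp only [hg2def]
    linarith
  set K₂ : ℝ := 2 ^ N * (1 + (N.factorial:ℝ)) * max 1 ((d₄/2) ^ (-(N:ℝ))) with hK2def
  have hK₂0 : 0 ≤ K₂ := by
    have := le_max_left (1:ℝ) ((d₄/2) ^ (-(N:ℝ)))
    positivity
  have hgp : (0:ℝ) ≤ (1 + t) ^ (-g2) := Real.rpow_nonneg h1t.le _
  have hpow1 : (1 + κ) ^ (-(m - s)) ≤ 1 :=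
    Real.rpow_le_one_of_one_le_of_nonpos (by linarith) (neg_nonpos.mpr hms)
  have hpow0 : (0:ℝ) ≤ (1 + κ) ^ (-(m - s)) := Real.rpow_nonneg h1κ.le _
  -- Term 1
  have hT1 : (1 + κ) ^ (-(m - s)) * Real.exp (-(κ * t))
      ≤ (N.factorial * Real.exp 1) * (1 + t) ^ (-g2) := by
    have e1 : Real.exp (-(κ * t)) ≤ Real.exp (-t) := by
      apply Real.exp_le_exp.mpr
      nlinarith
    calc (1 + κ) ^ (-(m - s)) * Real.exp (-(κ * t)) ≤ 1 * Real.exp (-t) :=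
          mul_le_mul hpow1 e1 (Real.exp_pos _).le zero_le_one
      _ = Real.exp (-t) := one_mul _
      _ ≤ (N.factorial * Real.exp 1) * (1 + t) ^ (-g2) := exp_decay_poly N hg20 hg2N ht
  -- Term 2
  have hT2 : 8 * (aa / κ ^ 2) * ((1 + κ) ^ (-(m - s)) * Real.exp (-(lam * t)))
      ≤ (8 * β₀ ^ 2 * 2 ^ N + 2048 * β₀ ^ 4 * K₂) * (1 + t) ^ (-g2) := by
    by_cases hcase : t ≤ 1
    · -- small time
      have s1 : aa / κ ^ 2 ≤ β₀ ^ 2 := by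
        rw [div_le_iff₀ (by positivity)]
        nlinarith
      have s2 : (1 + κ) ^ (-(m - s)) * Real.exp (-(lam * t)) ≤ 1 := by
        have e2 : Real.exp (-(lam * t)) ≤ 1 := by
          rw [Real.exp_le_one_iff]
          have : 0 ≤ lam * t := mul_nonneg hlam2.le ht
          linarith
        exact mul_le_one₀ hpow1 (Real.exp_pos _).le e2
      have s3 : 8 * (aa / κ ^ 2) * ((1 + κ) ^ (-(m - s)) * Real.exp (-(lam * t)))
          ≤ 8 * β₀ ^ 2 := by
        have q : (0:ℝ) ≤ (1 + κ) ^ (-(m - s)) * Real.exp (-(lam * t)) :=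
          mul_nonneg hpow0 (Real.exp_pos _).le
        calc 8 * (aa / κ ^ 2) * ((1 + κ) ^ (-(m - s)) * Real.exp (-(lam * t)))
            ≤ 8 * β₀ ^ 2 * 1 := by
              apply mul_le_mul (by nlinarith [s1]) s2 q (by positivity)
          _ = 8 * β₀ ^ 2 := mul_one _
      have s4 : (1:ℝ) ≤ 2 ^ N * (1 + t) ^ (-g2) := by
        have r1 : (1 + t) ^ g2 ≤ 2 ^ g2 := Real.rpow_le_rpow h1t.le (by linarith) hg20
        have r2 : (2:ℝ) ^ g2 ≤ 2 ^ (N:ℝ) := Real.rpow_le_rpow_of_exponent_le one_le_two hg2N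
        have r2' : (2:ℝ) ^ (N:ℝ) = 2 ^ N := Real.rpow_natCast 2 N
        have r3 : ((2:ℝ) ^ N)⁻¹ ≤ (1 + t) ^ (-g2) := by
          rw [Real.rpow_neg h1t.le]
          exact inv_anti₀ (Real.rpow_pos_of_pos h1t _) (r1.trans (r2.trans_eq r2'))
        calc (1:ℝ) = 2 ^ N * ((2:ℝ) ^ N)⁻¹ := by rw [mul_inv_cancel₀ (by positivity)]
          _ ≤ 2 ^ N * (1 + t) ^ (-g2) := mul_le_mul_of_nonneg_left r3 (by positivity)
      calc 8 * (aa / κ ^ 2) * ((1 + κ) ^ (-(m - s)) * Real.exp (-(lam * t)))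
          ≤ 8 * β₀ ^ 2 := s3
        _ = 8 * β₀ ^ 2 * 1 := (mul_one _).symm
        _ ≤ 8 * β₀ ^ 2 * (2 ^ N * (1 + t) ^ (-g2)) :=
            mul_le_mul_of_nonneg_left s4 (by positivity)
        _ = 8 * β₀ ^ 2 * 2 ^ N * (1 + t) ^ (-g2) := by ring
        _ ≤ (8 * β₀ ^ 2 * 2 ^ N + 2048 * β₀ ^ 4 * K₂) * (1 + t) ^ (-g2) := by
            have : (0:ℝ) ≤ 2048 * β₀ ^ 4 * K₂ := by positivity
            nlinarith [hgp, mul_nonneg this hgp]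
    · -- large time
      push_neg at hcase
      have ht0 : (0:ℝ) < t := lt_trans one_pos hcase
      have hz : 0 < lam * t / 2 := by positivity
      have hsplitexp : Real.exp (-(lam * t))
          ≤ (2 / (lam * t)) * Real.exp (-(lam * t / 2)) := by
        have e1 : Real.exp (-(lam * t)) = Real.exp (-(lam * t / 2)) * Real.exp (-(lam * t / 2)) := by
          rw [← Real.exp_add]; congr 1; ring
        have e2 : Real.exp (-(lam * t / 2)) ≤ (lam * t / 2)⁻¹ := exp_neg_le_inv hz
        have e3 : (lam * t / 2)⁻¹ = 2 / (lam * t) := by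
          rw [inv_div]
        rw [e1]
        apply mul_le_mul_of_nonneg_right (e2.trans_eq e3) (Real.exp_pos _).le
      have key1 : 8 * (aa / κ ^ 2) * (2 / (lam * t)) = 512 * β₀ ^ 4 / (κ * t) := by
        rw [haalam]
        field_simp
        ring
      have hexp2 : Real.exp (-(lam * t / 2)) ≤ Real.exp (-((d₄/2) * κ ^ (-β) * t)) := by
        apply Real.exp_le_exp.mpr
        have : (d₄/2) * κ ^ (-β) * t ≤ lam * t / 2 := by
          have := mul_le_mul_of_nonneg_right hlam ht0.le
          nlinarith [this]
        linarith
      have hsupS := supS N hβ (by positivity : (0:ℝ) < d₄/2) hκ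
        (show (0:ℝ) ≤ m - s + 1 by linarith)
        (show (m - s + 1)/β ≤ N by
          have h1 : (m - s + 1) / β ≤ m - s + 1 := div_le_self (by linarith) hβ
          linarith) ht
      -- 1/κ ≤ 2/(1+κ), 1/t ≤ 2/(1+t)
      have hinvκ : (1:ℝ)/κ ≤ 2 / (1 + κ) := by
        rw [div_le_div_iff₀ hκ0 h1κ]; linarith
      have hinvt : (1:ℝ)/t ≤ 2 / (1 + t) := by
        rw [div_le_div_iff₀ ht0 h1t]; linarith
      have hpowsum : (1 + κ) ^ (-(m - s)) * (1 + κ)⁻¹ = (1 + κ) ^ (-(m - s + 1)) := by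
        rw [← Real.rpow_neg_one (1 + κ), ← Real.rpow_add h1κ]  -- may need adjustment
        congr 1; ring
      have hpowsumt : (1 + t) ^ (-((m - s + 1)/β)) * (1 + t)⁻¹ = (1 + t) ^ (-g2) := by
        rw [← Real.rpow_neg_one (1 + t), ← Real.rpow_add h1t]
        congr 1; simp only [hg2def]; ring
      -- assemble
      have hEnn : (0:ℝ) ≤ Real.exp (-((d₄/2) * κ ^ (-β) * t)) := (Real.exp_pos _).le
      calc 8 * (aa / κ ^ 2) * ((1 + κ) ^ (-(m - s)) * Real.exp (-(lam * t)))
          ≤ 8 * (aa / κ ^ 2) * ((1 + κ) ^ (-(m - s))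
              * ((2 / (lam * t)) * Real.exp (-(lam * t / 2)))) := by
            apply mul_le_mul_of_nonneg_left
              (mul_le_mul_of_nonneg_left hsplitexp hpow0) (by positivity)
        _ = (512 * β₀ ^ 4 / (κ * t)) * ((1 + κ) ^ (-(m - s)) * Real.exp (-(lam * t / 2))) := by
            rw [← key1]; ring
        _ ≤ (512 * β₀ ^ 4 / (κ * t)) * ((1 + κ) ^ (-(m - s))
              * Real.exp (-((d₄/2) * κ ^ (-β) * t))) := by
            apply mul_le_mul_of_nonneg_left
              (mul_le_mul_of_nonneg_left hexp2 hpow0) (by positivity)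
        _ = 512 * β₀ ^ 4 * ((1/κ) * (1/t)) * ((1 + κ) ^ (-(m - s))
              * Real.exp (-((d₄/2) * κ ^ (-β) * t))) := by
            field_simp
        _ ≤ 512 * β₀ ^ 4 * ((2/(1+κ)) * (2/(1+t))) * ((1 + κ) ^ (-(m - s))
              * Real.exp (-((d₄/2) * κ ^ (-β) * t))) := by
            apply mul_le_mul_of_nonneg_right
            · apply mul_le_mul_of_nonneg_left
              · apply mul_le_mul hinvκ hinvt (by positivity) (by positivity)
              · positivity
            · exact mul_nonneg hpow0 hEnn
        _ = 2048 * β₀ ^ 4 * (((1 + κ) ^ (-(m - s)) * (1+κ)⁻¹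
              * Real.exp (-((d₄/2) * κ ^ (-β) * t))) * (1+t)⁻¹) := by
            field_simp
            ring
        _ = 2048 * β₀ ^ 4 * (((1 + κ) ^ (-(m - s + 1))
              * Real.exp (-((d₄/2) * κ ^ (-β) * t))) * (1+t)⁻¹) := by
            rw [hpowsum]
        _ ≤ 2048 * β₀ ^ 4 * ((K₂ * (1 + t) ^ (-((m - s + 1)/β))) * (1+t)⁻¹) := by
            apply mul_le_mul_of_nonneg_left
              (mul_le_mul_of_nonneg_right hsupS (by positivity)) (by positivity)
        _ = 2048 * β₀ ^ 4 * K₂ * ((1 + t) ^ (-((m - s + 1)/β)) * (1+t)⁻¹) := by ring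
        _ = 2048 * β₀ ^ 4 * K₂ * (1 + t) ^ (-g2) := by rw [hpowsumt]
        _ ≤ (8 * β₀ ^ 2 * 2 ^ N + 2048 * β₀ ^ 4 * K₂) * (1 + t) ^ (-g2) := by
            have : (0:ℝ) ≤ 8 * β₀ ^ 2 * 2 ^ N := by positivity
            nlinarith [hgp, mul_nonneg this hgp]
  calc (1 + κ) ^ (-(m - s)) * Real.exp (-(κ * t))
      + 8 * (aa / κ ^ 2) * ((1 + κ) ^ (-(m - s)) * Real.exp (-(lam * t)))
      ≤ (N.factorial * Real.exp 1) * (1 + t) ^ (-g2)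
        + (8 * β₀ ^ 2 * 2 ^ N + 2048 * β₀ ^ 4 * K₂) * (1 + t) ^ (-g2) :=
        add_le_add hT1 hT2
    _ = (N.factorial * Real.exp 1 + 8 * β₀ ^ 2 * 2 ^ N + 2048 * β₀ ^ 4 * K₂)
        * (1 + t) ^ (-g2) := by ring


lemma mode_decay {n : ℕ} {κ a β₀ : ℝ} (hκ : 1 ≤ κ) (hβ₀ : 1 ≤ β₀) (ha : a ^ 2 ≤ β₀ ^ 2 * κ)
    (u b : ℝ → Fin n → ℂ)
    (hu : ∀ (t : ℝ) (i : Fin n), HasDerivAt (fun τ => u τ i) (Complex.I * (a : ℂ) * b t i) t)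
    (hb : ∀ (t : ℝ) (i : Fin n), HasDerivAt (fun τ => b τ i)
        (-(κ : ℂ) * b t i + Complex.I * (a : ℂ) * u t i) t) :
    (∀ t : ℝ, 0 ≤ t → vnormSq (u t) + vnormSq (b t) ≤
        2 * (vnormSq (u 0) + vnormSq (b 0)) * Real.exp (-(a ^ 2 / (32 * β₀ ^ 4 * κ)) * t)) ∧
    (∀ t : ℝ, 0 ≤ t → vnormSq (b t) ≤
        (vnormSq (u 0) + vnormSq (b 0)) *
          (Real.exp (-κ * t) +
            8 * (a ^ 2 / κ ^ 2) * Real.exp (-(a ^ 2 / (32 * β₀ ^ 4 * κ)) * t))) := by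
  have hκ0 : (0:ℝ) < κ := lt_of_lt_of_le one_pos hκ
  have hβ₀0 : (0:ℝ) < β₀ := lt_of_lt_of_le one_pos hβ₀
  set P : ℝ → ℝ := fun t => vnormSq (u t) with hPdef
  set Q : ℝ → ℝ := fun t => vnormSq (b t) with hQdef
  set X : ℝ → ℝ := fun t => ∑ i, (u t i * (starRingEnd ℂ) (b t i)).im with hXdef
  have hP0 : ∀ t, 0 ≤ P t := fun t => Finset.sum_nonneg fun i _ => sq_nonneg _
  have hQ0 : ∀ t, 0 ≤ Q t := fun t => Finset.sum_nonneg fun i _ => sq_nonneg _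
  have hXsq : ∀ t, X t ^ 2 ≤ P t * Q t := by
    intro t
    have h1 : |X t| ≤ ∑ i, ‖u t i‖ * ‖b t i‖ := by
      refine (Finset.abs_sum_le_sum_abs _ _).trans (Finset.sum_le_sum fun i _ => ?_)
      calc |(u t i * (starRingEnd ℂ) (b t i)).im|
          ≤ ‖u t i * (starRingEnd ℂ) (b t i)‖ := Complex.abs_im_le_norm _
        _ = ‖u t i‖ * ‖b t i‖ := by
            rw [norm_mul, Complex.norm_conj]
    have h2 : (∑ i, ‖u t i‖ * ‖b t i‖) ^ 2 ≤ P t * Q t := by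
      have h := Finset.sum_mul_sq_le_sq_mul_sq Finset.univ (fun i => ‖u t i‖) (fun i => ‖b t i‖)
      simpa [hPdef, hQdef, vnormSq] using h
    calc X t ^ 2 = |X t| ^ 2 := (sq_abs _).symm
      _ ≤ (∑ i, ‖u t i‖ * ‖b t i‖) ^ 2 := pow_le_pow_left₀ (abs_nonneg _) h1 2
      _ ≤ P t * Q t := h2
  have hP' : ∀ t, HasDerivAt P (2 * a * X t) t := by
    intro t
    have h := HasDerivAt.sum (fun i (_ : i ∈ Finset.univ) => hasDerivAt_normSq (hu t i))
    have heq : (2 : ℝ) * a * X t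
        = ∑ i : Fin n, 2 * ((Complex.I * (a:ℂ) * b t i) * (starRingEnd ℂ) (u t i)).re := by
      simp only [hXdef, Finset.mul_sum]
      refine Finset.sum_congr rfl fun i _ => ?_
      simp [Complex.mul_re, Complex.mul_im]
      ring
    rw [heq]
    rw [Finset.sum_fn] at h; exact h
  have hQ' : ∀ t, HasDerivAt Q (-2 * κ * Q t - 2 * a * X t) t := by
    intro t
    have h := HasDerivAt.sum (fun i (_ : i ∈ Finset.univ) => hasDerivAt_normSq (hb t i))
    have heq : -2 * κ * Q t - 2 * a * X t
        = ∑ i : Fin n, 2 * ((-(κ:ℂ) * b t i + Complex.I * (a:ℂ) * u t i)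
            * (starRingEnd ℂ) (b t i)).re := by
      have hsplit : -2 * κ * Q t - 2 * a * X t
          = ∑ i : Fin n, (-2 * κ * ‖b t i‖ ^ 2
              - 2 * a * (u t i * (starRingEnd ℂ) (b t i)).im) := by
        simp only [hQdef, hXdef, vnormSq, Finset.mul_sum, Finset.sum_sub_distrib]
      rw [hsplit]
      refine Finset.sum_congr rfl fun i _ => ?_
      simp [Complex.mul_re, Complex.mul_im, Complex.add_re, Complex.sq_norm,
        Complex.normSq_apply]
      ring
    rw [heq]
    rw [Finset.sum_fn] at h; exact h
  have hX' : ∀ t, HasDerivAt X (a * Q t - κ * X t - a * P t) t := by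
    intro t
    have h := HasDerivAt.sum (fun i (_ : i ∈ Finset.univ) => hasDerivAt_mulConj (hu t i) (hb t i))
    have heq : a * Q t - κ * X t - a * P t
        = ∑ i : Fin n, ((Complex.I * (a:ℂ) * b t i) * (starRingEnd ℂ) (b t i)
            + u t i * (starRingEnd ℂ) (-(κ:ℂ) * b t i + Complex.I * (a:ℂ) * u t i)).im := by
      have hsplit : a * Q t - κ * X t - a * P t
          = ∑ i : Fin n, (a * ‖b t i‖ ^ 2 - κ * (u t i * (starRingEnd ℂ) (b t i)).im
              - a * ‖u t i‖ ^ 2) := by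
        simp only [hQdef, hXdef, hPdef, vnormSq, Finset.mul_sum, Finset.sum_sub_distrib]
      rw [hsplit]
      refine Finset.sum_congr rfl fun i _ => ?_
      simp [Complex.mul_re, Complex.mul_im, Complex.add_im, Complex.sq_norm,
        Complex.normSq_apply, map_add, map_mul]
      ring
    rw [heq]
    rw [Finset.sum_fn] at h; exact h
  set F : ℝ → ℝ := fun t => 4 * β₀ ^ 2 * κ * (P t + Q t) + a * X t with hFdef
  set lam : ℝ := a ^ 2 / (32 * β₀ ^ 4 * κ) with hlamdef
  have h32 : (0:ℝ) < 32 * β₀ ^ 4 * κ := by positivity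
  have hlam0 : 0 ≤ lam := by positivity
  have haκ2 : a ^ 2 ≤ β₀ ^ 2 * κ ^ 2 := by nlinarith [sq_nonneg β₀]
  have hF' : ∀ t, HasDerivAt F
      (4 * β₀ ^ 2 * κ * ((2 * a * X t) + (-2 * κ * Q t - 2 * a * X t))
        + a * (a * Q t - κ * X t - a * P t)) t := by
    intro t
    exact (((hP' t).add (hQ' t)).const_mul _).add ((hX' t).const_mul a)
  have hkey : ∀ t, lam * F t
      + (4 * β₀ ^ 2 * κ * ((2 * a * X t) + (-2 * κ * Q t - 2 * a * X t))
        + a * (a * Q t - κ * X t - a * P t)) ≤ 0 := by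
    intro t
    have hG := keypoly hκ hβ₀ ha (hP0 t) (hQ0 t) (hXsq t)
    have heq : lam * F t
        + (4 * β₀ ^ 2 * κ * ((2 * a * X t) + (-2 * κ * Q t - 2 * a * X t))
          + a * (a * Q t - κ * X t - a * P t))
        = (a ^ 2 * (4 * β₀ ^ 2 * κ * (P t + Q t) + a * X t)
            + 32 * β₀ ^ 4 * κ * (4 * β₀ ^ 2 * κ * ((2 * a * X t) + (-2 * κ * Q t - 2 * a * X t))
              + a * (a * Q t - κ * X t - a * P t))) / (32 * β₀ ^ 4 * κ) := by
      rw [hlamdef, hFdef]; field_simp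
    rw [heq]
    exact div_nonpos_of_nonpos_of_nonneg hG h32.le
  have hg : ∀ t, HasDerivAt (fun τ => Real.exp (lam * τ) * F τ)
      (Real.exp (lam * t) * (lam * F t
        + (4 * β₀ ^ 2 * κ * ((2 * a * X t) + (-2 * κ * Q t - 2 * a * X t))
          + a * (a * Q t - κ * X t - a * P t)))) t := by
    intro t
    have h1 : HasDerivAt (fun τ => Real.exp (lam * τ)) (Real.exp (lam * t) * lam) t := by
      simpa using ((hasDerivAt_id t).const_mul lam).exp
    have h2 := h1.mul (hF' t)
    change HasDerivAt (fun τ => Real.exp (lam * τ) * F τ) _ t at h2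
    convert h2 using 1
    ring
  have hanti : AntitoneOn (fun τ => Real.exp (lam * τ) * F τ) (Set.Ici (0:ℝ)) := by
    refine antitoneOn_of_deriv_nonpos (convex_Ici 0)
      ((Differentiable.continuous fun x => (hg x).differentiableAt).continuousOn)
      (fun x _ => (hg x).differentiableAt.differentiableWithinAt) (fun x _ => ?_)
    rw [(hg x).deriv]
    exact mul_nonpos_iff.mpr (Or.inl ⟨(Real.exp_pos _).le, hkey x⟩)
  have hFbound : ∀ t : ℝ, 0 ≤ t → F t ≤ Real.exp (-(lam * t)) * F 0 := by
    intro t ht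
    have h0 : Real.exp (lam * t) * F t ≤ F 0 := by
      simpa using hanti Set.self_mem_Ici (Set.mem_Ici.mpr ht) ht
    have h1 := mul_le_mul_of_nonneg_left h0 (Real.exp_pos (-(lam * t))).le
    calc F t = Real.exp (-(lam * t)) * (Real.exp (lam * t) * F t) := by
          rw [← mul_assoc, ← Real.exp_add]; simp
      _ ≤ Real.exp (-(lam * t)) * F 0 := h1
  have hFlow : ∀ t, 3 * (β₀ ^ 2 * κ) * (P t + Q t) ≤ F t := by
    intro t
    have habs := absorb (hP0 t) (hQ0 t) (show (0:ℝ) ≤ β₀ ^ 2 * κ by positivity)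
      (show (0:ℝ) ≤ β₀ ^ 2 * κ by positivity) (hXsq t)
      (show (-a) ^ 2 ≤ 4 * (β₀ ^ 2 * κ) * (β₀ ^ 2 * κ) by nlinarith [haκ2, sq_nonneg (β₀ * κ), sq_nonneg (β₀^2*κ - β₀*κ), sq_nonneg (β₀^2*κ)])
    simp only [hFdef]
    nlinarith [habs]
  have hFup : ∀ t, F t ≤ 5 * (β₀ ^ 2 * κ) * (P t + Q t) := by
    intro t
    have habs := absorb (hP0 t) (hQ0 t) (show (0:ℝ) ≤ β₀ ^ 2 * κ by positivity)
      (show (0:ℝ) ≤ β₀ ^ 2 * κ by positivity) (hXsq t)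
      (show a ^ 2 ≤ 4 * (β₀ ^ 2 * κ) * (β₀ ^ 2 * κ) by nlinarith [haκ2, sq_nonneg (β₀^2*κ - β₀*κ), sq_nonneg (β₀*κ)])
    simp only [hFdef]
    nlinarith [habs]
  have hE00 : 0 ≤ P 0 + Q 0 := add_nonneg (hP0 0) (hQ0 0)
  have hbk : (0:ℝ) < β₀ ^ 2 * κ := by positivity
  have claimA : ∀ t : ℝ, 0 ≤ t → P t + Q t ≤ 2 * (P 0 + Q 0) * Real.exp (-lam * t) := by
    intro t ht
    have h2 := hFbound t ht
    have hexp : (0:ℝ) < Real.exp (-(lam * t)) := Real.exp_pos _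
    have h4 : 3 * (β₀ ^ 2 * κ) * (P t + Q t)
        ≤ 5 * (β₀ ^ 2 * κ) * ((P 0 + Q 0) * Real.exp (-(lam * t))) := by
      have h5 : Real.exp (-(lam * t)) * F 0
          ≤ Real.exp (-(lam * t)) * (5 * (β₀ ^ 2 * κ) * (P 0 + Q 0)) :=
        mul_le_mul_of_nonneg_left (hFup 0) hexp.le
      calc 3 * (β₀ ^ 2 * κ) * (P t + Q t) ≤ F t := hFlow t
        _ ≤ Real.exp (-(lam * t)) * F 0 := h2
        _ ≤ Real.exp (-(lam * t)) * (5 * (β₀ ^ 2 * κ) * (P 0 + Q 0)) := h5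
        _ = 5 * (β₀ ^ 2 * κ) * ((P 0 + Q 0) * Real.exp (-(lam * t))) := by ring
    have h6 : 3 * (P t + Q t) ≤ 5 * ((P 0 + Q 0) * Real.exp (-(lam * t))) := by
      have := (mul_le_mul_iff_of_pos_left hbk).mpr (le_refl (P t + Q t))
      nlinarith [h4, hbk, mul_pos hbk hexp]
    have h7 : P t + Q t ≤ 2 * ((P 0 + Q 0) * Real.exp (-(lam * t))) := by
      nlinarith [h6, mul_nonneg hE00 hexp.le]
    calc P t + Q t ≤ 2 * ((P 0 + Q 0) * Real.exp (-(lam * t))) := h7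
      _ = 2 * (P 0 + Q 0) * Real.exp (-lam * t) := by rw [neg_mul]; ring
  constructor
  · exact claimA
  -- claim B
  intro t ht
  set E0 : ℝ := P 0 + Q 0 with hE0def
  have hlamκ : lam ≤ κ / 2 := by
    rw [hlamdef, div_le_div_iff₀ h32 two_pos]
    nlinarith [haκ2, mul_nonneg (mul_nonneg (sq_nonneg β₀)
        (show (0:ℝ) ≤ β₀ ^ 2 - 1 by nlinarith)) (sq_nonneg κ),
      mul_nonneg (mul_nonneg (sq_nonneg (β₀^2)) (sq_nonneg κ)) (le_of_lt hκ0)]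
  -- differential inequality for Q alone
  have hQkey : ∀ τ : ℝ, 0 ≤ τ → κ * Q τ + (-2 * κ * Q τ - 2 * a * X τ) ≤ (a ^ 2 / κ) * (2 * E0 * Real.exp (-lam * τ)) := by
    intro τ hτ
    have habs := absorb (hP0 τ) (hQ0 τ) (show (0:ℝ) ≤ a ^ 2 / κ by positivity)
      (show (0:ℝ) ≤ κ by exact hκ0.le) (hXsq τ)
      (show (-2*a) ^ 2 ≤ 4 * (a ^ 2 / κ) * κ by rw [mul_assoc, div_mul_cancel₀ _ (ne_of_gt hκ0)]; nlinarith [sq_nonneg a])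
    have hPA : P τ ≤ 2 * E0 * Real.exp (-lam * τ) := by
      have := claimA τ hτ
      nlinarith [hQ0 τ]
    have h1 : (a^2/κ) * P τ ≤ (a^2/κ) * (2 * E0 * Real.exp (-lam * τ)) :=
      mul_le_mul_of_nonneg_left hPA (by positivity)
    linarith [habs, h1]
  -- the comparison function
  set W : ℝ → ℝ := fun τ => Real.exp (κ * τ) * Q τ
      - 8 * E0 * (a ^ 2 / κ ^ 2) * Real.exp ((κ - lam) * τ) with hWdef
  have hW' : ∀ τ, HasDerivAt W
      (Real.exp (κ * τ) * (κ * Q τ + (-2 * κ * Q τ - 2 * a * X τ))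
        - 8 * E0 * (a ^ 2 / κ ^ 2) * (Real.exp ((κ - lam) * τ) * (κ - lam))) τ := by
    intro τ
    have h1 : HasDerivAt (fun σ => Real.exp (κ * σ)) (Real.exp (κ * τ) * κ) τ := by
      simpa using ((hasDerivAt_id τ).const_mul κ).exp
    have h2 : HasDerivAt (fun σ => Real.exp ((κ - lam) * σ))
        (Real.exp ((κ - lam) * τ) * (κ - lam)) τ := by
      simpa using ((hasDerivAt_id τ).const_mul (κ - lam)).exp
    have h3 := (h1.mul (hQ' τ)).sub (h2.const_mul (8 * E0 * (a ^ 2 / κ ^ 2)))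
    change HasDerivAt (fun σ => Real.exp (κ * σ) * Q σ - 8 * E0 * (a ^ 2 / κ ^ 2) * Real.exp ((κ - lam) * σ)) _ τ at h3
    convert h3 using 1
    ring
  have hWanti : AntitoneOn W (Set.Ici (0:ℝ)) := by
    refine antitoneOn_of_deriv_nonpos (convex_Ici 0)
      ((Differentiable.continuous fun x => (hW' x).differentiableAt).continuousOn)
      (fun x hx => (hW' x).differentiableAt.differentiableWithinAt) (fun x hx => ?_)
    rw [interior_Ici] at hx
    have hx0 : (0:ℝ) ≤ x := le_of_lt hx
    rw [(hW' x).deriv]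
    have h1 : Real.exp (κ * x) * (κ * Q x + (-2 * κ * Q x - 2 * a * X x))
        ≤ Real.exp (κ * x) * ((a ^ 2 / κ) * (2 * E0 * Real.exp (-lam * x))) :=
      mul_le_mul_of_nonneg_left (hQkey x hx0) (Real.exp_pos _).le
    have h2 : Real.exp (κ * x) * ((a ^ 2 / κ) * (2 * E0 * Real.exp (-lam * x)))
        = 2 * E0 * (a ^ 2 / κ) * Real.exp ((κ - lam) * x) := by
      have eexp : Real.exp (κ * x) * Real.exp (-lam * x) = Real.exp ((κ - lam) * x) := by
        rw [← Real.exp_add]; congr 1; ring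
      linear_combination (2 * E0 * (a ^ 2 / κ)) * eexp
    have h3 : 2 * E0 * (a ^ 2 / κ) * Real.exp ((κ - lam) * x)
        ≤ 8 * E0 * (a ^ 2 / κ ^ 2) * (Real.exp ((κ - lam) * x) * (κ - lam)) := by
      have hkl : κ / 2 ≤ κ - lam := by linarith
      have hfac : 2 * (a ^ 2 / κ) ≤ 8 * (a ^ 2 / κ ^ 2) * (κ - lam) := by
        have e1 : 8 * (a ^ 2 / κ ^ 2) * (κ / 2) ≤ 8 * (a ^ 2 / κ ^ 2) * (κ - lam) :=
          mul_le_mul_of_nonneg_left hkl (by positivity)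
        have e2 : 8 * (a ^ 2 / κ ^ 2) * (κ / 2) = 4 * (a ^ 2 / κ) := by
          field_simp; ring
        nlinarith [e1, e2, div_nonneg (sq_nonneg a) hκ0.le]
      have hE0exp : (0:ℝ) ≤ E0 * Real.exp ((κ - lam) * x) :=
        mul_nonneg hE00 (Real.exp_pos _).le
      nlinarith [mul_le_mul_of_nonneg_left hfac hE0exp]
    linarith [h1.trans_eq h2, h3]
  have hW0 : W t ≤ W 0 := hWanti Set.self_mem_Ici (Set.mem_Ici.mpr ht) ht
  have hW0val : W 0 ≤ E0 := by
    simp only [hWdef, mul_zero, Real.exp_zero, one_mul]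
    have : (0:ℝ) ≤ 8 * E0 * (a ^ 2 / κ ^ 2) := by positivity
    simp only [hE0def]
    nlinarith [hP0 0, this]
  -- unfold W t ≤ E0
  have hfinal : Real.exp (κ * t) * Q t ≤ E0 + 8 * E0 * (a ^ 2 / κ ^ 2) * Real.exp ((κ - lam) * t) := by
    have := hW0.trans hW0val
    simp only [hWdef] at this
    linarith
  have hexpκ : (0:ℝ) < Real.exp (κ * t) := Real.exp_pos _
  have hQt : Q t ≤ E0 * Real.exp (-κ * t) + 8 * E0 * (a ^ 2 / κ ^ 2) * Real.exp (-lam * t) := by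
    have h1 := mul_le_mul_of_nonneg_left hfinal (Real.exp_pos (-(κ * t))).le
    have e1 : Real.exp (-(κ * t)) * (Real.exp (κ * t) * Q t) = Q t := by
      rw [← mul_assoc, ← Real.exp_add]; simp
    have e2 : Real.exp (-(κ * t)) * (E0 + 8 * E0 * (a ^ 2 / κ ^ 2) * Real.exp ((κ - lam) * t))
        = E0 * Real.exp (-κ * t) + 8 * E0 * (a ^ 2 / κ ^ 2) * Real.exp (-lam * t) := by
      have eexp : Real.exp (-(κ * t)) * Real.exp ((κ - lam) * t) = Real.exp (-lam * t) := by
        rw [← Real.exp_add]; congr 1; ring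
      have eexp2 : Real.exp (-(κ * t)) = Real.exp (-κ * t) := by rw [neg_mul]
      rw [mul_add]
      congr 1
      · rw [eexp2]; ring
      · linear_combination (8 * E0 * (a ^ 2 / κ ^ 2)) * eexp
    rw [e1, e2] at h1
    exact h1
  calc Q t ≤ E0 * Real.exp (-κ * t) + 8 * E0 * (a ^ 2 / κ ^ 2) * Real.exp (-lam * t) := hQt
    _ = E0 * (Real.exp (-κ * t) + 8 * (a ^ 2 / κ ^ 2) * Real.exp (-lam * t)) := by ring
    _ = (P 0 + Q 0) * (Real.exp (-κ * t) + 8 * (a ^ 2 / κ ^ 2) * Real.exp (-(a ^ 2 / (32 * β₀ ^ 4 * κ)) * t)) := by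
        rw [hE0def, hlamdef]


lemma one_le_k2 {n : ℕ} {k : Freq n} (hk : k ≠ 0) : 1 ≤ k2 k := by
  obtain ⟨i, hi⟩ := Function.ne_iff.mp hk
  have h1 : (1:ℝ) ≤ ((k i : ℝ)) ^ 2 := by
    have h2 : (1:ℤ) ≤ (k i) ^ 2 := by
      rcases lt_or_gt_of_ne (show k i ≠ 0 from hi) with h | h <;> nlinarith
    exact_mod_cast (by exact_mod_cast h2 : (1:ℝ) ≤ ((k i ^ 2 : ℤ) : ℝ))
  calc (1:ℝ) ≤ ((k i : ℝ)) ^ 2 := h1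
    _ ≤ ∑ j, ((k j : ℝ)) ^ 2 :=
        Finset.single_le_sum (f := fun j => ((k j : ℝ))^2) (fun j _ => sq_nonneg _)
          (Finset.mem_univ i)

lemma bdot_sq_le {n : ℕ} (btil : Fin n → ℝ) (k : Freq n) :
    (bdot btil k) ^ 2 ≤ (1 + vnormR btil) ^ 2 * k2 k := by
  have hcs := Finset.sum_mul_sq_le_sq_mul_sq Finset.univ (fun i => btil i) (fun i => ((k i : ℝ)))
  have hv : (vnormR btil) ^ 2 = ∑ i, (btil i) ^ 2 := by
    rw [vnormR, Real.sq_sqrt (Finset.sum_nonneg fun i _ => sq_nonneg _)]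
  have hv0 : 0 ≤ vnormR btil := Real.sqrt_nonneg _
  have hk0 : 0 ≤ k2 k := Finset.sum_nonneg fun i _ => sq_nonneg _
  calc (bdot btil k) ^ 2 ≤ (∑ i, (btil i) ^ 2) * (∑ i, ((k i:ℝ)) ^ 2) := hcs
    _ = (vnormR btil) ^ 2 * k2 k := by rw [hv]; rfl
    _ ≤ (1 + vnormR btil) ^ 2 * k2 k := by nlinarith

lemma const_of_deriv_zero {f : ℝ → ℂ} (h : ∀ t, HasDerivAt f 0 t) : ∀ t, f t = f 0 := by
  intro t
  exact is_const_of_deriv_eq_zero (fun x => (h x).differentiableAt)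
    (fun x => (h x).deriv) t 0


end MHD

set_option maxHeartbeats 1000000 in
open MHD in
/-- **Linear stability II** (magnetic diffusion, `μ = 0`, `ν = 1`): decay of solutions of the
linearized system `∂ₜU = b̃·∇B`, `∂ₜB − ΔB = b̃·∇U`, `∇·U = ∇·B = 0` on `𝕋ⁿ`. -/
theorem linear_stability_magnetic_diffusion
    (n : ℕ) (hn : 2 ≤ n) (r c : ℝ) (hr : (n : ℝ) - 1 < r) (hc : 0 < c)
    (btil : Fin n → ℝ) (hdio : Diophantine btil r c)
    (m : ℝ) (hm : 0 ≤ m)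
    (U₀ B₀ : Coef n) (hU₀ : MemSob m U₀) (hB₀ : MemSob m B₀)
    (hdivU₀ : DivFree U₀) (hdivB₀ : DivFree B₀)
    (hmeanU₀ : U₀ 0 = 0) (hmeanB₀ : B₀ 0 = 0)
    (U B : ℝ → Coef n)
    (hU : ∀ (t : ℝ) (k : Freq n) (i : Fin n),
      HasDerivAt (fun τ : ℝ => U τ k i)
        (Complex.I * (bdot btil k : ℂ) * B t k i) t)
    (hB : ∀ (t : ℝ) (k : Freq n) (i : Fin n),
      HasDerivAt (fun τ : ℝ => B τ k i)
        (-(k2 k : ℂ) * B t k i + Complex.I * (bdot btil k : ℂ) * U t k i) t)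
    (hdivU : ∀ t : ℝ, DivFree (U t)) (hdivB : ∀ t : ℝ, DivFree (B t))
    (hIU : U 0 = U₀) (hIB : B 0 = B₀) :
    ∃ C > 0, ∀ s : ℝ, 0 ≤ s → s ≤ m → ∀ t : ℝ, 0 ≤ t →
      sobNorm s (U t) ≤
        C * (1 + t) ^ (-((m - s) / (2 * (1 + r)))) * pairNorm m U₀ B₀ ∧
      sobNorm s (B t) ≤
        C * (1 + t) ^ (-(1 / 2 + (m - s + 1) / (2 * (1 + r)))) * pairNorm m U₀ B₀ := by
  classical
  have hr1 : (1:ℝ) ≤ r := by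
    have h2 : (2:ℝ) ≤ (n:ℝ) := by exact_mod_cast hn
    linarith
  have hβe1 : (1:ℝ) ≤ 1 + r := by linarith
  have hβe0 : (0:ℝ) < 1 + r := by linarith
  set β₀ : ℝ := 1 + vnormR btil with hβ₀def
  have hβ₀1 : (1:ℝ) ≤ β₀ := by
    have := Real.sqrt_nonneg (∑ i, (btil i)^2)
    simp only [hβ₀def, vnormR]; linarith
  set N : ℕ := ⌈m⌉₊ + 3 with hNdef
  have hmN : m + 2 ≤ N := by
    have h1 := Nat.le_ceil m
    have h2 : ((⌈m⌉₊ + 3 : ℕ) : ℝ) = (⌈m⌉₊ : ℝ) + 3 := by push_cast; ring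
    rw [hNdef, h2]
    linarith
  set d₄ : ℝ := c ^ 2 / (32 * β₀ ^ 4) with hd4def
  have hd₄ : 0 < d₄ := by positivity
  set K₁ : ℝ := 2 ^ N * (1 + (N.factorial:ℝ)) * max 1 (d₄ ^ (-(N:ℝ))) with hK1def
  have hK₁0 : 0 ≤ K₁ := by
    have := le_max_left (1:ℝ) (d₄ ^ (-(N:ℝ)))
    positivity
  set CB : ℝ := (N.factorial:ℝ) * Real.exp 1 + 8 * β₀ ^ 2 * 2 ^ N
      + 2048 * β₀ ^ 4 * (2 ^ N * (1 + (N.factorial:ℝ)) * max 1 ((d₄/2) ^ (-(N:ℝ)))) with hCBdef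
  have hCB0 : 0 ≤ CB := by
    have h1 := le_max_left (1:ℝ) ((d₄/2) ^ (-(N:ℝ)))
    have h2 : (0:ℝ) ≤ 2 ^ N * (1 + (N.factorial:ℝ)) * max 1 ((d₄/2) ^ (-(N:ℝ))) := by positivity
    positivity
  refine ⟨Real.sqrt (2 * K₁) + Real.sqrt CB + 1, by positivity, ?_⟩
  intro s hs0 hsm t ht
  set C : ℝ := Real.sqrt (2 * K₁) + Real.sqrt CB + 1 with hCdef
  have hC1 : Real.sqrt (2 * K₁) ≤ C := by
    have := Real.sqrt_nonneg CB; simp only [hCdef]; linarith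
  have hC2 : Real.sqrt CB ≤ C := by
    have := Real.sqrt_nonneg (2 * K₁); simp only [hCdef]; linarith
  -- zero modes
  have hbdot0 : bdot btil (0 : Freq n) = 0 := by simp [bdot]
  have hk20 : k2 (0 : Freq n) = 0 := by simp [k2]
  have hU0t : ∀ τ, U τ 0 = 0 := by
    intro τ
    funext i
    have hconst := const_of_deriv_zero (f := fun σ => U σ 0 i) (fun σ => by
      have h := hU σ 0 i
      rw [hbdot0] at h
      simpa using h) τ
    rw [hconst, hIU, hmeanU₀]
  have hB0t : ∀ τ, B τ 0 = 0 := by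
    intro τ
    funext i
    have hconst := const_of_deriv_zero (f := fun σ => B σ 0 i) (fun σ => by
      have h := hB σ 0 i
      rw [hbdot0, hk20] at h
      simpa using h) τ
    rw [hconst, hIB, hmeanB₀]
  -- mode estimates
  have hmode : ∀ k : Freq n, k ≠ 0 →
      (vnormSq (U t k) + vnormSq (B t k) ≤
        2 * (vnormSq (U₀ k) + vnormSq (B₀ k))
          * Real.exp (-((bdot btil k) ^ 2 / (32 * β₀ ^ 4 * k2 k)) * t)) ∧
      (vnormSq (B t k) ≤
        (vnormSq (U₀ k) + vnormSq (B₀ k)) *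
          (Real.exp (-(k2 k) * t) + 8 * ((bdot btil k) ^ 2 / (k2 k) ^ 2)
            * Real.exp (-((bdot btil k) ^ 2 / (32 * β₀ ^ 4 * k2 k)) * t))) := by
    intro k hk
    have h := mode_decay (one_le_k2 hk) hβ₀1 (bdot_sq_le btil k)
      (fun τ => U τ k) (fun τ => B τ k) (fun τ i => hU τ k i) (fun τ i => hB τ k i)
    rw [← hIU, ← hIB]
    exact ⟨h.1 t ht, h.2 t ht⟩
  -- Diophantine lower bound for lam
  have hlamlow : ∀ k : Freq n, k ≠ 0 →
      d₄ * (k2 k) ^ (-(1+r)) ≤ (bdot btil k) ^ 2 / (32 * β₀ ^ 4 * k2 k) := by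
    intro k hk
    have hκ1 : 1 ≤ k2 k := one_le_k2 hk
    have hκ0 : (0:ℝ) < k2 k := lt_of_lt_of_le one_pos hκ1
    have hkr : (knorm k) ^ r = (k2 k) ^ (r/2) := by
      rw [knorm, Real.sqrt_eq_rpow, ← Real.rpow_mul hκ0.le]
      congr 1; ring
    have hknpos : (0:ℝ) < (knorm k) ^ r := by
      rw [hkr]; exact Real.rpow_pos_of_pos hκ0 _
    have h1 : c ≤ |bdot btil k| * (knorm k) ^ r := by
      have := hdio k hk
      rw [div_le_iff₀ hknpos] at this
      exact this
    have h2 : c ^ 2 ≤ (bdot btil k) ^ 2 * (k2 k) ^ r := by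
      have hsq := mul_self_le_mul_self hc.le h1
      have e1 : ((knorm k) ^ r) ^ 2 = (k2 k) ^ r := by
        rw [hkr, ← Real.rpow_natCast ((k2 k) ^ (r/2)) 2, ← Real.rpow_mul hκ0.le]
        congr 1; push_cast; ring
      calc c ^ 2 = c * c := sq c
        _ ≤ (|bdot btil k| * (knorm k) ^ r) * (|bdot btil k| * (knorm k) ^ r) := hsq
        _ = (bdot btil k) ^ 2 * ((knorm k) ^ r) ^ 2 := by
            rw [← sq_abs (bdot btil k)]; ring
        _ = (bdot btil k) ^ 2 * (k2 k) ^ r := by rw [e1]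
    have h3 : c ^ 2 * (k2 k) ^ (-r) ≤ (bdot btil k) ^ 2 := by
      have hp : (0:ℝ) < (k2 k) ^ r := Real.rpow_pos_of_pos hκ0 _
      rw [Real.rpow_neg hκ0.le, ← div_eq_mul_inv, div_le_iff₀ hp]
      exact h2
    have e2 : d₄ * (k2 k) ^ (-(1+r)) = (c ^ 2 * (k2 k) ^ (-r)) / (32 * β₀ ^ 4 * k2 k) := by
      rw [hd4def, show -(1+r) = (-r) + (-1) by ring, Real.rpow_add hκ0,
        Real.rpow_neg_one]
      field_simp
    rw [e2]
    apply div_le_div_of_nonneg_right h3 (by positivity)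
  have hlampos : ∀ k : Freq n, k ≠ 0 →
      0 < (bdot btil k) ^ 2 / (32 * β₀ ^ 4 * k2 k) := by
    intro k hk
    have hκ0 : (0:ℝ) < k2 k := lt_of_lt_of_le one_pos (one_le_k2 hk)
    have h2 : 0 < d₄ * (k2 k) ^ (-(1+r)) := by
      have := Real.rpow_pos_of_pos hκ0 (-(1+r))
      positivity
    linarith [hlamlow k hk]
  have hsum : Summable (fun k : Freq n =>
      (1 + k2 k) ^ m * (vnormSq (U₀ k) + vnormSq (B₀ k))) := by
    have h := hU₀.add hB₀
    simpa [mul_add] using h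
  have htot : ∑' k : Freq n, (1 + k2 k) ^ m * (vnormSq (U₀ k) + vnormSq (B₀ k))
      = pairSobSq m U₀ B₀ := by
    simp only [mul_add]
    rw [Summable.tsum_add hU₀ hB₀]
    rfl
  have hvnn : ∀ (f : Coef n) (k : Freq n), 0 ≤ vnormSq (f k) := fun f k =>
    Finset.sum_nonneg fun i _ => sq_nonneg _
  have hE0nn : ∀ k : Freq n, 0 ≤ vnormSq (U₀ k) + vnormSq (B₀ k) := fun k =>
    add_nonneg (hvnn U₀ k) (hvnn B₀ k)
  have h1κnn : ∀ k : Freq n, (0:ℝ) < 1 + k2 k := by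
    intro k
    have : 0 ≤ k2 k := Finset.sum_nonneg fun i _ => sq_nonneg _
    linarith
  have hsplit : ∀ k : Freq n,
      (1 + k2 k) ^ s = (1 + k2 k) ^ (-(m - s)) * (1 + k2 k) ^ m := by
    intro k
    rw [← Real.rpow_add (h1κnn k)]
    congr 1; ring
  have h1t : (0:ℝ) < 1 + t := by linarith
  have hαN1 : (m - s)/(1+r) ≤ (N:ℝ) := by
    have h1 : (m - s)/(1+r) ≤ m - s := div_le_self (by linarith) hβe1
    linarith [hmN]
  -- pointwise U bound
  have hptU : ∀ k : Freq n, (1 + k2 k) ^ s * vnormSq (U t k)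
      ≤ (2 * K₁ * (1 + t) ^ (-((m - s)/(1+r))))
        * ((1 + k2 k) ^ m * (vnormSq (U₀ k) + vnormSq (B₀ k))) := by
    intro k
    by_cases hk : k = 0
    · subst hk
      rw [hU0t t]
      have hz : vnormSq (fun _ : Fin n => (0:ℂ)) = 0 := by simp [vnormSq]
      have hrhs : (0:ℝ) ≤ (2 * K₁ * (1 + t) ^ (-((m - s)/(1+r))))
          * ((1 + k2 (0 : Freq n)) ^ m * (vnormSq (U₀ 0) + vnormSq (B₀ 0))) := by
        have := Real.rpow_nonneg h1t.le (-((m - s)/(1+r)))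
        have := Real.rpow_nonneg (h1κnn (0 : Freq n)).le m
        have := hE0nn (0 : Freq n)
        positivity
      calc (1 + k2 (0:Freq n)) ^ s * vnormSq (0 : Fin n → ℂ) = 0 := by
            simp [vnormSq]
        _ ≤ _ := hrhs
    · have hκ1 := one_le_k2 hk
      have hκ0 : (0:ℝ) < k2 k := lt_of_lt_of_le one_pos hκ1
      have hclaimA := (hmode k hk).1
      have hexp : Real.exp (-((bdot btil k) ^ 2 / (32 * β₀ ^ 4 * k2 k)) * t)
          ≤ Real.exp (-(d₄ * (k2 k) ^ (-(1+r)) * t)) := by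
        apply Real.exp_le_exp.mpr
        have h := mul_le_mul_of_nonneg_right (hlamlow k hk) ht
        nlinarith [h]
      have hsupS := supS N hβe1 hd₄ hκ1 (show 0 ≤ m - s by linarith) hαN1 ht
      rw [← hK1def] at hsupS
      have hponn : (0:ℝ) ≤ (1 + k2 k) ^ (-(m-s)) := Real.rpow_nonneg (h1κnn k).le _
      have hmE0nn : (0:ℝ) ≤ (1 + k2 k) ^ m * (vnormSq (U₀ k) + vnormSq (B₀ k)) :=
        mul_nonneg (Real.rpow_nonneg (h1κnn k).le _) (hE0nn k)
      calc (1 + k2 k) ^ s * vnormSq (U t k)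
          ≤ (1 + k2 k) ^ s * (2 * (vnormSq (U₀ k) + vnormSq (B₀ k))
              * Real.exp (-((bdot btil k) ^ 2 / (32 * β₀ ^ 4 * k2 k)) * t)) := by
            apply mul_le_mul_of_nonneg_left _ (Real.rpow_nonneg (h1κnn k).le _)
            calc vnormSq (U t k) ≤ vnormSq (U t k) + vnormSq (B t k) := by
                  linarith [hvnn (B t) k]
              _ ≤ _ := hclaimA
        _ = 2 * ((1 + k2 k) ^ (-(m-s))
              * Real.exp (-((bdot btil k) ^ 2 / (32 * β₀ ^ 4 * k2 k)) * t))
              * ((1 + k2 k) ^ m * (vnormSq (U₀ k) + vnormSq (B₀ k))) := by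
            rw [hsplit k]; ring
        _ ≤ 2 * ((1 + k2 k) ^ (-(m-s)) * Real.exp (-(d₄ * (k2 k) ^ (-(1+r)) * t)))
              * ((1 + k2 k) ^ m * (vnormSq (U₀ k) + vnormSq (B₀ k))) := by
            apply mul_le_mul_of_nonneg_right _ hmE0nn
            exact mul_le_mul_of_nonneg_left
              (mul_le_mul_of_nonneg_left hexp hponn) (by norm_num)
        _ ≤ 2 * (K₁ * (1+t) ^ (-((m-s)/(1+r))))
              * ((1 + k2 k) ^ m * (vnormSq (U₀ k) + vnormSq (B₀ k))) := by
            apply mul_le_mul_of_nonneg_right _ hmE0nn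
            exact mul_le_mul_of_nonneg_left hsupS (by norm_num)
        _ = (2 * K₁ * (1 + t) ^ (-((m - s)/(1+r))))
              * ((1 + k2 k) ^ m * (vnormSq (U₀ k) + vnormSq (B₀ k))) := by ring
  -- sum U
  have hUsum : sobSq s (U t)
      ≤ (2 * K₁ * (1 + t) ^ (-((m - s)/(1+r)))) * pairSobSq m U₀ B₀ := by
    have hRHS : Summable (fun k : Freq n => (2 * K₁ * (1 + t) ^ (-((m - s)/(1+r))))
        * ((1 + k2 k) ^ m * (vnormSq (U₀ k) + vnormSq (B₀ k)))) := hsum.mul_left _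
    have hLHS : Summable (fun k : Freq n => (1 + k2 k) ^ s * vnormSq (U t k)) :=
      Summable.of_nonneg_of_le
        (fun k => mul_nonneg (Real.rpow_nonneg (h1κnn k).le _) (hvnn (U t) k)) hptU hRHS
    calc sobSq s (U t) = ∑' k : Freq n, (1 + k2 k) ^ s * vnormSq (U t k) := rfl
      _ ≤ ∑' k : Freq n, (2 * K₁ * (1 + t) ^ (-((m - s)/(1+r))))
            * ((1 + k2 k) ^ m * (vnormSq (U₀ k) + vnormSq (B₀ k))) :=
          Summable.tsum_le_tsum hptU hLHS hRHS
      _ = (2 * K₁ * (1 + t) ^ (-((m - s)/(1+r)))) * pairSobSq m U₀ B₀ := by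
          rw [tsum_mul_left, htot]
  -- pointwise B bound
  have hptB : ∀ k : Freq n, (1 + k2 k) ^ s * vnormSq (B t k)
      ≤ (CB * (1 + t) ^ (-(1 + (m - s + 1)/(1+r))))
        * ((1 + k2 k) ^ m * (vnormSq (U₀ k) + vnormSq (B₀ k))) := by
    intro k
    by_cases hk : k = 0
    · subst hk
      rw [hB0t t]
      have hrhs : (0:ℝ) ≤ (CB * (1 + t) ^ (-(1 + (m - s + 1)/(1+r))))
          * ((1 + k2 (0 : Freq n)) ^ m * (vnormSq (U₀ 0) + vnormSq (B₀ 0))) := by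
        have := Real.rpow_nonneg h1t.le (-(1 + (m - s + 1)/(1+r)))
        have := Real.rpow_nonneg (h1κnn (0 : Freq n)).le m
        have := hE0nn (0 : Freq n)
        positivity
      calc (1 + k2 (0:Freq n)) ^ s * vnormSq (0 : Fin n → ℂ) = 0 := by
            simp [vnormSq]
        _ ≤ _ := hrhs
    · have hκ1 := one_le_k2 hk
      have hκ0 : (0:ℝ) < k2 k := lt_of_lt_of_le one_pos hκ1
      have hclaimB := (hmode k hk).2
      have hbr := bracketB N hβe1 hβ₀1 hd₄ hκ1 hs0 hsm hmN ht (hlamlow k hk)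
        (hlampos k hk) (bdot_sq_le btil k)
        (by rw [div_mul_cancel₀ _ (show (32 * β₀ ^ 4 * k2 k) ≠ 0 by positivity)])
        (sq_nonneg _)
      rw [← hCBdef] at hbr
      have hmE0nn : (0:ℝ) ≤ (1 + k2 k) ^ m * (vnormSq (U₀ k) + vnormSq (B₀ k)) :=
        mul_nonneg (Real.rpow_nonneg (h1κnn k).le _) (hE0nn k)
      have hneg1 : Real.exp (-(k2 k) * t) = Real.exp (-(k2 k * t)) := by rw [neg_mul]
      have hneg2 : Real.exp (-((bdot btil k) ^ 2 / (32 * β₀ ^ 4 * k2 k)) * t)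
          = Real.exp (-((bdot btil k) ^ 2 / (32 * β₀ ^ 4 * k2 k) * t)) := by rw [neg_mul]
      rw [hneg1, hneg2] at hclaimB
      calc (1 + k2 k) ^ s * vnormSq (B t k)
          ≤ (1 + k2 k) ^ s * ((vnormSq (U₀ k) + vnormSq (B₀ k)) *
              (Real.exp (-(k2 k * t)) + 8 * ((bdot btil k) ^ 2 / (k2 k) ^ 2)
                * Real.exp (-((bdot btil k) ^ 2 / (32 * β₀ ^ 4 * k2 k) * t)))) :=
            mul_le_mul_of_nonneg_left hclaimB (Real.rpow_nonneg (h1κnn k).le _)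
        _ = ((1 + k2 k) ^ (-(m-s)) * Real.exp (-(k2 k * t))
              + 8 * ((bdot btil k) ^ 2 / (k2 k) ^ 2)
                * ((1 + k2 k) ^ (-(m-s))
                  * Real.exp (-((bdot btil k) ^ 2 / (32 * β₀ ^ 4 * k2 k) * t))))
              * ((1 + k2 k) ^ m * (vnormSq (U₀ k) + vnormSq (B₀ k))) := by
            rw [hsplit k]; ring
        _ ≤ (CB * (1 + t) ^ (-(1 + (m - s + 1)/(1+r))))
              * ((1 + k2 k) ^ m * (vnormSq (U₀ k) + vnormSq (B₀ k))) :=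
            mul_le_mul_of_nonneg_right hbr hmE0nn
  have hBsum : sobSq s (B t)
      ≤ (CB * (1 + t) ^ (-(1 + (m - s + 1)/(1+r)))) * pairSobSq m U₀ B₀ := by
    have hRHS : Summable (fun k : Freq n => (CB * (1 + t) ^ (-(1 + (m - s + 1)/(1+r))))
        * ((1 + k2 k) ^ m * (vnormSq (U₀ k) + vnormSq (B₀ k)))) := hsum.mul_left _
    have hLHS : Summable (fun k : Freq n => (1 + k2 k) ^ s * vnormSq (B t k)) :=
      Summable.of_nonneg_of_le
        (fun k => mul_nonneg (Real.rpow_nonneg (h1κnn k).le _) (hvnn (B t) k)) hptB hRHS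
    calc sobSq s (B t) = ∑' k : Freq n, (1 + k2 k) ^ s * vnormSq (B t k) := rfl
      _ ≤ ∑' k : Freq n, (CB * (1 + t) ^ (-(1 + (m - s + 1)/(1+r))))
            * ((1 + k2 k) ^ m * (vnormSq (U₀ k) + vnormSq (B₀ k))) :=
          Summable.tsum_le_tsum hptB hLHS hRHS
      _ = (CB * (1 + t) ^ (-(1 + (m - s + 1)/(1+r)))) * pairSobSq m U₀ B₀ := by
          rw [tsum_mul_left, htot]
  -- conclusion
  constructor
  · -- U part
    have hx : (0:ℝ) ≤ (1+t) ^ (-((m-s)/(2*(1+r)))) := Real.rpow_nonneg h1t.le _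
    have hsq : ((1+t) ^ (-((m-s)/(2*(1+r)))))^2 = (1+t) ^ (-((m-s)/(1+r))) := by
      rw [← Real.rpow_natCast ((1+t) ^ (-((m-s)/(2*(1+r))))) 2, ← Real.rpow_mul h1t.le]
      congr 1
      push_cast
      field_simp
    have h2 : sobSq s (U t)
        ≤ (2*K₁) * (((1+t) ^ (-((m-s)/(2*(1+r)))))^2 * pairSobSq m U₀ B₀) := by
      rw [hsq]
      calc sobSq s (U t) ≤ (2*K₁*(1+t)^(-((m-s)/(1+r)))) * pairSobSq m U₀ B₀ := hUsum
        _ = (2*K₁) * ((1+t)^(-((m-s)/(1+r))) * pairSobSq m U₀ B₀) := by ring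
    calc sobNorm s (U t) = Real.sqrt (sobSq s (U t)) := rfl
      _ ≤ Real.sqrt ((2*K₁) * (((1+t) ^ (-((m-s)/(2*(1+r)))))^2 * pairSobSq m U₀ B₀)) :=
          Real.sqrt_le_sqrt h2
      _ = Real.sqrt (2*K₁) * ((1+t) ^ (-((m-s)/(2*(1+r)))) * Real.sqrt (pairSobSq m U₀ B₀)) := by
          rw [Real.sqrt_mul (by positivity), Real.sqrt_mul (sq_nonneg _), Real.sqrt_sq hx]
      _ ≤ C * ((1+t) ^ (-((m-s)/(2*(1+r)))) * pairNorm m U₀ B₀) :=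
          mul_le_mul_of_nonneg_right hC1 (mul_nonneg hx (Real.sqrt_nonneg _))
      _ = C * (1+t) ^ (-((m-s)/(2*(1+r)))) * pairNorm m U₀ B₀ := by ring
  · -- B part
    have hx : (0:ℝ) ≤ (1+t) ^ (-(1/2 + (m-s+1)/(2*(1+r)))) := Real.rpow_nonneg h1t.le _
    have hsq : ((1+t) ^ (-(1/2 + (m-s+1)/(2*(1+r)))))^2 = (1+t) ^ (-(1 + (m-s+1)/(1+r))) := by
      rw [← Real.rpow_natCast ((1+t) ^ (-(1/2 + (m-s+1)/(2*(1+r))))) 2, ← Real.rpow_mul h1t.le]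
      congr 1
      push_cast
      field_simp
    have h2 : sobSq s (B t)
        ≤ CB * (((1+t) ^ (-(1/2 + (m-s+1)/(2*(1+r)))))^2 * pairSobSq m U₀ B₀) := by
      rw [hsq]
      calc sobSq s (B t) ≤ (CB*(1+t)^(-(1 + (m-s+1)/(1+r)))) * pairSobSq m U₀ B₀ := hBsum
        _ = CB * ((1+t)^(-(1 + (m-s+1)/(1+r))) * pairSobSq m U₀ B₀) := by ring
    calc sobNorm s (B t) = Real.sqrt (sobSq s (B t)) := rfl
      _ ≤ Real.sqrt (CB * (((1+t) ^ (-(1/2 + (m-s+1)/(2*(1+r)))))^2 * pairSobSq m U₀ B₀)) :=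
          Real.sqrt_le_sqrt h2
      _ = Real.sqrt CB * ((1+t) ^ (-(1/2 + (m-s+1)/(2*(1+r)))) * Real.sqrt (pairSobSq m U₀ B₀)) := by
          rw [Real.sqrt_mul hCB0, Real.sqrt_mul (sq_nonneg _), Real.sqrt_sq hx]
      _ ≤ C * ((1+t) ^ (-(1/2 + (m-s+1)/(2*(1+r)))) * pairNorm m U₀ B₀) :=
          mul_le_mul_of_nonneg_right hC2 (mul_nonneg hx (Real.sqrt_nonneg _))
      _ = C * (1+t) ^ (-(1/2 + (m-s+1)/(2*(1+r)))) * pairNorm m U₀ B₀ := by ring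
end
end

section
/- Kernel bounds on low and medium frequencies (Proposition 3.3, part 1). Let b̃ ∈ ℝⁿ be a fixed nonzero constant vector and define λ±, Ĝ, K̂₁, K̂₂ as usual. Set S₁ = {k ∈ ℤⁿ\{0} : |k|⁴ − 4(b̃·k)² ≤ 0} and S₂ = {k ∈ ℤⁿ\{0} : 0 < |k|⁴ − 4(b̃·k)² ≤ |k|⁴/4}. Then there exists a constant C > 0 (depending only on |b̃|) such that for all k ∈ S₁ ∪ S₂ and all t ≥ 0: |K̂₁(k,t)| ≤ C e^{−|k|²t/8} and |K̂₂(k,t)| ≤ C e^{−|k|²t/8}. -/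
open scoped BigOperators
open MeasureTheory

noncomputable section

open MHD in
private lemma mvt_exp_bound (z w : ℂ) (t m : ℝ) (ht : 0 ≤ t)
    (hz : m ≤ z.re) (hw : m ≤ w.re) :
    ‖Complex.exp (-z * t) - Complex.exp (-w * t)‖ ≤ ‖z - w‖ * (t * Real.exp (-m * t)) := by
  set f : ℝ → ℂ := fun s => Complex.exp ((w + (s : ℂ) * (z - w)) * (-(t : ℂ))) with hf
  have hderiv : ∀ s : ℝ, HasDerivAt f
      (Complex.exp ((w + (s : ℂ) * (z - w)) * (-(t : ℂ))) * (1 * (z - w) * (-(t : ℂ)))) s := by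
    intro s
    have h1 : HasDerivAt (fun s : ℝ => (s : ℂ)) 1 s := by
      simpa using (hasDerivAt_id s).ofReal_comp
    exact (((h1.mul_const (z - w)).const_add w).mul_const (-(t : ℂ))).cexp
  have hbound : ∀ s ∈ Set.Icc (0 : ℝ) 1,
      ‖Complex.exp ((w + (s : ℂ) * (z - w)) * (-(t : ℂ))) * (1 * (z - w) * (-(t : ℂ)))‖
        ≤ ‖z - w‖ * (t * Real.exp (-m * t)) := by
    intro s hs
    rw [norm_mul]
    have hre : ((w + (s : ℂ) * (z - w)) * (-(t : ℂ))).re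
        = -(t * (w.re + s * (z.re - w.re))) := by
      simp only [Complex.mul_re, Complex.mul_im, Complex.add_re, Complex.add_im,
        Complex.neg_re, Complex.neg_im, Complex.ofReal_re, Complex.ofReal_im,
        Complex.sub_re, Complex.sub_im]
      ring
    have h1 : ‖Complex.exp ((w + (s : ℂ) * (z - w)) * (-(t : ℂ)))‖ ≤ Real.exp (-m * t) := by
      rw [Complex.norm_exp, hre]
      apply Real.exp_le_exp.mpr
      have hge : m ≤ w.re + s * (z.re - w.re) := by nlinarith [hs.1, hs.2]
      nlinarith
    have h2 : ‖(1 : ℂ) * (z - w) * (-(t : ℂ))‖ = ‖z - w‖ * t := by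
      rw [norm_mul, norm_mul, norm_one, one_mul, norm_neg, Complex.norm_real,
        Real.norm_eq_abs, abs_of_nonneg ht]
    rw [h2]
    calc ‖Complex.exp ((w + (s : ℂ) * (z - w)) * (-(t : ℂ)))‖ * (‖z - w‖ * t)
        ≤ Real.exp (-m * t) * (‖z - w‖ * t) := by
          apply mul_le_mul_of_nonneg_right h1; positivity
      _ = ‖z - w‖ * (t * Real.exp (-m * t)) := by ring
  have key := Convex.norm_image_sub_le_of_norm_hasDerivWithin_le
    (f := f)
    (f' := fun s : ℝ => Complex.exp ((w + (s : ℂ) * (z - w)) * (-(t : ℂ)))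
      * (1 * (z - w) * (-(t : ℂ))))
    (fun s _ => (hderiv s).hasDerivWithinAt) hbound (convex_Icc (0 : ℝ) 1)
    (Set.left_mem_Icc.mpr zero_le_one) (Set.right_mem_Icc.mpr zero_le_one)
  have hf1 : f 1 = Complex.exp (-z * t) := by
    simp only [hf]
    congr 1
    push_cast
    ring
  have hf0 : f 0 = Complex.exp (-w * t) := by
    simp only [hf]
    congr 1
    push_cast
    ring
  have h10 : ‖(1 : ℝ) - 0‖ = 1 := by norm_num
  calc ‖Complex.exp (-z * t) - Complex.exp (-w * t)‖
      = ‖f 1 - f 0‖ := by rw [hf1, hf0]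
    _ ≤ ‖z - w‖ * (t * Real.exp (-m * t)) * ‖(1 : ℝ) - 0‖ := key
    _ = ‖z - w‖ * (t * Real.exp (-m * t)) := by rw [h10, mul_one]

open MHD in
private lemma Ghat_norm_le {n : ℕ} (b : Fin n → ℝ) (k : Freq n) (t m : ℝ) (ht : 0 ≤ t)
    (hm : m ≤ (lamM b k).re) (hp : m ≤ (lamP b k).re) :
    ‖Ghat b k t‖ ≤ t * Real.exp (-m * t) := by
  rw [Ghat]
  split_ifs with h
  · rw [norm_mul, Complex.norm_real, Real.norm_eq_abs, abs_of_nonneg ht,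
      Complex.norm_exp]
    apply mul_le_mul_of_nonneg_left _ ht
    apply Real.exp_le_exp.mpr
    have hre : (-lamP b k * (t : ℂ)).re = -((lamP b k).re * t) := by
      simp [Complex.mul_re]
    rw [hre]
    nlinarith
  · have hne : lamP b k - lamM b k ≠ 0 := sub_ne_zero.mpr h
    rw [norm_div]
    rw [div_le_iff₀ (norm_pos_iff.mpr hne)]
    calc ‖Complex.exp (-lamM b k * t) - Complex.exp (-lamP b k * t)‖
        ≤ ‖lamM b k - lamP b k‖ * (t * Real.exp (-m * t)) :=
          mvt_exp_bound (lamM b k) (lamP b k) t m ht hm hp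
      _ = t * Real.exp (-m * t) * ‖lamP b k - lamM b k‖ := by
          rw [norm_sub_rev]; ring

private lemma sq_le_imp_le {x y : ℝ} (hx : 0 ≤ x) (hy : 0 ≤ y) (h : x ^ 2 ≤ y ^ 2) : x ≤ y := by
  nlinarith

private lemma self_mul_exp_le (x : ℝ) (hx : 0 ≤ x) : x * Real.exp (-x / 8) ≤ 8 := by
  have h := Real.add_one_le_exp (x / 8)
  have hpos : (0:ℝ) < Real.exp (x / 8) := Real.exp_pos _
  have hneg : Real.exp (-x / 8) = (Real.exp (x / 8))⁻¹ := by
    rw [← Real.exp_neg]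
    ring_nf
  rw [hneg, mul_inv_le_iff₀ hpos]
  nlinarith

open MHD in
/-- **Kernel bounds on low and medium frequencies** (Proposition 3.3, part 1): on
`S₁ = {|k|⁴ − 4(b̃·k)² ≤ 0}` and `S₂ = {0 < |k|⁴ − 4(b̃·k)² ≤ |k|⁴/4}` the kernels `K̂₁, K̂₂`
decay like `e^{−|k|²t/8}`. -/
theorem kernel_bounds_low_medium
    (n : ℕ) (btil : Fin n → ℝ) (hb : btil ≠ 0) :
    ∃ C > 0, ∀ k : Freq n, k ≠ 0 →
      (disc btil k ≤ 0 ∨ (0 < disc btil k ∧ disc btil k ≤ (k2 k) ^ 2 / 4)) →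
      ∀ t : ℝ, 0 ≤ t →
        K1abs btil k t ≤ C * Real.exp (-(k2 k) * t / 8) ∧
        K2abs btil k t ≤ C * Real.exp (-(k2 k) * t / 8) := by
  classical
  set B := Real.sqrt (∑ i, btil i ^ 2) with hBdef
  have hB0 : 0 ≤ B := Real.sqrt_nonneg _
  refine ⟨8 * (1 + 2 * B), by positivity, ?_⟩
  intro k hk hdisc t ht
  have ha0 : 0 ≤ k2 k := Finset.sum_nonneg fun i _ => sq_nonneg _
  have ha1 : 1 ≤ k2 k := by
    obtain ⟨i, hi⟩ := Function.ne_iff.mp hk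
    have hki : k i ≠ 0 := by simpa using hi
    have h1 : (1:ℝ) ≤ ((k i : ℝ)) ^ 2 := by
      have h2 : (1:ℤ) ≤ |k i| := Int.one_le_abs hki
      have h3 : (1:ℝ) ≤ |((k i : ℝ))| := by
        rw [← Int.cast_abs]
        exact_mod_cast h2
      nlinarith [abs_nonneg ((k i : ℝ)), sq_abs ((k i : ℝ))]
    calc (1:ℝ) ≤ ((k i : ℝ)) ^ 2 := h1
      _ ≤ k2 k := Finset.single_le_sum (fun j _ => sq_nonneg ((k j : ℝ))) (Finset.mem_univ i)
  have hβsq : (bdot btil k) ^ 2 ≤ B ^ 2 * k2 k := by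
    have hcs := Finset.sum_mul_sq_le_sq_mul_sq Finset.univ (fun i => btil i)
      (fun i => ((k i : ℝ)))
    have hBsq : B ^ 2 = ∑ i, btil i ^ 2 := by
      rw [hBdef]
      exact Real.sq_sqrt (Finset.sum_nonneg fun i _ => sq_nonneg _)
    rw [bdot, k2, hBsq]
    exact hcs
  have hβ : |bdot btil k| ≤ B * k2 k := by
    apply sq_le_imp_le (abs_nonneg _) (by positivity)
    rw [sq_abs]
    nlinarith
  have key : k2 k / 4 ≤ (lamM btil k).re ∧ k2 k / 4 ≤ (lamP btil k).re ∧
      ‖lamP btil k‖ ≤ (1 + B) * k2 k ∧ |bdot btil k| ≤ ‖lamP btil k‖ ∧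
      0 < ‖lamP btil k‖ := by
    rcases hdisc with hd | ⟨hd1, hd2⟩
    · -- low frequencies: disc ≤ 0
      have hnd : 0 ≤ -disc btil k := by linarith
      have hs : sqrtDisc btil k = Complex.I * ((Real.sqrt (-disc btil k) : ℝ) : ℂ) := by
        rw [sqrtDisc]
        split_ifs with h0
        · have hz : disc btil k = 0 := le_antisymm hd h0
          simp [hz]
        · rfl
      have hP : lamP btil k
          = ((k2 k / 2 : ℝ) : ℂ) + ((Real.sqrt (-disc btil k) / 2 : ℝ) : ℂ) * Complex.I := by
        rw [lamP, hs]
        push_cast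
        ring
      have hM : lamM btil k
          = ((k2 k / 2 : ℝ) : ℂ) + ((-(Real.sqrt (-disc btil k) / 2) : ℝ) : ℂ) * Complex.I := by
        rw [lamM, hs]
        push_cast
        ring
      have hPre : (lamP btil k).re = k2 k / 2 := by rw [hP]; simp
      have hMre : (lamM btil k).re = k2 k / 2 := by rw [hM]; simp
      have hsq : Real.sqrt (-disc btil k) ^ 2 = -disc btil k := Real.sq_sqrt hnd
      have hPn : ‖lamP btil k‖ = |bdot btil k| := by
        rw [hP, Complex.norm_add_mul_I]
        have he : (k2 k / 2) ^ 2 + (Real.sqrt (-disc btil k) / 2) ^ 2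
            = (bdot btil k) ^ 2 := by
          have hde : disc btil k = (k2 k) ^ 2 - 4 * (bdot btil k) ^ 2 := rfl
          rw [div_pow, div_pow, hsq, hde]
          ring
        rw [he, Real.sqrt_sq_eq_abs]
      have hβpos : 0 < |bdot btil k| := by
        rw [abs_pos]
        intro hz
        have hde : disc btil k = (k2 k) ^ 2 - 4 * (bdot btil k) ^ 2 := rfl
        rw [hde, hz] at hd
        nlinarith
      refine ⟨by rw [hMre]; linarith, by rw [hPre]; linarith, ?_, by rw [hPn], by rw [hPn]; exact hβpos⟩
      rw [hPn]
      nlinarith [mul_nonneg hB0 ha0]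
    · -- medium frequencies: 0 < disc ≤ |k|⁴/4
      have hd0 : 0 ≤ disc btil k := le_of_lt hd1
      have hs : sqrtDisc btil k = ((Real.sqrt (disc btil k) : ℝ) : ℂ) := by
        rw [sqrtDisc, if_pos hd0]
      have hsd0 : 0 ≤ Real.sqrt (disc btil k) := Real.sqrt_nonneg _
      have hsd : Real.sqrt (disc btil k) ≤ k2 k / 2 := by
        have h1 : disc btil k ≤ (k2 k / 2) ^ 2 := by
          rw [div_pow]
          linarith
        calc Real.sqrt (disc btil k) ≤ Real.sqrt ((k2 k / 2) ^ 2) := Real.sqrt_le_sqrt h1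
          _ = k2 k / 2 := Real.sqrt_sq (by linarith)
      have hP : lamP btil k = (((k2 k + Real.sqrt (disc btil k)) / 2 : ℝ) : ℂ) := by
        rw [lamP, hs]
        push_cast
        ring
      have hM : lamM btil k = (((k2 k - Real.sqrt (disc btil k)) / 2 : ℝ) : ℂ) := by
        rw [lamM, hs]
        push_cast
        ring
      have hPre : (lamP btil k).re = (k2 k + Real.sqrt (disc btil k)) / 2 := by
        rw [hP, Complex.ofReal_re]
      have hMre : (lamM btil k).re = (k2 k - Real.sqrt (disc btil k)) / 2 := by
        rw [hM, Complex.ofReal_re]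
      have hPn : ‖lamP btil k‖ = (k2 k + Real.sqrt (disc btil k)) / 2 := by
        rw [hP, Complex.norm_real, Real.norm_eq_abs, abs_of_nonneg (by linarith)]
      have hβhalf : |bdot btil k| ≤ k2 k / 2 := by
        apply sq_le_imp_le (abs_nonneg _) (by linarith)
        rw [sq_abs]
        have hde : disc btil k = (k2 k) ^ 2 - 4 * (bdot btil k) ^ 2 := rfl
        rw [hde] at hd1
        nlinarith
      refine ⟨by rw [hMre]; linarith, by rw [hPre]; linarith, ?_, ?_, ?_⟩
      · rw [hPn]
        nlinarith [mul_nonneg hB0 ha0]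
      · rw [hPn]
        linarith
      · rw [hPn]
        linarith
  obtain ⟨hreM, hreP, hPle, hβP, hP0⟩ := key
  have hG : ‖Ghat btil k t‖ ≤ t * Real.exp (-(k2 k / 4) * t) :=
    Ghat_norm_le btil k t (k2 k / 4) ht hreM hreP
  have hK1nn : 0 ≤ K1abs btil k t := mul_nonneg (norm_nonneg _) (Real.sqrt_nonneg _)
  have hsqrt : Real.sqrt (‖lamP btil k‖ ^ 2 + (bdot btil k) ^ 2) ≤ (1 + 2 * B) * k2 k := by
    have h1 : ‖lamP btil k‖ ^ 2 + (bdot btil k) ^ 2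
        ≤ (‖lamP btil k‖ + |bdot btil k|) ^ 2 := by
      nlinarith [norm_nonneg (lamP btil k), abs_nonneg (bdot btil k), sq_abs (bdot btil k)]
    calc Real.sqrt (‖lamP btil k‖ ^ 2 + (bdot btil k) ^ 2)
        ≤ Real.sqrt ((‖lamP btil k‖ + |bdot btil k|) ^ 2) := Real.sqrt_le_sqrt h1
      _ = ‖lamP btil k‖ + |bdot btil k| := Real.sqrt_sq (by positivity)
      _ ≤ (1 + B) * k2 k + B * k2 k := add_le_add hPle hβ
      _ = (1 + 2 * B) * k2 k := by ring
  have hK1 : K1abs btil k t ≤ (1 + 2 * B) * (k2 k * t * Real.exp (-(k2 k / 4) * t)) := by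
    rw [K1abs]
    calc ‖Ghat btil k t‖ * Real.sqrt (‖lamP btil k‖ ^ 2 + (bdot btil k) ^ 2)
        ≤ (t * Real.exp (-(k2 k / 4) * t)) * ((1 + 2 * B) * k2 k) :=
          mul_le_mul hG hsqrt (Real.sqrt_nonneg _) (by positivity)
      _ = (1 + 2 * B) * (k2 k * t * Real.exp (-(k2 k / 4) * t)) := by ring
  have hexp : k2 k * t * Real.exp (-(k2 k / 4) * t) ≤ 8 * Real.exp (-(k2 k) * t / 8) := by
    have hx : 0 ≤ k2 k * t := mul_nonneg ha0 ht
    have h8 := self_mul_exp_le (k2 k * t) hx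
    have hsplit : Real.exp (-(k2 k / 4) * t)
        = Real.exp (-(k2 k * t) / 8) * Real.exp (-(k2 k) * t / 8) := by
      rw [← Real.exp_add]
      congr 1
      ring
    rw [hsplit, ← mul_assoc]
    exact mul_le_mul_of_nonneg_right h8 (Real.exp_pos _).le
  have hfinal : K1abs btil k t ≤ 8 * (1 + 2 * B) * Real.exp (-(k2 k) * t / 8) := by
    calc K1abs btil k t ≤ (1 + 2 * B) * (k2 k * t * Real.exp (-(k2 k / 4) * t)) := hK1
      _ ≤ (1 + 2 * B) * (8 * Real.exp (-(k2 k) * t / 8)) :=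
          mul_le_mul_of_nonneg_left hexp (by positivity)
      _ = 8 * (1 + 2 * B) * Real.exp (-(k2 k) * t / 8) := by ring
  refine ⟨hfinal, le_trans ?_ hfinal⟩
  rw [K2abs, div_le_iff₀ hP0]
  exact mul_le_mul_of_nonneg_left hβP hK1nn
end
end
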